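/- arXiv:1808.08456 — 10 statements merged into one kernel-verified Lean document; each statement's English description precedes it below -/
import Mathlib

section
/- Let g ≥ 1, l ≥ 1 and h ≥ 1 be integers, let w₁, …, w_l be pairwise distinct elements of the free group F_{2g} = ⟨x₁, y₁, …, x_g, y_g⟩, and let c₁, …, c_l be nonzero integers that are either all positive or all negative. If there exist u₁, v₁, …, u_h, v_h ∈ F_{2g} with [u₁,v₁]⋯[u_h,v_h] = (B_g^{w₁})^{c₁} (B_g^{w₂})^{c₂} ⋯ (B_g^{w_l})^{c_l}, then (|c₁| + ⋯ + |c_l|)(2g − 1) ≤ 2h − 2 + l. -/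
open scoped commutatorElement

open CircleDeg1Lift

noncomputable def Tr (c : ℝ) : CircleDeg1Liftˣ := translate (Multiplicative.ofAdd c)

lemma Tr_apply (c x : ℝ) : (Tr c) x = c + x := rfl

lemma Tr_inv_apply (c x : ℝ) : (Tr c)⁻¹ x = -c + x := translate_inv_apply c x

lemma commute_Tr_int (n : ℤ) (f : CircleDeg1Lift) : Commute (↑(Tr (n : ℝ))) f := by
  ext x
  show (n : ℝ) + f x = f ((n : ℝ) + x)
  rw [f.map_int_add]

lemma tau_Tr_int_mul (n : ℤ) (f : CircleDeg1Lift) :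
    (↑(Tr (n : ℝ)) * f).translationNumber = n + f.translationNumber := by
  rw [translationNumber_mul_of_commute (commute_Tr_int n f)]
  congr 1
  exact translationNumber_translate _

lemma units_strictMono (u : CircleDeg1Liftˣ) : StrictMono u := (toOrderIso u).strictMono

lemma tau_le_of_forall_le {f g : CircleDeg1Lift} (h : ∀ x, f x ≤ g x) :
    f.translationNumber ≤ g.translationNumber :=
  translationNumber_mono h

namespace Tst

local notation "G" => CircleDeg1Liftˣ

noncomputable def tu (u : G) : ℝ := (u : CircleDeg1Lift).translationNumber

lemma tau_commutator_le_one (a b : G) : tu ⁅a, b⁆ ≤ 1 := by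
  by_contra hcon
  push_neg at hcon
  have h1 : ((1 : ℤ) : ℝ) < (↑(⁅a, b⁆ : G) : CircleDeg1Lift).translationNumber := by
    exact_mod_cast hcon
  have hpt := (↑(⁅a, b⁆ : G) : CircleDeg1Lift).lt_map_of_int_lt_translationNumber h1
  -- ∀ x, x + 1 < ⁅a,b⁆ x
  have key : ∀ y : ℝ, (↑(Tr ((1 : ℤ) : ℝ)) * (↑(b * a) : CircleDeg1Lift)) y ≤ (↑(a * b) : CircleDeg1Lift) y := by
    intro y
    have := hpt (((b * a : G) : CircleDeg1Lift) y)
    have hx : (↑(⁅a, b⁆ : G) : CircleDeg1Lift) (((b * a : G) : CircleDeg1Lift) y)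
        = ((a * b : G) : CircleDeg1Lift) y := by
      rw [← CircleDeg1Lift.mul_apply, ← Units.val_mul]
      have : (⁅a, b⁆ : G) * (b * a) = a * b := by group
      rw [this]
    rw [hx] at this
    have : ((b * a : G) : CircleDeg1Lift) y + 1 ≤ ((a * b : G) : CircleDeg1Lift) y := le_of_lt (by exact_mod_cast this)
    calc (↑(Tr ((1:ℤ) : ℝ)) * (↑(b * a) : CircleDeg1Lift)) y
        = ((1:ℤ):ℝ) + ((b * a : G) : CircleDeg1Lift) y := rfl
      _ ≤ ((a * b : G) : CircleDeg1Lift) y := by push_cast at this ⊢; linarith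
  have hmono := tau_le_of_forall_le key
  rw [tau_Tr_int_mul] at hmono
  have hconj : ((b * a : G) : CircleDeg1Lift).translationNumber
      = ((a * b : G) : CircleDeg1Lift).translationNumber := by
    have := translationNumber_conj_eq a ((b * a : G) : CircleDeg1Lift)
    have h2 : (↑a * (↑(b * a) : CircleDeg1Lift) * ↑a⁻¹) = ((a * b : G) : CircleDeg1Lift) := by
      rw [← Units.val_mul, ← Units.val_mul]
      congr 1
      group
    rw [h2] at this
    exact this.symm
  rw [hconj] at hmono
  push_cast at hmono
  linarith

end Tst

namespace Tst2
open Tst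
local notation "G" => CircleDeg1Liftˣ

/-- Milnor–Wood type bound: translation number of a product of commutators. -/
lemma tau_prod_commutators_le (L : List G) (hL : L ≠ [])
    (hcomm : ∀ K ∈ L, ∃ a b : G, K = ⁅a, b⁆) :
    tu L.prod ≤ 2 * L.length - 1 := by
  induction L with
  | nil => exact absurd rfl hL
  | cons K L ih =>
    rcases hcomm K (List.mem_cons_self) with ⟨a, b, rfl⟩
    rcases eq_or_ne L [] with rfl | hL'
    · have := tau_commutator_le_one a b
      simp only [List.prod_cons, List.prod_nil, mul_one, List.length_cons, List.length_nil]
      push_cast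
      linarith
    · have hQ : tu L.prod ≤ 2 * L.length - 1 :=
        ih hL' (fun K hK => hcomm K (List.mem_cons_of_mem _ hK))
      by_contra hcon
      push_neg at hcon
      rw [List.prod_cons, List.length_cons] at hcon
      set n : ℕ := L.length with hn
      have hm : ((2 * n + 1 : ℤ) : ℝ) < tu ((⁅a, b⁆ : G) * L.prod) := by
        push_cast
        push_cast at hcon
        linarith
      have hpt := (↑((⁅a, b⁆ : G) * L.prod) : CircleDeg1Lift).lt_map_of_int_lt_translationNumber hm
      -- derive pointwise: ((b*a)*(a*b)⁻¹) x + m < L.prod x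
      have key : ∀ x : ℝ, (↑(Tr ((2 * (n:ℤ) + 1 : ℤ) : ℝ)) * ↑((b * a) * (a * b)⁻¹) : CircleDeg1Lift) x
          ≤ (↑L.prod : CircleDeg1Lift) x := by
        intro x
        have h0 := hpt x
        set m : ℤ := 2 * (n:ℤ) + 1 with hmdef
        -- ⁅a,b⁆ * L.prod = (a*b) * ((b*a)⁻¹ * L.prod)
        have hsplit : (⁅a, b⁆ : G) * L.prod = (a * b) * ((b * a)⁻¹ * L.prod) := by group
        rw [hsplit] at h0
        have h1 : ((a*b)⁻¹ : G) (x + (m:ℝ)) < ((a*b)⁻¹ : G) ((↑(a * b) : CircleDeg1Lift)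
            ((↑((b * a)⁻¹ * L.prod) : CircleDeg1Lift) x)) := by
          apply units_strictMono ((a*b)⁻¹)
          simpa [Units.val_mul, CircleDeg1Lift.mul_apply] using h0
        rw [units_inv_apply_apply] at h1
        have h2 : ((b*a) : G) (((a*b)⁻¹ : G) x + (m:ℝ)) < ((b*a) : G) ((((b*a)⁻¹ : G)) ((↑L.prod : CircleDeg1Lift) x)) := by
          apply units_strictMono (b*a)
          have hmm : ((a*b)⁻¹ : G) (x + (m:ℝ)) = ((a*b)⁻¹ : G) x + (m:ℝ) :=
            CircleDeg1Lift.map_add_int _ x m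
          rw [hmm] at h1
          simpa [Units.val_mul, CircleDeg1Lift.mul_apply] using h1
        rw [units_apply_inv_apply] at h2
        have h3 : ((b*a) : G) (((a*b)⁻¹ : G) x) + (m:ℝ) ≤ (↑L.prod : CircleDeg1Lift) x := by
          have : ((b*a) : G) (((a*b)⁻¹ : G) x + (m:ℝ)) = ((b*a) : G) (((a*b)⁻¹ : G) x) + (m:ℝ) :=
            CircleDeg1Lift.map_add_int _ _ m
          rw [this] at h2
          linarith
        calc (↑(Tr ((m : ℤ) : ℝ)) * ↑((b * a) * (a * b)⁻¹) : CircleDeg1Lift) x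
            = (m:ℝ) + ((b*a) : G) (((a*b)⁻¹ : G) x) := by
              simp [Units.val_mul, CircleDeg1Lift.mul_apply]; rfl
          _ ≤ (↑L.prod : CircleDeg1Lift) x := by linarith
      have hmono := tau_le_of_forall_le key
      rw [tau_Tr_int_mul] at hmono
      -- τ((b*a)*(a*b)⁻¹) = - τ(⁅a,b⁆) ≥ -1
      have hinv : ((b * a) * (a * b)⁻¹ : G) = (⁅a, b⁆ : G)⁻¹ := by group
      have htau : (↑((b * a) * (a * b)⁻¹ : G) : CircleDeg1Lift).translationNumber
          = -tu ⁅a, b⁆ := by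
        rw [hinv]
        exact translationNumber_units_inv _
      rw [htau] at hmono
      have hK1 : tu ⁅a, b⁆ ≤ 1 := tau_commutator_le_one a b
      have : (2 * (n:ℝ) + 1) - 1 ≤ tu L.prod := by
        push_cast at hmono
        unfold tu
        linarith
      linarith

end Tst2

namespace Tst3
open Tst Tst2
local notation "G" => CircleDeg1Liftˣ

lemma point_pow (t : G) (x : ℝ) (m : ℤ) (hx : x + m ≤ t x) :
    ∀ cn : ℕ, x + (cn : ℤ) * m ≤ ((t ^ cn : G) : CircleDeg1Lift) x := by
  intro cn
  induction cn with
  | zero => simp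
  | succ k ih =>
    have h1 : ((t ^ (k+1) : G) : CircleDeg1Lift) x = (t : CircleDeg1Lift) (((t ^ k : G) : CircleDeg1Lift) x) := by
      rw [pow_succ']
      rw [Units.val_mul]
      rfl
    rw [h1]
    have h2 : (t : CircleDeg1Lift) (x + ((k:ℤ) * m : ℤ)) ≤ (t : CircleDeg1Lift) (((t ^ k : G) : CircleDeg1Lift) x) := by
      apply CircleDeg1Lift.mono
      exact_mod_cast ih
    rw [CircleDeg1Lift.map_add_int] at h2
    have h3 : x + m + ((k:ℤ) * m : ℤ) ≤ (t : CircleDeg1Lift) x + ((k:ℤ) * m : ℤ) := by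
      exact add_le_add_left hx _
    push_cast at h2 h3 ⊢
    linarith

lemma point_conj_zpow (t wu : G) (x₀ : ℝ) (n : ℤ) (hx : x₀ + n ≤ t x₀) (c : ℤ) (hc : 0 < c) :
    ∃ x : ℝ, x + (c * n : ℤ) ≤ (((wu * t * wu⁻¹) ^ c : G) : CircleDeg1Lift) x := by
  have hconj : ((wu * t * wu⁻¹) ^ c : G) = wu * (t ^ c) * wu⁻¹ := by
    rw [show (wu * t * wu⁻¹ : G) = (MulAut.conj wu) t from rfl, ← map_zpow]
    rfl
  have hpow : (t ^ c : G) = t ^ (c.toNat) := by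
    rw [← zpow_natCast, Int.toNat_of_nonneg hc.le]
  have hcert := point_pow t x₀ n hx c.toNat
  have hcnat : (((c.toNat : ℕ) : ℤ) : ℝ) = (c : ℝ) := by exact_mod_cast Int.toNat_of_nonneg hc.le
  rw [show (((c.toNat : ℕ) : ℤ) : ℝ) * ((n:ℤ):ℝ) = (((c.toNat : ℕ) : ℤ) : ℝ) * ((n:ℤ):ℝ) from rfl] at hcert
  rw [hcnat] at hcert
  rw [show (c:ℝ) * ((n:ℤ):ℝ) = ((c * n : ℤ) : ℝ) by push_cast; ring] at hcert
  refine ⟨wu x₀, ?_⟩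
  rw [hconj, hpow]
  have heval : ((wu * t ^ c.toNat * wu⁻¹ : G) : CircleDeg1Lift) ((wu : CircleDeg1Lift) x₀)
      = (wu : CircleDeg1Lift) (((t ^ c.toNat : G) : CircleDeg1Lift) x₀) := by
    simp [Units.val_mul, CircleDeg1Lift.mul_apply]
  rw [heval]
  have h2 : (wu : CircleDeg1Lift) (x₀ + ((c * n : ℤ) : ℝ))
      ≤ (wu : CircleDeg1Lift) (((t ^ c.toNat : G) : CircleDeg1Lift) x₀) :=
    CircleDeg1Lift.mono _ hcert
  rw [CircleDeg1Lift.map_add_int] at h2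
  exact h2

lemma point_mul (F Gu : G) (α β : ℤ)
    (hF : ∃ x, x + α ≤ (F : CircleDeg1Lift) x) (hG : ∃ x, x + β ≤ (Gu : CircleDeg1Lift) x) :
    ∃ x, x + (α + β - 1 : ℤ) ≤ ((F * Gu : G) : CircleDeg1Lift) x := by
  obtain ⟨q, hq⟩ := hF
  obtain ⟨p, hp⟩ := hG
  refine ⟨p, ?_⟩
  set y := (Gu : CircleDeg1Lift) p with hy
  set k : ℤ := ⌊y - q⌋ with hk
  have hqk : q + (k:ℝ) ≤ y := by
    have := Int.floor_le (y - q)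
    rw [← hk] at this
    linarith
  have h1 : (F : CircleDeg1Lift) (q + (k:ℝ)) ≤ (F : CircleDeg1Lift) y := CircleDeg1Lift.mono _ hqk
  have h2 : (F : CircleDeg1Lift) (q + (k:ℝ)) = (F : CircleDeg1Lift) q + (k:ℝ) := by
    exact_mod_cast CircleDeg1Lift.map_add_int _ q k
  have hk2 : y - q - 1 < (k:ℝ) := by
    have := Int.sub_one_lt_floor (y - q)
    rw [← hk] at this
    linarith
  have hFy : y + (α:ℝ) - 1 < (F : CircleDeg1Lift) y := by
    rw [h2] at h1
    push_cast at hq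
    linarith
  have hmul : ((F * Gu : G) : CircleDeg1Lift) p = (F : CircleDeg1Lift) y := by
    rw [Units.val_mul]; rfl
  rw [hmul]
  push_cast
  push_cast at hp
  linarith

lemma point_list (M : List (G × ℤ)) (hM : M ≠ [])
    (h : ∀ pr ∈ M, ∃ x : ℝ, x + pr.2 ≤ ((pr.1 : G) : CircleDeg1Lift) x) :
    ∃ x : ℝ, x + ((M.map Prod.snd).sum - ((M.length : ℤ) - 1) : ℤ)
      ≤ (((M.map Prod.fst).prod : G) : CircleDeg1Lift) x := by
  induction M with
  | nil => exact absurd rfl hM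
  | cons pr M ih =>
    rcases eq_or_ne M [] with rfl | hM'
    · obtain ⟨x, hx⟩ := h pr (List.mem_cons_self)
      refine ⟨x, ?_⟩
      simpa using hx
    · obtain ⟨xcert⟩ : Nonempty (∃ x : ℝ, x + ((M.map Prod.snd).sum - ((M.length : ℤ) - 1) : ℤ)
          ≤ (((M.map Prod.fst).prod : G) : CircleDeg1Lift) x) :=
        ⟨ih hM' (fun q hq => h q (List.mem_cons_of_mem _ hq))⟩
      have hhead := h pr (List.mem_cons_self)
      have := point_mul pr.1 ((M.map Prod.fst).prod) pr.2 ((M.map Prod.snd).sum - ((M.length : ℤ) - 1)) hhead xcert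
      obtain ⟨x, hx⟩ := this
      refine ⟨x, ?_⟩
      have hshape : (((pr :: M).map Prod.fst).prod : G) = pr.1 * (M.map Prod.fst).prod := by
        simp
      rw [hshape]
      have harith : (((pr :: M).map Prod.snd).sum - (((pr :: M).length : ℤ) - 1) : ℤ)
          = pr.2 + ((M.map Prod.snd).sum - ((M.length : ℤ) - 1)) - 1 := by
        simp [List.length_cons]
        push_cast
        ring
      rw [harith]
      exact hx

end Tst3

namespace Tst4
open Tst Tst2 Tst3 Int
local notation "G" => CircleDeg1Liftˣ

/-- The lift `x ↦ ⌊x⌋ + fract(x)^t` for `t > 0`. -/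
noncomputable def hpow (t : ℝ) (ht : 0 < t) : CircleDeg1Lift :=
  { toFun := fun x => (⌊x⌋ : ℝ) + (Int.fract x) ^ t
    monotone' := by
      intro x y hxy
      dsimp only
      rcases eq_or_lt_of_le (Int.floor_mono hxy) with hf | hf
      · have hfr : Int.fract x ≤ Int.fract y := by
          unfold Int.fract
          rw [hf]
          linarith
        have := Real.rpow_le_rpow (Int.fract_nonneg x) hfr ht.le
        simp only [hf]
        linarith
      · have h1 : (Int.fract x) ^ t < 1 :=
          Real.rpow_lt_one (Int.fract_nonneg x) (Int.fract_lt_one x) ht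
        have h2 : (0:ℝ) ≤ (Int.fract y) ^ t :=
          Real.rpow_nonneg (Int.fract_nonneg y) t
        have : ((⌊x⌋ : ℤ) : ℝ) + 1 ≤ ((⌊y⌋ : ℤ) : ℝ) := by exact_mod_cast hf
        linarith
    map_add_one' := by
      intro x
      simp only [Int.floor_add_one, Int.fract_add_one]
      push_cast
      ring }

lemma hpow_apply (t : ℝ) (ht : 0 < t) (x : ℝ) :
    hpow t ht x = (⌊x⌋ : ℝ) + (Int.fract x) ^ t := rfl

lemma hpow_comp (s t : ℝ) (hs : 0 < s) (ht : 0 < t) (hst : s * t = 1) :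
    (hpow t ht) * (hpow s hs) = 1 := by
  ext x
  show hpow t ht (hpow s hs x) = x
  rw [hpow_apply, hpow_apply]
  have hfr01 : 0 ≤ (Int.fract x) ^ s ∧ (Int.fract x) ^ s < 1 :=
    ⟨Real.rpow_nonneg (Int.fract_nonneg x) s,
     Real.rpow_lt_one (Int.fract_nonneg x) (Int.fract_lt_one x) hs⟩
  have hfl : ⌊(⌊x⌋ : ℝ) + (Int.fract x) ^ s⌋ = ⌊x⌋ := by
    rw [Int.floor_intCast_add, Int.floor_eq_zero_iff.mpr (Set.mem_Ico.mpr ⟨hfr01.1, hfr01.2⟩), add_zero]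
  have hfr : Int.fract ((⌊x⌋ : ℝ) + (Int.fract x) ^ s) = (Int.fract x) ^ s := by
    rw [Int.fract_intCast_add, Int.fract_eq_self.mpr ⟨hfr01.1, hfr01.2⟩]
  rw [hfl, hfr, ← Real.rpow_mul (Int.fract_nonneg x), hst, Real.rpow_one]
  exact Int.floor_add_fract x

end Tst4

namespace Tst5
open Tst Tst2 Tst3 Tst4
local notation "G" => CircleDeg1Liftˣ

/-- `hpow` as a unit. -/
noncomputable def Hu (t : ℝ) (ht : 0 < t) : G :=
  { val := hpow t ht
    inv := hpow (1/t) (by positivity)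
    val_inv := hpow_comp (1/t) t (by positivity) ht (by field_simp)
    inv_val := hpow_comp t (1/t) ht (by positivity) (by field_simp) }

noncomputable def tExp (ε : ℝ) : ℝ := Real.log (1 - ε) / Real.log ε

lemma tExp_pos {ε : ℝ} (hε0 : 0 < ε) (hε1 : ε < 1/2) : 0 < tExp ε := by
  unfold tExp
  have h1 : Real.log ε < 0 := Real.log_neg hε0 (by linarith)
  have h2 : Real.log (1 - ε) < 0 := Real.log_neg (by linarith) (by linarith)
  exact div_pos_of_neg_of_neg h2 h1

lemma eps_rpow {ε : ℝ} (hε0 : 0 < ε) (hε1 : ε < 1/2) : ε ^ tExp ε = 1 - ε := by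
  unfold tExp
  have h1 : Real.log ε ≠ 0 := ne_of_lt (Real.log_neg hε0 (by linarith))
  rw [Real.rpow_def_of_pos hε0, mul_div_assoc', mul_comm, mul_div_assoc, div_self h1, mul_one,
    Real.exp_log (by linarith)]

lemma eps_rpow_inv {ε : ℝ} (hε0 : 0 < ε) (hε1 : ε < 1/2) : (1 - ε) ^ (1 / tExp ε) = ε := by
  unfold tExp
  have h1 : Real.log (1 - ε) ≠ 0 := ne_of_lt (Real.log_neg (by linarith) (by linarith))
  rw [one_div, inv_div, Real.rpow_def_of_pos (by linarith), mul_div_assoc', mul_comm,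
    mul_div_assoc, div_self h1, mul_one, Real.exp_log hε0]
end Tst5

namespace Tst6
open Tst Tst2 Tst3 Tst4 Tst5
local notation "G" => CircleDeg1Liftˣ

lemma conj_eval (s : ℝ) (K : G) (y : ℝ) :
    ((Tr s * K * (Tr s)⁻¹ : G) : CircleDeg1Lift) y = s + (K : CircleDeg1Lift) (-s + y) := by
  simp only [Units.val_mul, CircleDeg1Lift.mul_apply]
  rw [show (((Tr s)⁻¹ : G) : CircleDeg1Lift) y = -s + y from Tr_inv_apply s y]
  rfl

lemma chain_prod (K : G) (q c : ℝ) (hK : (K : CircleDeg1Lift) q = q + c) :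
    ∀ n : ℕ,
      (((List.ofFn fun i : Fin n =>
        (Tr (((n - 1 - (i:ℕ) : ℕ) : ℝ) * c)) * K * (Tr (((n - 1 - (i:ℕ) : ℕ) : ℝ) * c))⁻¹).prod : G) : CircleDeg1Lift) q
        = q + n * c := by
  intro n
  induction n with
  | zero => simp
  | succ n ih =>
    rw [List.ofFn_succ, List.prod_cons]
    have htail : (List.ofFn fun i : Fin n =>
        (Tr (((n + 1 - 1 - ((i.succ : Fin (n+1)):ℕ) : ℕ) : ℝ) * c)) * K
          * (Tr (((n + 1 - 1 - ((i.succ : Fin (n+1)):ℕ) : ℕ) : ℝ) * c))⁻¹)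
        = (List.ofFn fun i : Fin n =>
        (Tr (((n - 1 - (i:ℕ) : ℕ) : ℝ) * c)) * K * (Tr (((n - 1 - (i:ℕ) : ℕ) : ℝ) * c))⁻¹) := by
      congr 1
      funext i
      have hnat : (n + 1 - 1 - ((i.succ : Fin (n+1)):ℕ) : ℕ) = (n - 1 - (i:ℕ) : ℕ) := by
        simp [Fin.val_succ]
        omega
      rw [hnat]
    rw [htail, Units.val_mul, CircleDeg1Lift.mul_apply, ih]
    have hc0 : ((n + 1 - 1 - ((0 : Fin (n+1)):ℕ) : ℕ) : ℝ) = (n:ℝ) := by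
      simp
    rw [hc0, conj_eval]
    rw [show -((n:ℝ)*c) + (q + n*c) = q by ring, hK]
    push_cast
    ring
end Tst6

namespace Tst7
open Tst Tst2 Tst3 Tst4 Tst5 Tst6
local notation "G" => CircleDeg1Liftˣ

variable {ε : ℝ}

noncomputable def aU (hε0 : 0 < ε) (hε1 : ε < 1/2) : G :=
  Tr (-ε) * Hu (tExp ε) (tExp_pos hε0 hε1)

noncomputable def bU (hε0 : 0 < ε) (hε1 : ε < 1/2) : G :=
  Tr ε * Hu (1 / tExp ε) (by have := tExp_pos hε0 hε1; positivity)

lemma Hu_coe (t : ℝ) (ht : 0 < t) : ((Hu t ht : G) : CircleDeg1Lift) = hpow t ht := rfl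

lemma aU_apply (hε0 : 0 < ε) (hε1 : ε < 1/2) (x : ℝ) :
    ((aU hε0 hε1 : G) : CircleDeg1Lift) x = -ε + hpow (tExp ε) (tExp_pos hε0 hε1) x := by
  rw [aU, Units.val_mul, CircleDeg1Lift.mul_apply, Hu_coe]
  rfl

lemma bU_apply (hε0 : 0 < ε) (hε1 : ε < 1/2) (x : ℝ) :
    ((bU hε0 hε1 : G) : CircleDeg1Lift) x
      = ε + hpow (1 / tExp ε) (by have := tExp_pos hε0 hε1; positivity) x := by
  rw [bU, Units.val_mul, CircleDeg1Lift.mul_apply, Hu_coe]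
  rfl

lemma aU_zero (hε0 : 0 < ε) (hε1 : ε < 1/2) :
    ((aU hε0 hε1 : G) : CircleDeg1Lift) 0 = -ε := by
  rw [aU_apply, hpow_apply]
  rw [Int.floor_zero, Int.fract_zero, Real.zero_rpow (ne_of_gt (tExp_pos hε0 hε1))]
  norm_num

lemma aU_eps (hε0 : 0 < ε) (hε1 : ε < 1/2) :
    ((aU hε0 hε1 : G) : CircleDeg1Lift) ε = 1 - 2*ε := by
  rw [aU_apply, hpow_apply]
  rw [Int.floor_eq_zero_iff.mpr (Set.mem_Ico.mpr ⟨hε0.le, by linarith⟩),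
      Int.fract_eq_self.mpr ⟨hε0.le, by linarith⟩, eps_rpow hε0 hε1]
  push_cast
  ring

lemma bU_zero (hε0 : 0 < ε) (hε1 : ε < 1/2) :
    ((bU hε0 hε1 : G) : CircleDeg1Lift) 0 = ε := by
  rw [bU_apply, hpow_apply]
  rw [Int.floor_zero, Int.fract_zero,
    Real.zero_rpow (by have := tExp_pos hε0 hε1; positivity)]
  norm_num

lemma bU_negeps (hε0 : 0 < ε) (hε1 : ε < 1/2) :
    ((bU hε0 hε1 : G) : CircleDeg1Lift) (-ε) = 2*ε - 1 := by
  rw [bU_apply, hpow_apply]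
  have hfl : ⌊-ε⌋ = -1 := by
    rw [Int.floor_eq_iff]
    constructor
    · push_cast; linarith
    · push_cast; linarith
  have hfr : Int.fract (-ε) = 1 - ε := by
    rw [Int.fract, hfl]
    push_cast
    ring
  rw [hfl, hfr, eps_rpow_inv hε0 hε1]
  push_cast
  ring

lemma K_point (hε0 : 0 < ε) (hε1 : ε < 1/2) :
    ((⁅aU hε0 hε1, bU hε0 hε1⁆ : G) : CircleDeg1Lift) (2*ε - 1) = (2*ε - 1) + (2 - 4*ε) := by
  set a := aU hε0 hε1
  set b := bU hε0 hε1
  have hba : ((b * a : G) : CircleDeg1Lift) 0 = 2*ε - 1 := by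
    rw [Units.val_mul, CircleDeg1Lift.mul_apply]
    show (b : CircleDeg1Lift) ((a : CircleDeg1Lift) 0) = _
    rw [aU_zero hε0 hε1, bU_negeps hε0 hε1]
  have hab : ((a * b : G) : CircleDeg1Lift) 0 = 1 - 2*ε := by
    rw [Units.val_mul, CircleDeg1Lift.mul_apply]
    show (a : CircleDeg1Lift) ((b : CircleDeg1Lift) 0) = _
    rw [bU_zero hε0 hε1, aU_eps hε0 hε1]
  have hgrp : (⁅a, b⁆ : G) * (b * a) = a * b := by group
  have : ((⁅a, b⁆ : G) : CircleDeg1Lift) (((b * a : G) : CircleDeg1Lift) 0)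
      = ((a * b : G) : CircleDeg1Lift) 0 := by
    rw [← CircleDeg1Lift.mul_apply, ← Units.val_mul, hgrp]
  rw [hba, hab] at this
  rw [this]
  ring

end Tst7

namespace Tst8
open Tst Tst2 Tst3 Tst4 Tst5 Tst6 Tst7
local notation "G" => CircleDeg1Liftˣ

lemma exists_genus_rep (g : ℕ) (hg : 1 ≤ g) :
    ∃ (A B : Fin g → G) (q : ℝ),
      (((List.ofFn fun i => ⁅A i, B i⁆).prod : G) : CircleDeg1Lift) q
        = q + ((2 * (g:ℤ) - 1 : ℤ) : ℝ) := by
  have hgR : (0:ℝ) < (g:ℝ) := by exact_mod_cast hg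
  set ε : ℝ := 1 / (4 * g) with hεdef
  have hε0 : 0 < ε := by positivity
  have hε1 : ε < 1/2 := by
    rw [hεdef]
    rw [div_lt_div_iff₀ (by positivity) (by norm_num)]
    have : (1:ℝ) ≤ (g:ℝ) := by exact_mod_cast hg
    linarith
  set a := aU hε0 hε1 with ha
  set b := bU hε0 hε1 with hb
  set K : G := ⁅a, b⁆ with hK
  set c : ℝ := 2 - 4 * ε with hc
  set d : Fin g → ℝ := fun i => (((g - 1 - (i:ℕ) : ℕ)) : ℝ) * c with hd
  refine ⟨fun i => Tr (d i) * a * (Tr (d i))⁻¹, fun i => Tr (d i) * b * (Tr (d i))⁻¹,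
    2 * ε - 1, ?_⟩
  have hKi : ∀ i : Fin g, ⁅Tr (d i) * a * (Tr (d i))⁻¹, Tr (d i) * b * (Tr (d i))⁻¹⁆
      = Tr (d i) * K * (Tr (d i))⁻¹ := by
    intro i
    rw [← MulAut.conj_apply, ← MulAut.conj_apply, ← map_commutatorElement, MulAut.conj_apply, hK]
  have hlist : (List.ofFn fun i : Fin g => ⁅Tr (d i) * a * (Tr (d i))⁻¹, Tr (d i) * b * (Tr (d i))⁻¹⁆)
      = (List.ofFn fun i : Fin g => Tr (d i) * K * (Tr (d i))⁻¹) := by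
    congr 1
    funext i
    exact hKi i
  rw [hlist]
  have hKpt : (K : CircleDeg1Lift) (2*ε - 1) = (2*ε - 1) + c := K_point hε0 hε1
  have := chain_prod K (2*ε - 1) c hKpt g
  rw [hd] at *
  rw [this]
  have : (g:ℝ) * c = ((2 * (g:ℤ) - 1 : ℤ) : ℝ) := by
    rw [hc, hεdef]
    push_cast
    field_simp
  rw [this]

lemma core (P : G) (hcnt lcnt : ℕ) (hh : 1 ≤ hcnt) (hl : 1 ≤ lcnt)
    (L : List G) (hLP : L.prod = P) (hLlen : L.length = hcnt)
    (hLcomm : ∀ K ∈ L, ∃ a b : G, K = ⁅a, b⁆)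
    (M : List (G × ℤ)) (hMP : (M.map Prod.fst).prod = P) (hMlen : M.length = lcnt)
    (hMcert : ∀ pr ∈ M, ∃ x : ℝ, x + pr.2 ≤ ((pr.1 : G) : CircleDeg1Lift) x) :
    (M.map Prod.snd).sum - ((lcnt:ℤ) - 1) ≤ 2 * (hcnt:ℤ) - 1 := by
  have hLne : L ≠ [] := by
    intro hnil
    rw [hnil] at hLlen
    simp at hLlen
    omega
  have hMne : M ≠ [] := by
    intro hnil
    rw [hnil] at hMlen
    simp at hMlen
    omega
  have up := tau_prod_commutators_le L hLne hLcomm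
  rw [hLP, hLlen] at up
  obtain ⟨x, hx⟩ := point_list M hMne hMcert
  have low := (((M.map Prod.fst).prod : G) : CircleDeg1Lift).le_translationNumber_of_add_int_le hx
  rw [hMP] at low
  have : (((M.map Prod.snd).sum - ((M.length : ℤ) - 1) : ℤ) : ℝ) ≤ 2 * (hcnt:ℝ) - 1 := by
    unfold tu at up
    linarith
  rw [hMlen] at this
  exact_mod_cast this

end Tst8



namespace SurfaceEq

open Tst Tst2 Tst3 Tst4 Tst5 Tst6 Tst7 Tst8

/-- The free group `F_{2g}` on `2g` generators `x₁,y₁,…,x_g,y_g`: the `x`-generators are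
indexed by `Sum.inl`, the `y`-generators by `Sum.inr`. -/
abbrev Fg (g : ℕ) : Type := FreeGroup (Fin g ⊕ Fin g)

/-- The generator `xᵢ` of `F_{2g}`. -/
def xg {g : ℕ} (i : Fin g) : Fg g := FreeGroup.of (Sum.inl i)

/-- The generator `yᵢ` of `F_{2g}`. -/
def yg {g : ℕ} (i : Fin g) : Fg g := FreeGroup.of (Sum.inr i)

/-- `B_g = [x₁,y₁]⋯[x_g,y_g]`. -/
def Bg (g : ℕ) : Fg g := (List.ofFn fun i : Fin g => ⁅xg i, yg i⁆).prod

/-- Let `g, l, h ≥ 1`, let `w₁,…,w_l` be pairwise distinct elements of `F_{2g}` and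
`c₁,…,c_l` nonzero integers that are all positive or all negative. If
`[u₁,v₁]⋯[u_h,v_h] = (B_g^{w₁})^{c₁}⋯(B_g^{w_l})^{c_l}` has a solution in `F_{2g}`, then
`(|c₁|+⋯+|c_l|)(2g−1) ≤ 2h−2+l`. -/
theorem necessary_condition (g l h : ℕ) (hg : 1 ≤ g) (hl : 1 ≤ l) (hh : 1 ≤ h)
    (w : Fin l → Fg g) (hw : Function.Injective w) (c : Fin l → ℤ)
    (hc : (∀ i, 0 < c i) ∨ (∀ i, c i < 0))
    (u v : Fin h → Fg g)
    (heq : (List.ofFn fun i => ⁅u i, v i⁆).prod =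
      (List.ofFn fun i : Fin l => (w i * Bg g * (w i)⁻¹) ^ c i).prod) :
    (∑ i, |c i|) * (2 * (g : ℤ) - 1) ≤ 2 * (h : ℤ) - 2 + (l : ℤ) := by
  clear hw
  obtain ⟨A, B, q, hq⟩ := exists_genus_rep g hg
  set ρ : Fg g →* CircleDeg1Liftˣ := FreeGroup.lift (Sum.elim A B) with hρdef
  have hρB : ρ (Bg g) = (List.ofFn fun i => ⁅A i, B i⁆).prod := by
    rw [Bg, map_list_prod, List.map_ofFn]
    refine congrArg List.prod (congrArg List.ofFn (funext fun i => ?_))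
    show ρ ⁅xg i, yg i⁆ = ⁅A i, B i⁆
    rw [map_commutatorElement, hρdef, xg, yg, FreeGroup.lift_apply_of, FreeGroup.lift_apply_of,
      Sum.elim_inl, Sum.elim_inr]
  set n0 : ℤ := 2 * (g:ℤ) - 1 with hn0
  have hcert : q + (n0 : ℝ) ≤ ((ρ (Bg g)) : CircleDeg1Lift) q := by
    rw [hρB, hq]
  -- image of the equation
  have hPQ : ρ ((List.ofFn fun i => ⁅u i, v i⁆).prod)
      = ρ ((List.ofFn fun i : Fin l => (w i * Bg g * (w i)⁻¹) ^ c i).prod) :=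
    congrArg ρ heq
  set X : Fin l → CircleDeg1Liftˣ := fun i => ρ (w i) * ρ (Bg g) * (ρ (w i))⁻¹ with hX
  have hLprod : (List.ofFn fun i : Fin h => ⁅ρ (u i), ρ (v i)⁆).prod
      = ρ ((List.ofFn fun i => ⁅u i, v i⁆).prod) := by
    rw [map_list_prod, List.map_ofFn]
    exact congrArg List.prod (congrArg List.ofFn (funext fun i =>
      (map_commutatorElement ρ (u i) (v i)).symm))
  have hMprod : (List.ofFn fun i : Fin l => (X i) ^ (c i)).prod
      = ρ ((List.ofFn fun i : Fin l => (w i * Bg g * (w i)⁻¹) ^ c i).prod) := by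
    rw [map_list_prod, List.map_ofFn]
    refine congrArg List.prod (congrArg List.ofFn (funext fun i => ?_))
    show (X i) ^ (c i) = ρ ((w i * Bg g * (w i)⁻¹) ^ c i)
    rw [map_zpow, map_mul, map_mul, map_inv]
  rcases hc with hpos | hneg
  · -- all positive
    set M : List (CircleDeg1Liftˣ × ℤ) :=
      List.ofFn (fun i : Fin l => ((X i) ^ (c i), (c i) * n0)) with hM
    have hMfst : M.map Prod.fst = List.ofFn fun i : Fin l => (X i) ^ (c i) := by
      rw [hM, List.map_ofFn]
      rfl
    have hkey := core (ρ ((List.ofFn fun i => ⁅u i, v i⁆).prod)) h l hh hl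
      (List.ofFn fun i : Fin h => ⁅ρ (u i), ρ (v i)⁆) hLprod (by simp) ?_ M ?_ (by simp [hM]) ?_
    · have hsum : (M.map Prod.snd).sum = ∑ i, (c i) * n0 := by
        rw [hM, List.map_ofFn, List.sum_ofFn]
        rfl
      rw [hsum] at hkey
      have habs : ∑ i, (c i) * n0 = (∑ i, |c i|) * n0 := by
        rw [Finset.sum_mul]
        refine Finset.sum_congr rfl fun i _ => ?_
        rw [abs_of_pos (hpos i)]
      rw [habs] at hkey
      linarith
    · intro K hK
      obtain ⟨i, hi⟩ := List.mem_ofFn.mp hK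
      exact ⟨ρ (u i), ρ (v i), hi.symm⟩
    · rw [hMfst, hMprod, hPQ]
    · intro pr hpr
      rw [hM] at hpr
      obtain ⟨i, hi⟩ := List.mem_ofFn.mp hpr
      rw [← hi]
      exact point_conj_zpow (ρ (Bg g)) (ρ (w i)) q n0 hcert (c i) (hpos i)
  · -- all negative
    set M : List (CircleDeg1Liftˣ × ℤ) :=
      (List.ofFn (fun i : Fin l => (((X i) ^ (c i))⁻¹, (-(c i)) * n0))).reverse with hM
    have hkey := core ((ρ ((List.ofFn fun i => ⁅u i, v i⁆).prod))⁻¹) h l hh hl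
      (((List.ofFn fun i : Fin h => ⁅ρ (u i), ρ (v i)⁆).map (fun x => x⁻¹)).reverse) ?_ (by simp) ?_
      M ?_ (by simp [hM]) ?_
    · have hsum : (M.map Prod.snd).sum = ∑ i, (-(c i)) * n0 := by
        rw [hM, List.map_reverse, List.sum_reverse, List.map_ofFn, List.sum_ofFn]
        rfl
      rw [hsum] at hkey
      have habs : ∑ i, (-(c i)) * n0 = (∑ i, |c i|) * n0 := by
        rw [Finset.sum_mul]
        refine Finset.sum_congr rfl fun i _ => ?_
        rw [abs_of_neg (hneg i)]
      rw [habs] at hkey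
      linarith
    · rw [← List.prod_inv_reverse, hLprod]
    · intro K hK
      rw [List.mem_reverse, List.mem_map] at hK
      obtain ⟨K', hK', rfl⟩ := hK
      obtain ⟨i, hi⟩ := List.mem_ofFn.mp hK'
      exact ⟨ρ (v i), ρ (u i), by rw [← hi, commutatorElement_inv]⟩
    · rw [hM, List.map_reverse, List.map_ofFn, hPQ, ← hMprod, List.prod_inv_reverse,
        List.map_ofFn]
      rfl
    · intro pr hpr
      rw [hM, List.mem_reverse] at hpr
      obtain ⟨i, hi⟩ := List.mem_ofFn.mp hpr
      rw [← hi]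
      have hzpow : ((X i) ^ (c i))⁻¹ = (X i) ^ (-(c i)) := by rw [← zpow_neg]
      show ∃ x : ℝ, x + ((-(c i)) * n0 : ℤ) ≤ ((((X i) ^ (c i))⁻¹ : CircleDeg1Liftˣ) : CircleDeg1Lift) x
      rw [hzpow]
      exact point_conj_zpow (ρ (Bg g)) (ρ (w i)) q n0 hcert (-(c i)) (by linarith [hneg i])


end SurfaceEq
end

section
/- Let g ≥ 1, l ≥ 1 and h ≥ 1 be integers, let w₁, …, w_l ∈ F_{2g} and let c₁, …, c_l be integers with c₁ + c₂ + ⋯ + c_l ≠ 0. Let p : F_{2g} → π₁(S_g) = F_{2g}/⟨⟨B_g⟩⟩ be the natural quotient homomorphism. If u₁, v₁, …, u_h, v_h ∈ F_{2g} satisfy [u₁,v₁]⋯[u_h,v_h] = (B_g^{w₁})^{c₁} (B_g^{w₂})^{c₂} ⋯ (B_g^{w_l})^{c_l}, then the subgroup p(⟨u₁, v₁, …, u_h, v_h⟩) has finite index in π₁(S_g), and this index is at most l. -/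
namespace SurfaceEq

open scoped commutatorElement

/-- The surface group `π₁(S_g) = F_{2g}/⟨⟨B_g⟩⟩`. -/
abbrev SurfaceGroup (g : ℕ) : Type :=
  Fg g ⧸ Subgroup.normalClosure ({Bg g} : Set (Fg g))

/-- The natural projection `p : F_{2g} → π₁(S_g)`. -/
def pg (g : ℕ) : Fg g →* SurfaceGroup g :=
  QuotientGroup.mk' (Subgroup.normalClosure ({Bg g} : Set (Fg g)))

-- the coefficient module
abbrev MM (g : ℕ) : Type := SurfaceGroup g →₀ ℤ
abbrev NM (g : ℕ) : Type := (Fin g ⊕ Fin g) → MM g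

/-- right-translation action (as a left action via inverse) on `MM`. -/
noncomputable def actM {g : ℕ} (γ : SurfaceGroup g) (m : MM g) : MM g :=
  Finsupp.mapDomain (· * γ⁻¹) m

noncomputable def act {g : ℕ} (γ : SurfaceGroup g) (f : NM g) : NM g := fun s => actM γ (f s)

variable {g : ℕ}

@[simp] lemma actM_one (m : MM g) : actM 1 m = m := by
  simp only [actM, inv_one, mul_one]
  exact Finsupp.mapDomain_id
lemma actM_mul (a b : SurfaceGroup g) (m : MM g) :
    actM (a * b) m = actM a (actM b m) := by
  rw [actM, actM, actM, ← Finsupp.mapDomain_comp]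
  congr 1; funext x; simp [mul_assoc]
@[simp] lemma actM_add (a : SurfaceGroup g) (m n : MM g) :
    actM a (m + n) = actM a m + actM a n := Finsupp.mapDomain_add
@[simp] lemma actM_zero (a : SurfaceGroup g) : actM a (0 : MM g) = 0 :=
  Finsupp.mapDomain_zero
@[simp] lemma actM_neg (a : SurfaceGroup g) (m : MM g) : actM a (-m) = -(actM a m) :=
  map_neg (Finsupp.mapDomain.addMonoidHom _) m
@[simp] lemma actM_sub (a : SurfaceGroup g) (m n : MM g) :
    actM a (m - n) = actM a m - actM a n :=
  map_sub (Finsupp.mapDomain.addMonoidHom _) m n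
@[simp] lemma actM_zsmul (a : SurfaceGroup g) (c : ℤ) (m : MM g) :
    actM a (c • m) = c • actM a m :=
  map_zsmul (Finsupp.mapDomain.addMonoidHom _) c m
@[simp] lemma actM_single (a : SurfaceGroup g) (x : SurfaceGroup g) (z : ℤ) :
    actM a (Finsupp.single x z) = Finsupp.single (x * a⁻¹) z :=
  Finsupp.mapDomain_single

@[simp] lemma act_one (f : NM g) : act 1 f = f := by funext s; simp [act]
lemma act_mul (a b : SurfaceGroup g) (f : NM g) :
    act (a * b) f = act a (act b f) := by funext s; simp [act, actM_mul]
@[simp] lemma act_add (a : SurfaceGroup g) (m n : NM g) :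
    act a (m + n) = act a m + act a n := by funext s; simp [act]
@[simp] lemma act_zero (a : SurfaceGroup g) : act a (0 : NM g) = 0 := by
  funext s; simp [act]
@[simp] lemma act_neg (a : SurfaceGroup g) (m : NM g) : act a (-m) = -(act a m) := by
  funext s; simp [act]
@[simp] lemma act_sub (a : SurfaceGroup g) (m n : NM g) :
    act a (m - n) = act a m - act a n := by funext s; simp [act]
@[simp] lemma act_zsmul (a : SurfaceGroup g) (c : ℤ) (m : NM g) :
    act a (c • m) = c • act a m := by funext s; simp [act]
@[simp] lemma act_pi_single (a : SurfaceGroup g) (s : Fin g ⊕ Fin g) (v : MM g) :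
    act a (Pi.single s v) = Pi.single s (actM a v) := by
  funext s'
  by_cases h : s' = s
  · subst h; simp [act]
  · simp [act, Pi.single_eq_of_ne h]

/-- The auxiliary semidirect-product group. -/
@[ext] structure W (g : ℕ) where
  l : NM g
  r : SurfaceGroup g

noncomputable instance : Group (W g) where
  mul w₁ w₂ := ⟨w₁.l + act w₁.r w₂.l, w₁.r * w₂.r⟩
  one := ⟨0, 1⟩
  inv w := ⟨-(act w.r⁻¹ w.l), w.r⁻¹⟩
  mul_assoc w₁ w₂ w₃ := by
    refine W.ext ?_ ?_
    · show (w₁.l + act w₁.r w₂.l) + act (w₁.r * w₂.r) w₃.l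
        = w₁.l + act w₁.r (w₂.l + act w₂.r w₃.l)
      rw [act_add, act_mul, add_assoc]
    · exact mul_assoc _ _ _
  one_mul w := by
    refine W.ext ?_ ?_
    · show (0 : NM g) + act 1 w.l = w.l
      rw [act_one, zero_add]
    · exact one_mul _
  mul_one w := by
    refine W.ext ?_ ?_
    · show w.l + act w.r (0 : NM g) = w.l
      rw [act_zero, add_zero]
    · exact mul_one _
  inv_mul_cancel w := by
    refine W.ext ?_ ?_
    · show -(act w.r⁻¹ w.l) + act w.r⁻¹ w.l = (0 : NM g)
      rw [neg_add_cancel]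
    · exact inv_mul_cancel _

@[simp] lemma W.mul_l (w₁ w₂ : W g) : (w₁ * w₂).l = w₁.l + act w₁.r w₂.l := rfl
@[simp] lemma W.mul_r (w₁ w₂ : W g) : (w₁ * w₂).r = w₁.r * w₂.r := rfl
@[simp] lemma W.one_l : (1 : W g).l = 0 := rfl
@[simp] lemma W.one_r : (1 : W g).r = 1 := rfl
@[simp] lemma W.inv_l (w : W g) : (w⁻¹).l = -(act w.r⁻¹ w.l) := rfl
@[simp] lemma W.inv_r (w : W g) : (w⁻¹).r = w.r⁻¹ := rfl

/-- δ₁ : the basis element at 1. -/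
noncomputable def del1 (g : ℕ) : MM g := Finsupp.single 1 1

/-- The main homomorphism `F_{2g} → W g`. -/
noncomputable def Phi (g : ℕ) : Fg g →* W g :=
  FreeGroup.lift fun s => ⟨Pi.single s (del1 g), pg g (FreeGroup.of s)⟩

@[simp] lemma Phi_of (s : Fin g ⊕ Fin g) :
    Phi g (FreeGroup.of s) = ⟨Pi.single s (del1 g), pg g (FreeGroup.of s)⟩ :=
  FreeGroup.lift_apply_of

/-- projection to the right component is a hom. -/
def piW (g : ℕ) : W g →* SurfaceGroup g where
  toFun := W.r
  map_one' := rfl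
  map_mul' _ _ := rfl

@[simp] lemma Phi_r (w : Fg g) : (Phi g w).r = pg g w := by
  have : (piW g).comp (Phi g) = pg g := by
    apply FreeGroup.ext_hom
    intro s
    simp [piW, pg]
  calc (Phi g w).r = ((piW g).comp (Phi g)) w := rfl
  _ = pg g w := by rw [this]

@[simp] lemma pg_Bg : pg g (Bg g) = 1 := by
  rw [pg, QuotientGroup.mk'_apply, QuotientGroup.eq_one_iff]
  exact Subgroup.subset_normalClosure rfl

lemma comm_l (w₁ w₂ : W g) :
    (⁅w₁, w₂⁆).l = w₁.l + act w₁.r w₂.l - act (w₁.r * w₂.r * w₁.r⁻¹) w₁.l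
      - act (w₁.r * w₂.r * w₁.r⁻¹ * w₂.r⁻¹) w₂.l := by
  rw [commutatorElement_def]
  simp only [W.mul_l, W.mul_r, W.inv_l, W.inv_r, ← act_mul, act_add, act_neg,
    mul_inv_cancel_right]
  abel

@[simp] lemma comm_r (w₁ w₂ : W g) : (⁅w₁, w₂⁆).r = ⁅w₁.r, w₂.r⁆ := rfl

lemma central_zpow (n : NM g) (c : ℤ) : (⟨n, 1⟩ : W g) ^ c = ⟨c • n, 1⟩ := by
  have hnat : ∀ k : ℕ, (⟨n, 1⟩ : W g) ^ k = ⟨(k : ℤ) • n, 1⟩ := by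
    intro k
    induction k with
    | zero => refine W.ext ?_ rfl; simp
    | succ k ih =>
      rw [pow_succ, ih]
      refine W.ext ?_ (by simp)
      show ((k:ℤ) • n) + act 1 n = ((k+1 : ℕ) : ℤ) • n
      rw [act_one]
      push_cast
      rw [add_smul, one_smul]
  rcases Int.eq_nat_or_neg c with ⟨k, hk | hk⟩ <;> subst hk
  · rw [zpow_natCast, hnat]
  · rw [zpow_neg, zpow_natCast, hnat]
    refine W.ext ?_ (by simp)
    show -(act (1:SurfaceGroup g)⁻¹ ((k:ℤ) • n)) = (-(k:ℤ)) • n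
    rw [inv_one, act_one, neg_smul]

lemma conj_central (v : W g) (n : NM g) :
    v * ⟨n, 1⟩ * v⁻¹ = ⟨act v.r n, 1⟩ := by
  refine W.ext ?_ (by simp)
  show (v.l + act v.r n) + act (v.r * 1) (-(act v.r⁻¹ v.l)) = act v.r n
  rw [mul_one, act_neg, ← act_mul, mul_inv_cancel, act_one]
  abel

lemma central_list_prod {ι : Type*} (n : ι → NM g) (t : List ι) :
    (t.map fun i => (⟨n i, 1⟩ : W g)).prod = ⟨(t.map n).sum, 1⟩ := by
  induction t with
  | nil => rfl
  | cons a t ih =>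
    rw [List.map_cons, List.prod_cons, ih, List.map_cons, List.sum_cons]
    refine W.ext ?_ (by simp)
    show n a + act 1 (t.map n).sum = n a + (t.map n).sum
    rw [act_one]

/-- the defining list of `Bg`. -/
noncomputable def LB (g : ℕ) : List (Fg g) := List.ofFn fun i : Fin g => ⁅xg i, yg i⁆

noncomputable def PP (g : ℕ) (m : ℕ) : SurfaceGroup g := pg g (((LB g).take m).prod)

noncomputable def XX {g : ℕ} (i : Fin g) : SurfaceGroup g := pg g (xg i)
noncomputable def YY {g : ℕ} (i : Fin g) : SurfaceGroup g := pg g (yg i)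

noncomputable def contr (g : ℕ) (j : ℕ) : NM g :=
  if h : j < g then
    Pi.single (Sum.inl (⟨j, h⟩ : Fin g))
      (Finsupp.single ((PP g j)⁻¹) 1
        - Finsupp.single ((PP g j * (XX ⟨j, h⟩ * YY ⟨j, h⟩ * (XX ⟨j, h⟩)⁻¹))⁻¹) 1)
    + Pi.single (Sum.inr (⟨j, h⟩ : Fin g))
      (Finsupp.single ((PP g j * XX ⟨j, h⟩)⁻¹) 1
        - Finsupp.single ((PP g j * (XX ⟨j, h⟩ * YY ⟨j, h⟩ * (XX ⟨j, h⟩)⁻¹ * (YY ⟨j, h⟩)⁻¹))⁻¹) 1)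
  else 0

@[simp] lemma PP_zero : PP g 0 = 1 := by simp [PP]

lemma LB_take_succ_lt {m : ℕ} (h : m < g) :
    ((LB g).take (m + 1)).prod = ((LB g).take m).prod * ⁅xg (⟨m, h⟩ : Fin g), yg ⟨m, h⟩⁆ := by
  rw [LB, List.take_succ, List.prod_append]
  congr 1
  have hlen : m < (List.ofFn fun i : Fin g => ⁅xg i, yg i⁆).length := by
    simpa using h
  rw [List.getElem?_eq_getElem hlen]
  simp

lemma LB_take_succ_ge {m : ℕ} (h : g ≤ m) :
    ((LB g).take (m + 1)).prod = ((LB g).take m).prod := by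
  have hlen : (LB g).length ≤ m := by simpa [LB] using h
  rw [List.take_of_length_le hlen, List.take_of_length_le (hlen.trans (Nat.le_succ m))]

lemma Phi_comm_xy (i : Fin g) :
    Phi g ⁅xg i, yg i⁆ =
      ⟨Pi.single (Sum.inl i)
          (del1 g - actM (XX i * YY i * (XX i)⁻¹) (del1 g))
        + Pi.single (Sum.inr i)
          (actM (XX i) (del1 g) - actM (XX i * YY i * (XX i)⁻¹ * (YY i)⁻¹) (del1 g)),
        ⁅XX i, YY i⁆⟩ := by
  have hx : Phi g (xg i) = ⟨Pi.single (Sum.inl i) (del1 g), XX i⟩ := by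
    rw [xg, Phi_of]; rfl
  have hy : Phi g (yg i) = ⟨Pi.single (Sum.inr i) (del1 g), YY i⟩ := by
    rw [yg, Phi_of]; rfl
  rw [map_commutatorElement, hx, hy]
  refine W.ext ?_ rfl
  rw [comm_l]
  simp only [act_pi_single, Pi.single_sub]
  abel

lemma Phi_take (m : ℕ) :
    Phi g (((LB g).take m).prod) = ⟨∑ j ∈ Finset.range m, contr g j, PP g m⟩ := by
  induction m with
  | zero => refine W.ext (by simp) (by simp [PP])
  | succ m ih =>
    by_cases h : m < g
    · rw [LB_take_succ_lt h, map_mul, ih]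
      refine W.ext ?_ ?_
      · show (∑ j ∈ Finset.range m, contr g j) + act (PP g m) (Phi g ⁅xg ⟨m,h⟩, yg ⟨m,h⟩⁆).l
          = ∑ j ∈ Finset.range (m+1), contr g j
        rw [Finset.sum_range_succ, Phi_comm_xy]
        congr 1
        show act (PP g m) _ = contr g m
        rw [act_add, act_pi_single, act_pi_single, contr, dif_pos h]
        congr 1
        · congr 1
          rw [actM_sub, ← actM_mul]
          simp only [del1, actM_single, one_mul]
        · congr 1
          rw [actM_sub, ← actM_mul, ← actM_mul]
          simp only [del1, actM_single, one_mul]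
      · show PP g m * (Phi g ⁅xg ⟨m,h⟩, yg ⟨m,h⟩⁆).r = pg g (((LB g).take (m+1)).prod)
        rw [LB_take_succ_lt h, map_mul, Phi_comm_xy, map_commutatorElement]
        rfl
    · rw [LB_take_succ_ge (Nat.le_of_not_lt h), ih]
      refine W.ext ?_ ?_
      · show _ = ∑ j ∈ Finset.range (m+1), contr g j
        rw [Finset.sum_range_succ, contr, dif_neg h, add_zero]
      · show PP g m = pg g (((LB g).take (m+1)).prod)
        rw [LB_take_succ_ge (Nat.le_of_not_lt h)]
        rfl

noncomputable def DB (g : ℕ) : NM g := ∑ j ∈ Finset.range g, contr g j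

lemma Phi_Bg : Phi g (Bg g) = ⟨DB g, 1⟩ := by
  have h1 : Bg g = ((LB g).take g).prod := by
    rw [Bg, LB]
    congr 1
    rw [List.take_of_length_le (by simp)]
  have := Phi_take (g := g) g
  rw [← h1] at this
  rw [this]
  refine W.ext rfl ?_
  show PP g g = 1
  rw [PP, ← h1, pg_Bg]

section Quot

variable (H : Subgroup (SurfaceGroup g))

/-- push a finsupp on `G` down to the coset space `G ⧸ H`. -/
noncomputable def kapM : MM g →+ ((SurfaceGroup g ⧸ H) →₀ ℤ) :=
  Finsupp.mapDomain.addMonoidHom QuotientGroup.mk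

lemma kapM_actM {h : SurfaceGroup g} (hh : h ∈ H) (m : MM g) :
    kapM H (actM h m) = kapM H m := by
  show Finsupp.mapDomain _ (Finsupp.mapDomain _ m) = Finsupp.mapDomain _ m
  rw [← Finsupp.mapDomain_comp]
  congr 1
  funext x
  exact QuotientGroup.mk_mul_of_mem x (inv_mem hh)

@[simp] lemma kapM_single (x : SurfaceGroup g) (z : ℤ) :
    kapM H (Finsupp.single x z) = Finsupp.single (QuotientGroup.mk x : SurfaceGroup g ⧸ H) z :=
  Finsupp.mapDomain_single

lemma kap_comm (w₁ w₂ : W g) (h1 : w₁.r ∈ H) (h2 : w₂.r ∈ H) (s : Fin g ⊕ Fin g) :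
    kapM H ((⁅w₁, w₂⁆).l s) = 0 := by
  rw [comm_l]
  have expand : (w₁.l + act w₁.r w₂.l - act (w₁.r * w₂.r * w₁.r⁻¹) w₁.l
      - act (w₁.r * w₂.r * w₁.r⁻¹ * w₂.r⁻¹) w₂.l) s
      = w₁.l s + actM w₁.r (w₂.l s) - actM (w₁.r * w₂.r * w₁.r⁻¹) (w₁.l s)
        - actM (w₁.r * w₂.r * w₁.r⁻¹ * w₂.r⁻¹) (w₂.l s) := rfl
  rw [expand, map_sub, map_sub, map_add,
    kapM_actM H h1, kapM_actM H (by exact mul_mem (mul_mem h1 h2) (inv_mem h1) : w₁.r * w₂.r * w₁.r⁻¹ ∈ H),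
    kapM_actM H (by exact mul_mem (mul_mem (mul_mem h1 h2) (inv_mem h1)) (inv_mem h2) : w₁.r * w₂.r * w₁.r⁻¹ * w₂.r⁻¹ ∈ H)]
  abel

lemma kap_prod : ∀ (ws : List (W g)),
    (∀ w ∈ ws, w.r ∈ H ∧ ∀ s, kapM H (w.l s) = 0) →
    (ws.prod.r ∈ H ∧ ∀ s, kapM H (ws.prod.l s) = 0) := by
  intro ws
  induction ws with
  | nil => intro _; refine ⟨one_mem H, fun s => ?_⟩; show kapM H 0 = 0; exact map_zero _
  | cons a t ih =>
    intro hmem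
    obtain ⟨ha, hs⟩ := hmem a List.mem_cons_self
    obtain ⟨htr, htl⟩ := ih (fun w hw => hmem w (List.mem_cons_of_mem _ hw))
    rw [List.prod_cons]
    constructor
    · exact mul_mem ha htr
    · intro s
      show kapM H (a.l s + actM a.r (t.prod.l s)) = 0
      rw [map_add, hs s, kapM_actM H ha, htl s, add_zero]

/-- translation operator on the coset space finsupp. -/
noncomputable def T (γ : SurfaceGroup g) :
    ((SurfaceGroup g ⧸ H) →₀ ℤ) →+ ((SurfaceGroup g ⧸ H) →₀ ℤ) :=
  Finsupp.mapDomain.addMonoidHom (γ • ·)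

@[simp] lemma T_single (γ : SurfaceGroup g) (t : SurfaceGroup g ⧸ H) (z : ℤ) :
    T H γ (Finsupp.single t z) = Finsupp.single (γ • t) z :=
  Finsupp.mapDomain_single

lemma T_T (γ δ : SurfaceGroup g) (x : (SurfaceGroup g ⧸ H) →₀ ℤ) :
    T H γ (T H δ x) = T H (γ * δ) x := by
  show Finsupp.mapDomain _ (Finsupp.mapDomain _ x) = Finsupp.mapDomain _ x
  rw [← Finsupp.mapDomain_comp]
  congr 1
  funext t
  show γ • (δ • t) = (γ * δ) • t
  rw [mul_smul]

@[simp] lemma T_one (x : (SurfaceGroup g ⧸ H) →₀ ℤ) : T H 1 x = x := by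
  show Finsupp.mapDomain _ x = x
  have : ((1 : SurfaceGroup g) • · : SurfaceGroup g ⧸ H → SurfaceGroup g ⧸ H) = id := by
    funext t; simp
  rw [this, Finsupp.mapDomain_id]

/-- the invariance subgroup of a finsupp on the coset space. -/
noncomputable def St (a : (SurfaceGroup g ⧸ H) →₀ ℤ) : Subgroup (SurfaceGroup g) where
  carrier := {γ | T H γ a = a}
  one_mem' := T_one H a
  mul_mem' := by
    intro γ δ hγ hδ
    show T H (γ * δ) a = a
    rw [← T_T, hδ, hγ]
  inv_mem' := by
    intro γ hγ
    show T H γ⁻¹ a = a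
    conv_lhs => rw [← hγ]
    rw [T_T, inv_mul_cancel, T_one]

lemma mem_St_of_T_eq {a : (SurfaceGroup g ⧸ H) →₀ ℤ} {α β : SurfaceGroup g}
    (hab : T H α a = T H β a) : α⁻¹ * β ∈ St H a := by
  show T H (α⁻¹ * β) a = a
  rw [← T_T, ← hab, T_T, inv_mul_cancel, T_one]

end Quot

lemma PP_succ_lt {m : ℕ} (h : m < g) :
    PP g (m + 1) = PP g m * ⁅XX (⟨m, h⟩ : Fin g), YY ⟨m, h⟩⁆ := by
  show pg g _ = _
  rw [LB_take_succ_lt h, map_mul, map_commutatorElement]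
  rfl

lemma PP_succ_ge {m : ℕ} (h : g ≤ m) : PP g (m + 1) = PP g m := by
  show pg g _ = pg g _
  rw [LB_take_succ_ge h]

lemma St_all (H : Subgroup (SurfaceGroup g)) (a : (SurfaceGroup g ⧸ H) →₀ ℤ)
    (hA : ∀ j : Fin g,
      T H ((PP g ↑j)⁻¹) a = T H ((PP g ↑j * (XX j * YY j * (XX j)⁻¹))⁻¹) a)
    (hB : ∀ j : Fin g,
      T H ((PP g ↑j * XX j)⁻¹) a
        = T H ((PP g ↑j * (XX j * YY j * (XX j)⁻¹ * (YY j)⁻¹))⁻¹) a) :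
    ∀ γ : SurfaceGroup g, γ ∈ St H a := by
  have hX : ∀ j : Fin g, PP g ↑j * XX j * (PP g ↑j)⁻¹ ∈ St H a
      ∧ PP g ↑j * YY j * (PP g ↑j)⁻¹ ∈ St H a := by
    intro j
    have m1 := mem_St_of_T_eq H (hA j)
    have m2 := mem_St_of_T_eq H (hB j)
    set p := PP g ↑j
    set x := XX j
    set y := YY j
    set A := ((p)⁻¹)⁻¹ * (p * (x * y * x⁻¹))⁻¹ with hAdef
    set Bm := ((p * x)⁻¹)⁻¹ * (p * (x * y * x⁻¹ * y⁻¹))⁻¹ with hBdef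
    have exinv : p * x⁻¹ * p⁻¹ = A * Bm⁻¹ * A⁻¹ := by
      rw [hAdef, hBdef]; group
    have hxinv : p * x⁻¹ * p⁻¹ ∈ St H a := by
      rw [exinv]; exact mul_mem (mul_mem m1 (inv_mem m2)) (inv_mem m1)
    have hxmem : p * x * p⁻¹ ∈ St H a := by
      have e : p * x * p⁻¹ = (p * x⁻¹ * p⁻¹)⁻¹ := by group
      rw [e]; exact inv_mem hxinv
    have hymem : p * y * p⁻¹ ∈ St H a := by
      have e : p * y * p⁻¹ = (p * x⁻¹ * p⁻¹) * (A * Bm⁻¹)⁻¹ := by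
        rw [hAdef, hBdef]; group
      rw [e]; exact mul_mem hxinv (inv_mem (mul_mem m1 (inv_mem m2)))
    exact ⟨hxmem, hymem⟩
  have hPP : ∀ m : ℕ, PP g m ∈ St H a := by
    intro m
    induction m with
    | zero => rw [PP_zero]; exact one_mem _
    | succ m ih =>
      by_cases h : m < g
      · rw [PP_succ_lt h]
        have e : PP g m * ⁅XX (⟨m, h⟩ : Fin g), YY ⟨m, h⟩⁆
            = (PP g m * XX ⟨m, h⟩ * (PP g m)⁻¹) * (PP g m * YY ⟨m, h⟩ * (PP g m)⁻¹)
              * (PP g m * XX ⟨m, h⟩ * (PP g m)⁻¹)⁻¹ * (PP g m * YY ⟨m, h⟩ * (PP g m)⁻¹)⁻¹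
              * PP g m := by
          rw [commutatorElement_def]; group
        rw [e]
        have h1 := (hX ⟨m, h⟩).1
        have h2 := (hX ⟨m, h⟩).2
        exact mul_mem (mul_mem (mul_mem (mul_mem h1 h2) (inv_mem h1)) (inv_mem h2)) ih
      · rw [PP_succ_ge (Nat.le_of_not_lt h)]; exact ih
  have hgen : ∀ s : Fin g ⊕ Fin g, pg g (FreeGroup.of s) ∈ St H a := by
    intro s
    cases s with
    | inl j =>
      have e : pg g (FreeGroup.of (Sum.inl j)) = XX j := rfl
      rw [e]
      have e2 : XX j = (PP g ↑j)⁻¹ * (PP g ↑j * XX j * (PP g ↑j)⁻¹) * PP g ↑j := by group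
      rw [e2]
      exact mul_mem (mul_mem (inv_mem (hPP ↑j)) (hX j).1) (hPP ↑j)
    | inr j =>
      have e : pg g (FreeGroup.of (Sum.inr j)) = YY j := rfl
      rw [e]
      have e2 : YY j = (PP g ↑j)⁻¹ * (PP g ↑j * YY j * (PP g ↑j)⁻¹) * PP g ↑j := by group
      rw [e2]
      exact mul_mem (mul_mem (inv_mem (hPP ↑j)) (hX j).2) (hPP ↑j)
  -- every element of the free group maps into St
  have hfree : ∀ z : Fg g, pg g z ∈ St H a := by
    intro z
    have hcl : (Subgroup.closure (Set.range (FreeGroup.of : (Fin g ⊕ Fin g) → Fg g)))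
        ≤ Subgroup.comap (pg g) (St H a) := by
      rw [Subgroup.closure_le]
      rintro _ ⟨s, rfl⟩
      exact hgen s
    have hz : z ∈ Subgroup.closure (Set.range (FreeGroup.of : (Fin g ⊕ Fin g) → Fg g)) := by
      rw [FreeGroup.closure_range_of]; trivial
    exact hcl hz
  intro γ
  obtain ⟨z, rfl⟩ := QuotientGroup.mk'_surjective _ γ
  exact hfree z

lemma contr_apply_ne {m : ℕ} {s : Fin g ⊕ Fin g}
    (hs : ∀ hm : m < g, s ≠ Sum.inl ⟨m, hm⟩ ∧ s ≠ Sum.inr ⟨m, hm⟩) :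
    contr g m s = 0 := by
  rw [contr]
  by_cases hm : m < g
  · rw [dif_pos hm]
    rw [Pi.add_apply, Pi.single_eq_of_ne (hs hm).1, Pi.single_eq_of_ne (hs hm).2, add_zero]
  · rw [dif_neg hm]
    rfl

lemma DB_inl (j : Fin g) : DB g (Sum.inl j)
    = Finsupp.single ((PP g ↑j)⁻¹) 1
      - Finsupp.single ((PP g ↑j * (XX j * YY j * (XX j)⁻¹))⁻¹) 1 := by
  rw [DB]
  rw [Finset.sum_apply]
  rw [Finset.sum_eq_single (↑j : ℕ)]
  · rw [contr, dif_pos j.isLt]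
    rw [Pi.add_apply, Fin.eta, Pi.single_eq_same, Pi.single_eq_of_ne (by simp), add_zero]
  · intro m _ hm
    refine contr_apply_ne (fun hmg => ⟨?_, by simp⟩)
    simp only [ne_eq, Sum.inl.injEq, Fin.ext_iff]
    omega
  · intro hj
    exact absurd (Finset.mem_range.mpr j.isLt) hj

lemma DB_inr (j : Fin g) : DB g (Sum.inr j)
    = Finsupp.single ((PP g ↑j * XX j)⁻¹) 1
      - Finsupp.single ((PP g ↑j * (XX j * YY j * (XX j)⁻¹ * (YY j)⁻¹))⁻¹) 1 := by
  rw [DB]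
  rw [Finset.sum_apply]
  rw [Finset.sum_eq_single (↑j : ℕ)]
  · rw [contr, dif_pos j.isLt]
    rw [Pi.add_apply, Fin.eta, Pi.single_eq_same, Pi.single_eq_of_ne (by simp), zero_add]
  · intro m _ hm
    refine contr_apply_ne (fun hmg => ⟨by simp, ?_⟩)
    simp only [ne_eq, Sum.inr.injEq, Fin.ext_iff]
    omega
  · intro hj
    exact absurd (Finset.mem_range.mpr j.isLt) hj



/-- Let `g, l, h ≥ 1`, `w₁,…,w_l ∈ F_{2g}` and `c₁,…,c_l` integers with
`c₁+⋯+c_l ≠ 0`. If `u₁,v₁,…,u_h,v_h ∈ F_{2g}` satisfy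
`[u₁,v₁]⋯[u_h,v_h] = (B_g^{w₁})^{c₁}⋯(B_g^{w_l})^{c_l}`, then
`p(⟨u₁,v₁,…,u_h,v_h⟩)` has finite index in `π₁(S_g)` and this index is at most `l`. -/
theorem index_le_l (g l h : ℕ) (hg : 1 ≤ g) (hl : 1 ≤ l) (hh : 1 ≤ h)
    (w : Fin l → Fg g) (c : Fin l → ℤ) (hc : (∑ i, c i) ≠ 0)
    (u v : Fin h → Fg g)
    (heq : (List.ofFn fun i => ⁅u i, v i⁆).prod =
      (List.ofFn fun i : Fin l => (w i * Bg g * (w i)⁻¹) ^ c i).prod) :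
    (Subgroup.map (pg g) (Subgroup.closure (Set.range u ∪ Set.range v))).FiniteIndex ∧
    (Subgroup.map (pg g) (Subgroup.closure (Set.range u ∪ Set.range v))).index ≤ l := by
  classical
  set H := Subgroup.map (pg g) (Subgroup.closure (Set.range u ∪ Set.range v)) with hHdef
  have hu : ∀ i, pg g (u i) ∈ H := fun i =>
    ⟨u i, Subgroup.subset_closure (Or.inl ⟨i, rfl⟩), rfl⟩
  have hv : ∀ i, pg g (v i) ∈ H := fun i =>
    ⟨v i, Subgroup.subset_closure (Or.inr ⟨i, rfl⟩), rfl⟩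
  -- apply Phi to both sides
  have hPhiEq := congrArg (Phi g) heq
  rw [map_list_prod, map_list_prod, List.map_ofFn, List.map_ofFn] at hPhiEq
  have hLfun : ((Phi g) ∘ fun i => ⁅u i, v i⁆) = fun i => ⁅Phi g (u i), Phi g (v i)⁆ := by
    funext i; exact map_commutatorElement _ _ _
  have hRfun : ((Phi g) ∘ fun i : Fin l => (w i * Bg g * (w i)⁻¹) ^ c i)
      = fun i : Fin l => (⟨c i • act (pg g (w i)) (DB g), 1⟩ : W g) := by
    funext i
    show Phi g ((w i * Bg g * (w i)⁻¹) ^ c i) = _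
    rw [map_zpow, map_mul, map_mul, map_inv, Phi_Bg]
    rw [conj_central (Phi g (w i)) (DB g), central_zpow, Phi_r]
  rw [hLfun, hRfun] at hPhiEq
  have hRprod : (List.ofFn fun i : Fin l =>
      (⟨c i • act (pg g (w i)) (DB g), 1⟩ : W g)).prod
      = ⟨∑ i, c i • act (pg g (w i)) (DB g), 1⟩ := by
    rw [List.ofFn_eq_map, central_list_prod]
    congr 1
  rw [hRprod] at hPhiEq
  -- kill the left side with kapM
  have hmem : ∀ x ∈ (List.ofFn fun i => ⁅Phi g (u i), Phi g (v i)⁆),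
      x.r ∈ H ∧ ∀ s, kapM H (x.l s) = 0 := by
    intro x hx
    rw [List.mem_ofFn] at hx
    obtain ⟨i, rfl⟩ := hx
    have h1 : (Phi g (u i)).r ∈ H := by rw [Phi_r]; exact hu i
    have h2 : (Phi g (v i)).r ∈ H := by rw [Phi_r]; exact hv i
    constructor
    · rw [comm_r, commutatorElement_def]
      exact mul_mem (mul_mem (mul_mem h1 h2) (inv_mem h1)) (inv_mem h2)
    · exact kap_comm H _ _ h1 h2
  have hkapL := (kap_prod H _ hmem).2
  have key : ∀ s, kapM H ((∑ i, c i • act (pg g (w i)) (DB g)) s) = 0 := by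
    intro s
    have := hkapL s
    rw [hPhiEq] at this
    exact this
  -- the element a on the coset space
  set a : (SurfaceGroup g ⧸ H) →₀ ℤ :=
    ∑ i, c i • Finsupp.single (QuotientGroup.mk ((pg g (w i))⁻¹)) 1 with hadef
  have hTa : ∀ γ : SurfaceGroup g, T H γ a
      = ∑ i, c i • Finsupp.single
          ((QuotientGroup.mk (γ * (pg g (w i))⁻¹)) : SurfaceGroup g ⧸ H) 1 := by
    intro γ
    rw [hadef, map_sum]
    refine Finset.sum_congr rfl fun i _ => ?_
    rw [map_zsmul, T_single]
    congr 2
  have hkey2 : ∀ (α β : SurfaceGroup g) (s : Fin g ⊕ Fin g),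
      DB g s = Finsupp.single α⁻¹ 1 - Finsupp.single β⁻¹ 1 →
      T H (α⁻¹) a = T H (β⁻¹) a := by
    intro α β s hDB
    have h0 := key s
    rw [Finset.sum_apply] at h0
    have hterm : ∀ i : Fin l, (c i • act (pg g (w i)) (DB g)) s
        = c i • (Finsupp.single (α⁻¹ * (pg g (w i))⁻¹) 1
            - Finsupp.single (β⁻¹ * (pg g (w i))⁻¹) 1) := by
      intro i
      show c i • actM (pg g (w i)) (DB g s) = _
      rw [hDB, actM_sub, actM_single, actM_single]
    rw [Finset.sum_congr rfl (fun i _ => hterm i)] at h0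
    rw [hTa, hTa, ← sub_eq_zero, ← Finset.sum_sub_distrib, ← h0, map_sum]
    refine Finset.sum_congr rfl fun i _ => ?_
    rw [map_zsmul, map_sub, kapM_single, kapM_single, smul_sub]
  have hA : ∀ j : Fin g,
      T H ((PP g ↑j)⁻¹) a = T H ((PP g ↑j * (XX j * YY j * (XX j)⁻¹))⁻¹) a :=
    fun j => hkey2 _ _ (Sum.inl j) (DB_inl j)
  have hB : ∀ j : Fin g,
      T H ((PP g ↑j * XX j)⁻¹) a
        = T H ((PP g ↑j * (XX j * YY j * (XX j)⁻¹ * (YY j)⁻¹))⁻¹) a :=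
    fun j => hkey2 _ _ (Sum.inr j) (DB_inr j)
  have hall := St_all H a hA hB
  -- a is constant
  have hconst : ∀ t t' : SurfaceGroup g ⧸ H, a t = a t' := by
    intro t t'
    refine QuotientGroup.induction_on t fun x => ?_
    refine QuotientGroup.induction_on t' fun x' => ?_
    have hT : T H (x' * x⁻¹) a = a := hall (x' * x⁻¹)
    have hsmul : (x' * x⁻¹ : SurfaceGroup g) • (QuotientGroup.mk x : SurfaceGroup g ⧸ H)
        = QuotientGroup.mk x' := by
      rw [MulAction.Quotient.smul_mk, smul_eq_mul, inv_mul_cancel_right]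
    calc a (QuotientGroup.mk x)
        = (T H (x' * x⁻¹) a) ((x' * x⁻¹) • (QuotientGroup.mk x)) :=
          (Finsupp.mapDomain_apply (MulAction.injective _) a _).symm
      _ = a (QuotientGroup.mk x') := by rw [hT, hsmul]
  -- total mass of a
  have hmass : (Finsupp.liftAddHom fun _ : SurfaceGroup g ⧸ H => AddMonoidHom.id ℤ) a
      = ∑ i, c i := by
    rw [hadef, map_sum]
    refine Finset.sum_congr rfl fun i _ => ?_
    rw [map_zsmul, Finsupp.liftAddHom_apply_single]
    simp
  -- a is nowhere zero
  have hne : ∀ t : SurfaceGroup g ⧸ H, a t ≠ 0 := by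
    intro t ht
    have : a = 0 := by
      ext t'
      rw [hconst t' t, ht]; rfl
    rw [this, map_zero] at hmass
    exact hc hmass.symm
  -- Q is finite
  have hfin : (Set.univ : Set (SurfaceGroup g ⧸ H)).Finite :=
    Set.Finite.subset a.support.finite_toSet
      (fun t _ => Finsupp.mem_support_iff.mpr (hne t))
  haveI hQfin : Finite (SurfaceGroup g ⧸ H) := Set.finite_univ_iff.mp hfin
  -- surjection from Fin l
  have hsurj : Function.Surjective
      (fun i : Fin l => (QuotientGroup.mk ((pg g (w i))⁻¹) : SurfaceGroup g ⧸ H)) := by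
    intro t
    by_contra hns
    push_neg at hns
    apply hne t
    rw [hadef, Finset.sum_apply']
    refine Finset.sum_eq_zero fun i _ => ?_
    rw [Finsupp.smul_apply, Finsupp.single_eq_of_ne' (hns i), smul_zero]
  constructor
  · exact ⟨Subgroup.index_ne_zero_of_finite⟩
  · have : H.index = Nat.card (SurfaceGroup g ⧸ H) := rfl
    rw [this]
    calc Nat.card (SurfaceGroup g ⧸ H) ≤ Nat.card (Fin l) :=
          Nat.card_le_card_of_surjective _ hsurj
      _ = l := by simp


end SurfaceEq
end

section
/- Let l, c, g ≥ 1 be integers, and for an integer e ≥ 1 let h(e) denote the minimal integer satisfying h(e) ≥ l(e(2g−1)−1)/2 + 1; in particular h(1) = l(g−1) + 1. Let w₁, …, w_l ∈ F_{2g} and let p : F_{2g} → π₁(S_g) = F_{2g}/⟨⟨B_g⟩⟩ be the natural quotient homomorphism. Suppose there exist a₁, b₁, …, a_{h(1)}, b_{h(1)} ∈ F_{2g} with [a₁,b₁]⋯[a_{h(1)},b_{h(1)}] = B_g^{w₁} B_g^{w₂} ⋯ B_g^{w_l}, and let H₁ = ⟨a₁, b₁, …, a_{h(1)}, b_{h(1)}⟩.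 Then for every integer c ≥ 1 there exist u₁, v₁, …, u_{h(c)}, v_{h(c)} ∈ F_{2g} with [u₁,v₁]⋯[u_{h(c)},v_{h(c)}] = (B_g^{w₁})^c (B_g^{w₂})^c ⋯ (B_g^{w_l})^c such that the subgroup H₂ = ⟨u₁, v₁, …, u_{h(c)}, v_{h(c)}⟩ satisfies p(H₁) = p(H₂). -/
namespace SurfaceEq

open scoped commutatorElement

section Machinery

variable {G : Type*} [Group G]

/-- product of commutators over a list of pairs -/
def cval (L : List (G × G)) : G := (L.map fun q => ⁅q.1, q.2⁆).prod

@[simp] lemma cval_nil : cval ([] : List (G × G)) = 1 := rfl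

@[simp] lemma cval_cons (q : G × G) (L : List (G × G)) :
    cval (q :: L) = ⁅q.1, q.2⁆ * cval L := by simp [cval]

lemma cval_append (L₁ L₂ : List (G × G)) :
    cval (L₁ ++ L₂) = cval L₁ * cval L₂ := by simp [cval]

/-- all components lie in `S` -/
def memS (S : Subgroup G) (L : List (G × G)) : Prop := ∀ q ∈ L, q.1 ∈ S ∧ q.2 ∈ S

lemma memS_append {S : Subgroup G} {L₁ L₂ : List (G × G)} (h₁ : memS S L₁) (h₂ : memS S L₂) :
    memS S (L₁ ++ L₂) := by
  intro q hq
  rcases List.mem_append.1 hq with h | h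
  · exact h₁ q h
  · exact h₂ q h

/-- conjugate every pair -/
def cconj (t : G) (L : List (G × G)) : List (G × G) :=
  L.map fun q => (t * q.1 * t⁻¹, t * q.2 * t⁻¹)

@[simp] lemma cconj_length (t : G) (L : List (G × G)) : (cconj t L).length = L.length := by
  simp [cconj]

lemma cval_cconj (t : G) (L : List (G × G)) : cval (cconj t L) = t * cval L * t⁻¹ := by
  induction L with
  | nil => simp [cconj, cval]
  | cons q L ih =>
      simp only [cconj, List.map_cons, cval_cons] at *
      rw [ih]
      have : ⁅t * q.1 * t⁻¹, t * q.2 * t⁻¹⁆ = t * ⁅q.1, q.2⁆ * t⁻¹ := by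
        simp [commutatorElement_def]; group
      rw [this]; group

lemma memS_cconj {S : Subgroup G} {t : G} (ht : t ∈ S) {L : List (G × G)} (h : memS S L) :
    memS S (cconj t L) := by
  intro q hq
  rcases List.mem_map.1 hq with ⟨p, hp, rfl⟩
  obtain ⟨h1, h2⟩ := h p hp
  exact ⟨S.mul_mem (S.mul_mem ht h1) (S.inv_mem ht), S.mul_mem (S.mul_mem ht h2) (S.inv_mem ht)⟩

/-- product of conjugates of `T` -/
def sval (T : G) (ss : List G) : G := (ss.map fun s => s * T * s⁻¹).prod

@[simp] lemma sval_nil (T : G) : sval T ([] : List G) = 1 := rfl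

@[simp] lemma sval_cons (T : G) (s : G) (ss : List G) :
    sval T (s :: ss) = s * T * s⁻¹ * sval T ss := by simp [sval]

@[simp] lemma sval_one (T : G) : sval T ([1] : List G) = T := by simp [sval]

lemma sval_mem {S : Subgroup G} {T : G} (hT : T ∈ S) :
    ∀ {ss : List G}, (∀ s ∈ ss, s ∈ S) → sval T ss ∈ S := by
  intro ss
  induction ss with
  | nil => intro _; simpa using S.one_mem
  | cons s ss ih =>
      intro h
      rw [sval_cons]
      have hs : s ∈ S := h s (List.mem_cons_self)
      exact S.mul_mem (S.mul_mem (S.mul_mem hs hT) (S.inv_mem hs))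
        (ih fun t ht => h t (List.mem_cons_of_mem _ ht))

/-- `[x^n, x^(n-1), …, x^1]` -/
def revPows (x : G) : ℕ → List G
  | 0 => []
  | n + 1 => x ^ (n + 1) :: revPows x n

@[simp] lemma revPows_length (x : G) : ∀ n, (revPows x n).length = n
  | 0 => rfl
  | n + 1 => by simp [revPows, revPows_length x n]

lemma revPows_mem {S : Subgroup G} {x : G} (hx : x ∈ S) : ∀ n, ∀ s ∈ revPows x n, s ∈ S
  | 0 => by simp [revPows]
  | n + 1 => by
      intro s hs
      rcases List.mem_cons.1 hs with rfl | hs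
      · exact S.pow_mem hx _
      · exact revPows_mem hx n s hs

/-- pair-stream identity -/
lemma pair_stream (x y : G) : ∀ n : ℕ, x ^ (n+1) * y ^ (n+1) = sval (x * y) (revPows x n ++ [1])
  | 0 => by simp [revPows]
  | n + 1 => by
      have ih := pair_stream x y n
      simp only [revPows, List.cons_append, sval_cons, ← ih]
      have h : ∀ z : G, z ^ (n + 2) = z ^ (n+1) * z := fun z => pow_succ z (n+1)
      rw [h, h]
      group

/-- core merge lemma -/
lemma merge (S : Subgroup G) (P Q : G) (hP : P ∈ S) (hQ : Q ∈ S) :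
    ∀ (ss ts : List G), ss.length = ts.length → (∀ s ∈ ss, s ∈ S) → (∀ t ∈ ts, t ∈ S) →
    ∃ L : List (G × G), L.length = ss.length ∧ memS S L ∧
      sval P (ss ++ [1]) * sval Q (ts ++ [1]) = cval L * sval (P * Q) (ss ++ [1]) := by
  intro ss
  induction ss with
  | nil =>
      intro ts hlen _ _
      have : ts = [] := List.length_eq_zero_iff.1 hlen.symm
      subst this
      exact ⟨[], rfl, by simp [memS], by simp⟩
  | cons s ss ih =>
      intro ts hlen hss hts
      rcases ts with _ | ⟨t, ts⟩
      · simp at hlen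
      have hlen' : ss.length = ts.length := by simpa using hlen
      obtain ⟨L', hL'len, hL'S, hL'⟩ := ih ts hlen'
        (fun u hu => hss u (List.mem_cons_of_mem _ hu))
        (fun u hu => hts u (List.mem_cons_of_mem _ hu))
      set X := sval P (ss ++ [1]) with hX
      set Y := sval Q (ts ++ [1]) with hY
      have hsS : s ∈ S := hss s (List.mem_cons_self)
      have htS : t ∈ S := hts t (List.mem_cons_self)
      have hXS : X ∈ S := by
        refine sval_mem hP ?_
        intro u hu
        rcases List.mem_append.1 hu with h | h
        · exact hss u (List.mem_cons_of_mem _ h)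
        · simp at h; subst h; exact S.one_mem
      set γ : G := s⁻¹ * (X * t) with hγ
      have hγS : γ ∈ S := S.mul_mem (S.inv_mem hsS) (S.mul_mem hXS htS)
      set e : G × G := ((s * (P * Q)) * Q⁻¹ * (s * (P * Q))⁻¹, (s * (P * Q)) * γ * (s * (P * Q))⁻¹)
        with he
      have heS : e.1 ∈ S ∧ e.2 ∈ S := by
        have hsPQ : s * (P * Q) ∈ S := S.mul_mem hsS (S.mul_mem hP hQ)
        exact ⟨S.mul_mem (S.mul_mem hsPQ (S.inv_mem hQ)) (S.inv_mem hsPQ),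
               S.mul_mem (S.mul_mem hsPQ hγS) (S.inv_mem hsPQ)⟩
      refine ⟨e :: cconj (s * (P * Q) * s⁻¹) L', by simp [hL'len, cconj], ?_, ?_⟩
      · intro q hq
        rcases List.mem_cons.1 hq with rfl | hq
        · exact heS
        · rcases List.mem_map.1 hq with ⟨p, hp, rfl⟩
          obtain ⟨h1, h2⟩ := hL'S p hp
          have hc : s * (P * Q) * s⁻¹ ∈ S :=
            S.mul_mem (S.mul_mem hsS (S.mul_mem hP hQ)) (S.inv_mem hsS)
          exact ⟨S.mul_mem (S.mul_mem hc h1) (S.inv_mem hc),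
                 S.mul_mem (S.mul_mem hc h2) (S.inv_mem hc)⟩
      · have key : sval P ((s :: ss) ++ [1]) * sval Q ((t :: ts) ++ [1]) =
            s * P * s⁻¹ * (X * (t * Q * t⁻¹) * X⁻¹) * (X * Y) := by
          simp only [List.cons_append, sval_cons, ← hX, ← hY]
          group
        have expand : s * P * s⁻¹ * (X * (t * Q * t⁻¹) * X⁻¹) =
            ⁅e.1, e.2⁆ * (s * (P * Q) * s⁻¹) := by
          simp only [he, commutatorElement_def, hγ]
          group
        rw [key, hL', expand]
        simp only [List.cons_append, sval_cons, cval_cons, cval_cconj]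
        group

/-- defect list -/
def Dlist (x y : G) : ℕ → List (G × G)
  | 0 => []
  | 1 => []
  | 2 => [(x * y * x⁻¹, x)]
  | (n + 3) => cconj ((x*y)^2) (Dlist x y (n+1)) ++ [(x*y*x*y*x⁻¹, x^(n+2) * y⁻¹ * x⁻¹)]

lemma Dlist_spec (x y : G) : ∀ n, cval (Dlist x y n) = (x*y)^n * (y^n)⁻¹ * (x^n)⁻¹
  | 0 => by simp [Dlist]
  | 1 => by simp only [Dlist, cval_nil]; group
  | 2 => by
      simp [Dlist, commutatorElement_def, pow_two]
      group
  | (n + 3) => by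
      rw [Dlist, cval_append, cval_cconj, Dlist_spec x y (n+1)]
      have h : ∀ z : G, z ^ (n+3) = z^2 * z^(n+1) := fun z => by
        rw [show n + 3 = 2 + (n+1) by omega]; exact pow_add z 2 (n+1)
      rw [h, h, h]
      simp only [cval_cons, cval_nil, commutatorElement_def, pow_two]
      group

@[simp] lemma Dlist_length (x y : G) : ∀ n, (Dlist x y n).length = n / 2
  | 0 => rfl
  | 1 => rfl
  | 2 => rfl
  | (n + 3) => by
      rw [Dlist]
      simp [cconj, Dlist_length x y (n+1)]
      omega

lemma Dlist_memS {S : Subgroup G} {x y : G} (hx : x ∈ S) (hy : y ∈ S) :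
    ∀ n, memS S (Dlist x y n)
  | 0 => by simp [Dlist, memS]
  | 1 => by simp [Dlist, memS]
  | 2 => by
      intro q hq
      simp [Dlist] at hq
      subst hq
      exact ⟨S.mul_mem (S.mul_mem hx hy) (S.inv_mem hx), hx⟩
  | (n + 3) => by
      intro q hq
      rw [Dlist] at hq
      rcases List.mem_append.1 hq with h | h
      · rcases List.mem_map.1 h with ⟨p, hp, rfl⟩
        obtain ⟨h1, h2⟩ := Dlist_memS hx hy (n+1) p hp
        have hc : (x*y)^2 ∈ S := S.pow_mem (S.mul_mem hx hy) 2
        exact ⟨S.mul_mem (S.mul_mem hc h1) (S.inv_mem hc),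
               S.mul_mem (S.mul_mem hc h2) (S.inv_mem hc)⟩
      · simp at h
        subst h
        exact ⟨S.mul_mem (S.mul_mem (S.mul_mem (S.mul_mem hx hy) hx) hy) (S.inv_mem hx),
               S.mul_mem (S.mul_mem (S.pow_mem hx _) (S.inv_mem hy)) (S.inv_mem hx)⟩

lemma Dlist_last_mem (x y : G) (n : ℕ) :
    (x*y*x*y*x⁻¹, x^(n+2) * y⁻¹ * x⁻¹) ∈ Dlist x y (n+3) := by
  rw [Dlist]
  exact List.mem_append_right _ (List.mem_singleton_self _)

lemma Dlist_two_mem (x y : G) : (x * y * x⁻¹, x) ∈ Dlist x y 2 :=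
  List.mem_singleton_self _

/-- swap-reverse = inverse -/
def swapRev (L : List (G × G)) : List (G × G) := (L.map fun q => (q.2, q.1)).reverse

lemma cval_swapRev (L : List (G × G)) : cval (swapRev L) = (cval L)⁻¹ := by
  induction L with
  | nil => simp [swapRev]
  | cons q L ih =>
      simp only [swapRev, List.map_cons, List.reverse_cons, cval_cons] at *
      rw [cval_append, ih]
      simp [commutatorElement_def]
      group

@[simp] lemma swapRev_length (L : List (G × G)) : (swapRev L).length = L.length := by
  simp [swapRev]

lemma memS_swapRev {S : Subgroup G} {L : List (G × G)} (h : memS S L) : memS S (swapRev L) := by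
  intro q hq
  simp only [swapRev, List.mem_reverse, List.mem_map] at hq
  rcases hq with ⟨p, hp, rfl⟩
  exact ⟨(h p hp).2, (h p hp).1⟩

/-- Culler identity -/
lemma culler (x y : G) (n : ℕ) :
    ⁅x, y⁆ ^ n = cval (Dlist (x*y*x⁻¹) y⁻¹ n) * ⁅x, y^n⁆ := by
  rw [Dlist_spec]
  have hAB : (x*y*x⁻¹) * y⁻¹ = ⁅x, y⁆ := by simp only [commutatorElement_def]
  rw [hAB, conj_pow, inv_pow]
  simp [commutatorElement_def]
  group

/-- D-merge of two powers -/
lemma dmerge (x y : G) (n : ℕ) :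
    x ^ n * y ^ n = cval (swapRev (Dlist x y n)) * (x*y)^n := by
  rw [cval_swapRev, Dlist_spec]
  group

/-- block expansion -/
def blk (w p q : G) (c : ℕ) : List (G × G) :=
  (List.range c).map fun k => (w^k * p * (w^k)⁻¹, w^k * q * (w^k)⁻¹)

@[simp] lemma blk_length (w p q : G) (c : ℕ) : (blk w p q c).length = c := by simp [blk]

lemma blk_spec (w p q : G) : ∀ c : ℕ, cval (blk w p q c) * w^c = (⁅p,q⁆ * w)^c
  | 0 => by simp [blk]
  | (c+1) => by
      have ih := blk_spec w p q c
      rw [blk, List.range_succ, List.map_append, cval_append, pow_succ (⁅p,q⁆ * w) c, ← ih]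
      simp only [List.map_cons, List.map_nil, cval_cons, cval_nil]
      have : ⁅w^c * p * (w^c)⁻¹, w^c * q * (w^c)⁻¹⁆ = w^c * ⁅p, q⁆ * (w^c)⁻¹ := by
        simp [commutatorElement_def]; group
      rw [this, pow_succ w c]
      simp only [blk, mul_assoc, one_mul, inv_mul_cancel_left]

lemma blk_memS {S : Subgroup G} {w p q : G} (hw : w ∈ S) (hp : p ∈ S) (hq : q ∈ S) (c : ℕ) :
    memS S (blk w p q c) := by
  intro r hr
  simp only [blk, List.mem_map] at hr
  rcases hr with ⟨k, _, rfl⟩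
  have hwk : w^k ∈ S := S.pow_mem hw k
  exact ⟨S.mul_mem (S.mul_mem hwk hp) (S.inv_mem hwk),
         S.mul_mem (S.mul_mem hwk hq) (S.inv_mem hwk)⟩

lemma blk_mem0 {w p q : G} {c : ℕ} (hc : 0 < c) : (p, q) ∈ blk w p q c := by
  simp only [blk, List.mem_map]
  exact ⟨0, by simpa using hc, by simp⟩

/-- multi-block expansion -/
def bigexp (c : ℕ) (wl : G) : List (G × G) → List (G × G)
  | [] => []
  | q :: rest => blk (cval rest * wl) q.1 q.2 c ++ bigexp c wl rest

lemma bigexp_spec (c : ℕ) (wl : G) : ∀ ps : List (G × G),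
    cval (bigexp c wl ps) * wl^c = (cval ps * wl)^c
  | [] => by simp [bigexp]
  | q :: rest => by
      rw [bigexp, cval_append, mul_assoc, bigexp_spec c wl rest, blk_spec, cval_cons, mul_assoc]

@[simp] lemma bigexp_length (c : ℕ) (wl : G) : ∀ ps : List (G × G),
    (bigexp c wl ps).length = c * ps.length
  | [] => by simp [bigexp]
  | q :: rest => by
      simp [bigexp, bigexp_length c wl rest]
      ring

lemma cval_memS {S : Subgroup G} : ∀ {ps : List (G × G)}, memS S ps → cval ps ∈ S := by
  intro ps
  induction ps with
  | nil => intro _; simpa using S.one_mem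
  | cons q rest ih =>
      intro h
      rw [cval_cons]
      obtain ⟨h1, h2⟩ := h q (List.mem_cons_self)
      refine S.mul_mem ?_ (ih fun r hr => h r (List.mem_cons_of_mem _ hr))
      exact S.mul_mem (S.mul_mem (S.mul_mem h1 h2) (S.inv_mem h1)) (S.inv_mem h2)

lemma bigexp_memS {S : Subgroup G} {c : ℕ} {wl : G} (hwl : wl ∈ S) :
    ∀ {ps : List (G × G)}, memS S ps → memS S (bigexp c wl ps) := by
  intro ps
  induction ps with
  | nil => intro _; simp [bigexp, memS]
  | cons q rest ih =>
      intro h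
      have hrest : memS S rest := fun r hr => h r (List.mem_cons_of_mem _ hr)
      have hq := h q (List.mem_cons_self)
      intro r hr
      rw [bigexp] at hr
      rcases List.mem_append.1 hr with hr | hr
      · exact blk_memS (S.mul_mem (cval_memS hrest) hwl) hq.1 hq.2 c r hr
      · exact ih hrest r hr

lemma bigexp_mem {c : ℕ} {wl : G} (hc : 0 < c) :
    ∀ {ps : List (G × G)} {q : G × G}, q ∈ ps → q ∈ bigexp c wl ps := by
  intro ps
  induction ps with
  | nil => intro q h; simp at h
  | cons r rest ih =>
      intro q h
      rw [bigexp]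
      rcases List.mem_cons.1 h with rfl | h
      · exact List.mem_append_left _ (blk_mem0 hc)
      · exact List.mem_append_right _ (ih h)

/-- stream expansion -/
def sexp (ab : List (G × G)) : List G → List (G × G)
  | [] => []
  | s :: ss => cconj s ab ++ sexp ab ss

lemma sexp_spec (ab : List (G × G)) : ∀ ss : List G, cval (sexp ab ss) = sval (cval ab) ss
  | [] => by simp [sexp]
  | s :: ss => by
      rw [sexp, cval_append, sexp_spec ab ss, sval_cons, cval_cconj]

@[simp] lemma sexp_length (ab : List (G × G)) : ∀ ss : List G,
    (sexp ab ss).length = ss.length * ab.length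
  | [] => by simp [sexp]
  | s :: ss => by simp [sexp, cconj, sexp_length ab ss]; ring

lemma sexp_memS {S : Subgroup G} {ab : List (G × G)} (hab : memS S ab) :
    ∀ {ss : List G}, (∀ s ∈ ss, s ∈ S) → memS S (sexp ab ss) := by
  intro ss
  induction ss with
  | nil => intro _; simp [sexp, memS]
  | cons s ss ih =>
      intro h q hq
      rw [sexp] at hq
      rcases List.mem_append.1 hq with hq | hq
      · rcases List.mem_map.1 hq with ⟨p, hp, rfl⟩
        have hs : s ∈ S := h s (List.mem_cons_self)
        obtain ⟨h1, h2⟩ := hab p hp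
        exact ⟨S.mul_mem (S.mul_mem hs h1) (S.inv_mem hs),
               S.mul_mem (S.mul_mem hs h2) (S.inv_mem hs)⟩
      · exact ih (fun t ht => h t (List.mem_cons_of_mem _ ht)) q hq

lemma sexp_mem_one {ab : List (G × G)} {q : G × G} (hq : q ∈ ab) :
    ∀ {ss : List G}, (1 : G) ∈ ss → q ∈ sexp ab ss := by
  intro ss
  induction ss with
  | nil => intro h; simp at h
  | cons s ss ih =>
      intro h
      rw [sexp]
      rcases List.mem_cons.1 h with h1 | h1
      · refine List.mem_append_left _ ?_
        subst h1
        simp only [cconj, List.mem_map]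
        exact ⟨q, hq, by simp⟩
      · exact List.mem_append_right _ (ih h1)

/-- padding -/
lemma cval_pad (m : ℕ) (L : List (G × G)) :
    cval (List.replicate m ((1 : G), (1 : G)) ++ L) = cval L := by
  rw [cval_append]
  have : cval (List.replicate m ((1:G),(1:G))) = 1 := by
    induction m with
    | zero => simp
    | succ m ih =>
        rw [List.replicate_succ, cval_cons, ih]
        simp
  rw [this, one_mul]

lemma listToFn (L : List (G × G)) : ∀ (n : ℕ), L.length = n →
    (List.ofFn fun i : Fin n => ⁅(L.getD i ((1:G),(1:G))).1, (L.getD i ((1:G),(1:G))).2⁆).prod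
      = cval L := by
  induction L with
  | nil =>
      intro n hn
      subst hn
      simp
  | cons q L ih =>
      intro n hn
      subst hn
      rw [List.length_cons, List.ofFn_succ]
      simp only [Fin.val_zero, List.getD_cons_zero, Fin.val_succ, List.getD_cons_succ]
      rw [List.prod_cons, ih L.length rfl, cval_cons]

/-- the even scheme -/
lemma evenScheme (S : Subgroup G) (n : ℕ) : ∀ (k : ℕ) (Cs : List G), Cs.length = 2*k+2 →
    (∀ x ∈ Cs, x ∈ S) →
    ∃ (L : List (G × G)) (ss : List G), L.length = k*n ∧ ss.length = n ∧ memS S L ∧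
      (∀ s ∈ ss, s ∈ S) ∧
      (Cs.map (· ^ (n+1))).prod = cval L * sval Cs.prod (ss ++ [1]) := by
  intro k
  induction k with
  | zero =>
      intro Cs hlen hS
      obtain ⟨x, y, rfl⟩ := List.length_eq_two.1 hlen
      have hx : x ∈ S := hS x (by simp)
      refine ⟨[], revPows x n, by simp, by simp, by simp [memS], revPows_mem hx n, ?_⟩
      simp only [List.map_cons, List.map_nil, List.prod_cons, List.prod_nil, mul_one]
      rw [pair_stream x y n]
      simp
  | succ k ih =>
      intro Cs hlen hS
      rcases Cs with _ | ⟨x, Cs'⟩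
      · simp at hlen
      rcases Cs' with _ | ⟨y, rest⟩
      · simp at hlen
      have hrl : rest.length = 2*k+2 := by simp at hlen; omega
      have hx : x ∈ S := hS x (by simp)
      have hy : y ∈ S := hS y (by simp)
      have hrS : ∀ z ∈ rest, z ∈ S := fun z hz => hS z (by simp [hz])
      obtain ⟨L2, ss2, hL2len, hss2len, hL2S, hss2S, hval2⟩ := ih rest hrl hrS
      have hxyS : x * y ∈ S := S.mul_mem hx hy
      have hQS : rest.prod ∈ S := Subgroup.list_prod_mem _ (fun z hz => hrS z hz)
      obtain ⟨L3, hL3len, hL3S, hval3⟩ := merge S (x*y) rest.prod hxyS hQS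
        (revPows x n) ss2 (by simp [hss2len]) (revPows_mem hx n) hss2S
      set SP := sval (x*y) (revPows x n ++ [1]) with hSP
      have hSPS : SP ∈ S := by
        refine sval_mem hxyS ?_
        intro u hu
        rcases List.mem_append.1 hu with h | h
        · exact revPows_mem hx n u h
        · simp at h; subst h; exact S.one_mem
      refine ⟨cconj SP L2 ++ L3, revPows x n, ?_, by simp, ?_, revPows_mem hx n, ?_⟩
      · simp [hL2len, hL3len]
        ring
      · exact memS_append (memS_cconj hSPS hL2S) hL3S
      · simp only [List.map_cons, List.prod_cons]
        rw [hval2, ← mul_assoc, ← mul_assoc, pair_stream x y n, ← hSP]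
        rw [cval_append, cval_cconj]
        calc SP * cval L2 * sval rest.prod (ss2 ++ [1])
            = (SP * cval L2 * SP⁻¹) * (SP * sval rest.prod (ss2 ++ [1])) := by group
          _ = (SP * cval L2 * SP⁻¹) * (cval L3 * sval ((x*y) * rest.prod) (revPows x n ++ [1])) := by
              rw [hSP, hval3]
          _ = SP * cval L2 * SP⁻¹ * cval L3 * sval (x * (y * rest.prod)) (revPows x n ++ [1]) := by
              rw [show (x*y) * rest.prod = x * (y * rest.prod) from mul_assoc x y rest.prod]
              group

/-- the odd scheme -/
lemma oddScheme (S : Subgroup G) (n : ℕ) (k : ℕ) (Cs : List G) (hlen : Cs.length = 2*k+3)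
    (hS : ∀ x ∈ Cs, x ∈ S) :
    ∃ (L : List (G × G)) (ss : List G), L.length = (n+1)/2 + k*n ∧ ss.length = n ∧ memS S L ∧
      (∀ s ∈ ss, s ∈ S) ∧
      (Cs.map (· ^ (n+1))).prod = cval L * sval Cs.prod (ss ++ [1]) := by
  rcases Cs with _ | ⟨x, Cs'⟩
  · simp at hlen
  rcases Cs' with _ | ⟨y, rest⟩
  · simp at hlen
  have hrl : ((x*y) :: rest).length = 2*k+2 := by simp at hlen ⊢; omega
  have hx : x ∈ S := hS x (by simp)
  have hy : y ∈ S := hS y (by simp)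
  have hS' : ∀ z ∈ (x*y) :: rest, z ∈ S := by
    intro z hz
    rcases List.mem_cons.1 hz with rfl | hz
    · exact S.mul_mem hx hy
    · exact hS z (by simp [hz])
  obtain ⟨L2, ss, hL2len, hsslen, hL2S, hssS, hval2⟩ := evenScheme S n k ((x*y) :: rest) hrl hS'
  refine ⟨swapRev (Dlist x y (n+1)) ++ L2, ss, ?_, hsslen, ?_, hssS, ?_⟩
  · simp [hL2len]
  · exact memS_append (memS_swapRev (Dlist_memS hx hy (n+1))) hL2S
  · simp only [List.map_cons, List.prod_cons] at hval2 ⊢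
    rw [← mul_assoc, dmerge x y (n+1), mul_assoc, hval2, cval_append, ← mul_assoc, mul_assoc]
    rw [show (x*y) * rest.prod = x * (y * rest.prod) from mul_assoc x y rest.prod]
    rw [mul_assoc]

/-- turn a list of pairs into commutator-witness functions. -/
lemma finisher {G : Type*} [Group G] (hcN : ℕ) (S : Subgroup G)
    (Lf : List (G × G)) (hlen : Lf.length ≤ hcN) (hmem : memS S Lf) :
    ∃ u v : Fin hcN → G,
      (List.ofFn fun i => ⁅u i, v i⁆).prod = cval Lf ∧
      (∀ i, u i ∈ S) ∧ (∀ i, v i ∈ S) ∧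
      (∀ q ∈ Lf, ∃ i, u i = q.1 ∧ v i = q.2) := by
  set Lpad := List.replicate (hcN - Lf.length) ((1:G),(1:G)) ++ Lf with hLpad
  have hplen : Lpad.length = hcN := by
    simp [hLpad]
    omega
  have hpmem : memS S Lpad := by
    intro q hq
    rcases List.mem_append.1 hq with hq | hq
    · have := List.eq_of_mem_replicate hq
      subst this
      exact ⟨S.one_mem, S.one_mem⟩
    · exact hmem q hq
  refine ⟨fun i => (Lpad.getD i ((1:G),(1:G))).1, fun i => (Lpad.getD i ((1:G),(1:G))).2,
    ?_, ?_, ?_, ?_⟩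
  · rw [listToFn Lpad hcN hplen, hLpad, cval_pad]
  · intro i
    have hi : (i : ℕ) < Lpad.length := by rw [hplen]; exact i.isLt
    show (Lpad.getD (i:ℕ) ((1:G),(1:G))).1 ∈ S
    rw [List.getD_eq_getElem _ _ hi]
    exact (hpmem _ (List.getElem_mem hi)).1
  · intro i
    have hi : (i : ℕ) < Lpad.length := by rw [hplen]; exact i.isLt
    show (Lpad.getD (i:ℕ) ((1:G),(1:G))).2 ∈ S
    rw [List.getD_eq_getElem _ _ hi]
    exact (hpmem _ (List.getElem_mem hi)).2
  · intro q hq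
    have hq' : q ∈ Lpad := List.mem_append_right _ hq
    obtain ⟨j, hjq⟩ := List.mem_iff_get.1 hq'
    have hj : (j : ℕ) < hcN := by rw [← hplen]; exact j.isLt
    have hj' : ((⟨j, hj⟩ : Fin hcN) : ℕ) < Lpad.length := j.isLt
    refine ⟨⟨j, hj⟩, ?_, ?_⟩
    · show (Lpad.getD ((⟨j, hj⟩ : Fin hcN):ℕ) ((1:G),(1:G))).1 = q.1
      rw [List.getD_eq_getElem _ _ hj', ← hjq]
      simp [List.get_eq_getElem]
    · show (Lpad.getD ((⟨j, hj⟩ : Fin hcN):ℕ) ((1:G),(1:G))).2 = q.2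
      rw [List.getD_eq_getElem _ _ hj', ← hjq]
      simp [List.get_eq_getElem]

end Machinery


/-- Main theorem. -/
theorem solution_for_all_c (g l : ℕ) (hg : 1 ≤ g) (hl : 1 ≤ l)
    (w : Fin l → Fg g) (h1 : ℕ)
    (hh1 : IsLeast
      {n : ℕ | (l : ℚ) * ((1 : ℚ) * (2 * (g : ℚ) - 1) - 1) / 2 + 1 ≤ (n : ℚ)} h1)
    (a b : Fin h1 → Fg g)
    (hab : (List.ofFn fun i => ⁅a i, b i⁆).prod =
      (List.ofFn fun i : Fin l => w i * Bg g * (w i)⁻¹).prod) :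
    ∀ c : ℕ, 1 ≤ c → ∀ hc : ℕ,
      IsLeast
        {n : ℕ | (l : ℚ) * ((c : ℚ) * (2 * (g : ℚ) - 1) - 1) / 2 + 1 ≤ (n : ℚ)} hc →
      ∃ u v : Fin hc → Fg g,
        (List.ofFn fun i => ⁅u i, v i⁆).prod =
          (List.ofFn fun i : Fin l => (w i * Bg g * (w i)⁻¹) ^ c).prod ∧
        Subgroup.map (pg g) (Subgroup.closure (Set.range a ∪ Set.range b)) =
          Subgroup.map (pg g) (Subgroup.closure (Set.range u ∪ Set.range v)) := by
  intro c hc1 hcN hleast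
  classical
  rcases Nat.lt_or_ge c 2 with hc2 | hc2
  · -- ***** trivial case c = 1 *****
    have hceq : c = 1 := by omega
    subst hceq
    have hEq : hcN = h1 := by
      refine le_antisymm (hleast.2 ?_) (hh1.2 ?_)
      · have := hh1.1
        simpa using this
      · have := hleast.1
        simpa using this
    subst hEq
    refine ⟨a, b, ?_, rfl⟩
    simpa [pow_one] using hab
  -- ***** main case : c = n + 1, n ≥ 1 *****
  obtain ⟨n, rfl⟩ : ∃ n, c = n + 1 := ⟨c - 1, by omega⟩
  have hn1 : 1 ≤ n := by omega
  set H₁ : Subgroup (Fg g) := Subgroup.closure (Set.range a ∪ Set.range b) with hH₁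
  set S : Subgroup (Fg g) := Subgroup.comap (pg g) (Subgroup.map (pg g) H₁) with hSdef
  have haH : ∀ j, a j ∈ H₁ := fun j => Subgroup.subset_closure (Set.mem_union_left _ ⟨j, rfl⟩)
  have hbH : ∀ j, b j ∈ H₁ := fun j => Subgroup.subset_closure (Set.mem_union_right _ ⟨j, rfl⟩)
  have haS : ∀ j, a j ∈ S := fun j => Subgroup.mem_comap.2 (Subgroup.mem_map_of_mem _ (haH j))
  have hbS : ∀ j, b j ∈ S := fun j => Subgroup.mem_comap.2 (Subgroup.mem_map_of_mem _ (hbH j))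
  have hker : ∀ x : Fg g, pg g x = 1 → x ∈ S := by
    intro x hx
    refine Subgroup.mem_comap.2 ?_
    rw [hx]
    exact Subgroup.one_mem _
  have hCker : ∀ i : Fin l, pg g (w i * Bg g * (w i)⁻¹) = 1 := fun i =>
    (QuotientGroup.eq_one_iff _).2 (Subgroup.Normal.conj_mem Subgroup.normalClosure_normal _
      (Subgroup.subset_normalClosure (Set.mem_singleton _)) (w i))
  have hCS : ∀ i, w i * Bg g * (w i)⁻¹ ∈ S := fun i => hker _ (hCker i)
  set abL : List (Fg g × Fg g) := List.ofFn (fun j => (a j, b j)) with habLdef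
  have habLlen : abL.length = h1 := by simp [habLdef]
  have habLS : memS S abL := by
    intro q hq
    obtain ⟨j, rfl⟩ := List.mem_ofFn.1 hq
    exact ⟨haS j, hbS j⟩
  have habLval : cval abL = (List.ofFn fun i : Fin l => w i * Bg g * (w i)⁻¹).prod := by
    rw [← hab, habLdef, cval, List.map_ofFn]
    rfl
  have htar : (List.ofFn fun i : Fin l => (w i * Bg g * (w i)⁻¹) ^ (n+1)).prod =
      ((List.ofFn fun i : Fin l => w i * Bg g * (w i)⁻¹).map (· ^ (n+1))).prod := by
    rw [List.map_ofFn]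
    rfl
  have h2g : (1:ℕ) ≤ 2*g := by omega
  have Hh1 : h1 + l = l * g + 1 := by
    have hq1 : (l:ℚ) * ((1 : ℚ) * (2 * (g : ℚ) - 1) - 1) / 2 + 1 = (l:ℚ)*(g:ℚ) + 1 - l := by
      ring
    have hle : l ≤ l*g + 1 := by
      have : l ≤ l * g := Nat.le_mul_of_pos_right _ (by omega)
      omega
    have hcastsub : ((l*g + 1 - l : ℕ) : ℚ) = (l:ℚ)*(g:ℚ) + 1 - (l:ℚ) := by
      rw [Nat.cast_sub hle]
      push_cast
      ring
    have m1 : (l:ℚ)*(g:ℚ) + 1 - l ≤ (h1:ℚ) := by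
      have := hh1.1
      rw [Set.mem_setOf_eq, hq1] at this
      exact this
    have m2 : h1 ≤ l*g + 1 - l := by
      refine hh1.2 ?_
      rw [Set.mem_setOf_eq, hq1, hcastsub]
    have m1' : l*g + 1 - l ≤ h1 := by
      have : ((l*g + 1 - l : ℕ):ℚ) ≤ (h1:ℚ) := by rw [hcastsub]; exact m1
      exact_mod_cast this
    omega
  have hNb : l*((n+1)*(2*g-1)) + 2 ≤ 2*hcN + l := by
    have hq : (l:ℚ) * (((n+1:ℕ):ℚ) * (2 * (g:ℚ) - 1) - 1) / 2 + 1 ≤ (hcN:ℚ) := hleast.1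
    have hcast : ((l*((n+1)*(2*g-1)) : ℕ) : ℚ) = (l:ℚ) * (((n+1:ℕ):ℚ) * (2*(g:ℚ)-1)) := by
      rw [Nat.cast_mul, Nat.cast_mul, Nat.cast_sub h2g]
      push_cast
      ring
    have : ((l*((n+1)*(2*g-1)) : ℕ) : ℚ) + 2 ≤ 2*(hcN:ℚ) + l := by
      rw [hcast]
      nlinarith [hq]
    exact_mod_cast this
  have cvalK : ∀ (K : Subgroup (SurfaceGroup g)) (ps : List (Fg g × Fg g)),
      (∀ q ∈ ps, pg g q.1 ∈ K ∧ pg g q.2 ∈ K) → pg g (cval ps) ∈ K := by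
    intro K ps
    induction ps with
    | nil => intro _; simpa using K.one_mem
    | cons q rest ih =>
        intro h
        rw [cval_cons, map_mul]
        refine K.mul_mem ?_ (ih fun r hr => h r (List.mem_cons_of_mem _ hr))
        obtain ⟨h1', h2'⟩ := h q (List.mem_cons_self)
        simp only [commutatorElement_def, map_mul, map_inv]
        exact K.mul_mem (K.mul_mem (K.mul_mem h1' h2') (K.inv_mem h1')) (K.inv_mem h2')
  rcases Nat.lt_or_ge l 2 with hl2 | hl2
  · -- ***** case l = 1 *****
    have hleq : l = 1 := by omega
    subst hleq
    obtain ⟨m, hgm⟩ : ∃ m, g = m + 1 := ⟨g - 1, by omega⟩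
    subst hgm
    have hh1m : h1 = m + 1 := by omega
    subst hh1m
    set x : Fg (m+1) := a (Fin.last m) with hx
    set y : Fg (m+1) := b (Fin.last m) with hy
    set ps : List (Fg (m+1) × Fg (m+1)) :=
      List.ofFn (fun i : Fin m => (a i.castSucc, b i.castSucc)) with hps
    have habsplit : abL = ps ++ [(x, y)] := by
      rw [habLdef, List.ofFn_succ', List.concat_eq_append]
    set γ : Fg (m+1) := ⁅x, y⁆ with hγ
    set A : Fg (m+1) := x * y * x⁻¹ with hA
    set B : Fg (m+1) := y⁻¹ with hB
    set Lf : List (Fg (m+1) × Fg (m+1)) :=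
      bigexp (n+1) γ ps ++ (Dlist A B (n+1) ++ [(x, y^(n+1))]) with hLf
    have hxS : x ∈ S := haS _
    have hyS : y ∈ S := hbS _
    have hγS : γ ∈ S := S.mul_mem (S.mul_mem (S.mul_mem hxS hyS) (S.inv_mem hxS)) (S.inv_mem hyS)
    have hAS : A ∈ S := S.mul_mem (S.mul_mem hxS hyS) (S.inv_mem hxS)
    have hBS : B ∈ S := S.inv_mem hyS
    have hpsS : memS S ps := by
      intro q hq
      obtain ⟨j, rfl⟩ := List.mem_ofFn.1 hq
      exact ⟨haS _, hbS _⟩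
    have hLfS : memS S Lf := by
      refine memS_append (bigexp_memS hγS hpsS) (memS_append (Dlist_memS hAS hBS (n+1)) ?_)
      intro q hq
      simp only [List.mem_singleton] at hq
      subst hq
      exact ⟨hxS, S.pow_mem hyS _⟩
    have habL1 : cval abL = w 0 * Bg (m+1) * (w 0)⁻¹ := by
      rw [habLval]
      simp [List.ofFn_succ]
    have habLps : cval abL = cval ps * γ := by
      rw [habsplit, cval_append]
      simp [hγ]
    have hculler : cval (Dlist A B (n+1)) * ⁅x, y^(n+1)⁆ = γ^(n+1) := by
      rw [hA, hB, hγ]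
      exact (culler x y (n+1)).symm
    have hval : cval Lf = (cval abL) ^ (n+1) := by
      rw [hLf, cval_append, cval_append]
      have h1' : cval [((x : Fg (m+1)), y^(n+1))] = ⁅x, y^(n+1)⁆ := by simp
      rw [h1', hculler, habLps]
      exact bigexp_spec (n+1) γ ps
    have hLflen : Lf.length = (n+1)*m + ((n+1)/2 + 1) := by
      simp [hLf, hps]
    have hfit : Lf.length ≤ hcN := by
      rw [hLflen]
      have key : (n+1)*(2*(m+1)-1) = 2*((n+1)*m) + (n+1) := by
        rw [show 2*(m+1)-1 = 2*m+1 from by omega]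
        ring
      rw [one_mul, key] at hNb
      generalize hAt : (n+1)*m = At at hNb ⊢
      omega
    obtain ⟨u, v, hprod, huS, hvS, hpres⟩ := finisher hcN S Lf hfit hLfS
    refine ⟨u, v, ?_, ?_⟩
    · rw [hprod, hval, habL1]
      simp [List.ofFn_succ]
    · -- subgroup equality
      set K := Subgroup.map (pg (m+1)) (Subgroup.closure (Set.range u ∪ Set.range v)) with hK
      have hKtrans : ∀ q ∈ Lf, pg (m+1) q.1 ∈ K ∧ pg (m+1) q.2 ∈ K := by
        intro q hq
        obtain ⟨i, hui, hvi⟩ := hpres q hq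
        constructor
        · rw [← hui]
          exact Subgroup.mem_map_of_mem _ (Subgroup.subset_closure (Set.mem_union_left _ ⟨i, rfl⟩))
        · rw [← hvi]
          exact Subgroup.mem_map_of_mem _ (Subgroup.subset_closure (Set.mem_union_right _ ⟨i, rfl⟩))
      have hcast : ∀ i : Fin m, pg (m+1) (a i.castSucc) ∈ K ∧ pg (m+1) (b i.castSucc) ∈ K := by
        intro i
        have hmem : ((a i.castSucc, b i.castSucc) : _ × _) ∈ Lf := by
          rw [hLf]
          refine List.mem_append_left _ (bigexp_mem (by omega) ?_)
          rw [hps]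
          exact List.mem_ofFn.2 ⟨i, rfl⟩
        exact hKtrans _ hmem
      have hxK : pg (m+1) x ∈ K ∧ pg (m+1) (y^(n+1)) ∈ K := by
        have hmem : ((x, y^(n+1)) : _ × _) ∈ Lf := by
          rw [hLf]
          exact List.mem_append_right _ (List.mem_append_right _ (List.mem_singleton_self _))
        exact hKtrans _ hmem
      have hγK : pg (m+1) γ ∈ K := by
        have h1' : pg (m+1) (cval abL) = 1 := by
          rw [habL1]
          exact hCker 0
        have h2' : pg (m+1) (cval ps) * pg (m+1) γ = 1 := by
          rw [← map_mul, ← habLps]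
          exact h1'
        have h3' : pg (m+1) (cval ps) ∈ K := by
          refine cvalK K ps ?_
          intro q hq
          rw [hps] at hq
          obtain ⟨i, rfl⟩ := List.mem_ofFn.1 hq
          exact hcast i
        have h4' : pg (m+1) γ = (pg (m+1) (cval ps))⁻¹ :=
          (inv_eq_of_mul_eq_one_right h2').symm
        rw [h4']
        exact K.inv_mem h3'
      have hyK : pg (m+1) y ∈ K := by
        rcases Nat.lt_or_ge n 2 with hn2 | hn2
        · have hn1' : n = 1 := by omega
          subst hn1'
          have hmem : ((A*B*A⁻¹, A) : _ × _) ∈ Lf := by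
            rw [hLf]
            exact List.mem_append_right _ (List.mem_append_left _ (Dlist_two_mem A B))
          have hAK : pg (m+1) A ∈ K := (hKtrans _ hmem).2
          have hyA : y = x⁻¹ * A * x := by
            rw [hA]
            group
          rw [hyA]
          simp only [map_mul, map_inv]
          exact K.mul_mem (K.mul_mem (K.inv_mem hxK.1) hAK) hxK.1
        · obtain ⟨n', rfl⟩ : ∃ n', n = n' + 2 := ⟨n - 2, by omega⟩
          have hmem : ((A*B*A*B*A⁻¹, A^(n'+2) * B⁻¹ * A⁻¹) : _ × _) ∈ Lf := by
            rw [hLf]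
            exact List.mem_append_right _ (List.mem_append_left _ (Dlist_last_mem A B n'))
          have hVK : pg (m+1) (A^(n'+2) * B⁻¹ * A⁻¹) ∈ K := (hKtrans _ hmem).2
          have hident : x⁻¹ * (A^(n'+2) * B⁻¹ * A⁻¹) * γ * x = y^(n'+2) := by
            rw [hA, hB, hγ, conj_pow]
            simp only [commutatorElement_def]
            group
          have hynK : pg (m+1) (y^(n'+2)) ∈ K := by
            rw [← hident]
            simp only [map_mul, map_inv]
            exact K.mul_mem (K.mul_mem (K.mul_mem (K.inv_mem hxK.1) hVK) hγK) hxK.1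
          have hstep : pg (m+1) (y^(n'+2)) * pg (m+1) y ∈ K := by
            rw [← map_mul, ← pow_succ y (n'+2)]
            exact hxK.2
          have := K.mul_mem (K.inv_mem hynK) hstep
          simpa using this
      have hpa : ∀ j : Fin (m+1), pg (m+1) (a j) ∈ K ∧ pg (m+1) (b j) ∈ K := by
        intro j
        refine Fin.lastCases ?_ ?_ j
        · exact ⟨hxK.1, hyK⟩
        · exact hcast
      refine le_antisymm ?_ ?_
      · rw [hH₁] at *
        rw [MonoidHom.map_closure]
        refine (Subgroup.closure_le _).2 ?_
        rintro z ⟨s, hs, rfl⟩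
        rcases hs with ⟨j, rfl⟩ | ⟨j, rfl⟩
        · exact (hpa j).1
        · exact (hpa j).2
      · rw [hK, MonoidHom.map_closure]
        refine (Subgroup.closure_le _).2 ?_
        rintro z ⟨s, hs, rfl⟩
        have hsS : s ∈ S := by
          rcases hs with ⟨i, rfl⟩ | ⟨i, rfl⟩
          · exact huS i
          · exact hvS i
        exact Subgroup.mem_comap.1 hsS
  · -- ***** case l ≥ 2 *****
    set Cs : List (Fg g) := List.ofFn (fun i : Fin l => w i * Bg g * (w i)⁻¹) with hCs
    have hCslen : Cs.length = l := by simp [hCs]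
    have hCsS : ∀ z ∈ Cs, z ∈ S := by
      intro z hz
      rw [hCs] at hz
      obtain ⟨i, rfl⟩ := List.mem_ofFn.1 hz
      exact hCS i
    have common : ∀ (Lsch : List (Fg g × Fg g)) (ss : List (Fg g)),
        memS S Lsch → (∀ s ∈ ss, s ∈ S) →
        (Cs.map (· ^ (n+1))).prod = cval Lsch * sval Cs.prod (ss ++ [1]) →
        Lsch.length + (ss.length + 1) * h1 ≤ hcN →
        ∃ u v : Fin hcN → Fg g,
          (List.ofFn fun i => ⁅u i, v i⁆).prod =
            (List.ofFn fun i : Fin l => (w i * Bg g * (w i)⁻¹) ^ (n+1)).prod ∧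
          Subgroup.map (pg g) (Subgroup.closure (Set.range a ∪ Set.range b)) =
            Subgroup.map (pg g) (Subgroup.closure (Set.range u ∪ Set.range v)) := by
      intro Lsch ss hLschS hssS hschval hfit2
      set Lf : List (Fg g × Fg g) := Lsch ++ sexp abL (ss ++ [1]) with hLf
      have hssS' : ∀ s ∈ ss ++ [1], s ∈ S := by
        intro s hs
        rcases List.mem_append.1 hs with h | h
        · exact hssS s h
        · simp at h
          subst h
          exact S.one_mem
      have hLfS : memS S Lf := memS_append hLschS (sexp_memS habLS hssS')
      have hLflen : Lf.length = Lsch.length + (ss.length + 1) * h1 := by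
        simp [hLf, habLlen]
      have hval : cval Lf = (Cs.map (· ^ (n+1))).prod := by
        rw [hLf, cval_append, sexp_spec, habLval]
        rw [show (List.ofFn fun i : Fin l => w i * Bg g * (w i)⁻¹).prod = Cs.prod from by
          rw [hCs]]
        exact hschval.symm
      have hfit : Lf.length ≤ hcN := by
        rw [hLflen]
        exact hfit2
      obtain ⟨u, v, hprod, huS, hvS, hpres⟩ := finisher hcN S Lf hfit hLfS
      refine ⟨u, v, ?_, ?_⟩
      · rw [hprod, hval, htar]
      · set K := Subgroup.map (pg g) (Subgroup.closure (Set.range u ∪ Set.range v)) with hK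
        have hKtrans : ∀ q ∈ Lf, pg g q.1 ∈ K ∧ pg g q.2 ∈ K := by
          intro q hq
          obtain ⟨i, hui, hvi⟩ := hpres q hq
          constructor
          · rw [← hui]
            exact Subgroup.mem_map_of_mem _
              (Subgroup.subset_closure (Set.mem_union_left _ ⟨i, rfl⟩))
          · rw [← hvi]
            exact Subgroup.mem_map_of_mem _
              (Subgroup.subset_closure (Set.mem_union_right _ ⟨i, rfl⟩))
        have hpa : ∀ j : Fin h1, pg g (a j) ∈ K ∧ pg g (b j) ∈ K := by
          intro j
          have hmem : ((a j, b j) : _ × _) ∈ Lf := by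
            rw [hLf]
            refine List.mem_append_right _ ?_
            refine sexp_mem_one ?_ ?_
            · rw [habLdef]
              exact List.mem_ofFn.2 ⟨j, rfl⟩
            · exact List.mem_append_right _ (List.mem_singleton_self _)
          exact hKtrans _ hmem
        refine le_antisymm ?_ ?_
        · rw [hH₁] at *
          rw [MonoidHom.map_closure]
          refine (Subgroup.closure_le _).2 ?_
          rintro z ⟨s, hs, rfl⟩
          rcases hs with ⟨j, rfl⟩ | ⟨j, rfl⟩
          · exact (hpa j).1
          · exact (hpa j).2
        · rw [hK, MonoidHom.map_closure]
          refine (Subgroup.closure_le _).2 ?_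
          rintro z ⟨s, hs, rfl⟩
          have hsS : s ∈ S := by
            rcases hs with ⟨i, rfl⟩ | ⟨i, rfl⟩
            · exact huS i
            · exact hvS i
          exact Subgroup.mem_comap.1 hsS
    rcases Nat.even_or_odd l with ⟨r, hr⟩ | ⟨r, hr⟩
    · -- l even
      obtain ⟨k, rfl⟩ : ∃ k, l = 2*k+2 := ⟨r - 1, by omega⟩
      obtain ⟨Lsch, ss, hLl, hssl, hLS, hssS, hschval⟩ := evenScheme S n k Cs (by omega) hCsS
      refine common Lsch ss hLS hssS hschval ?_
      rw [hLl, hssl]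
      have key : 2*(k*n) + 2*((n+1)*h1) + (2*k+2) = (2*k+2)*((n+1)*(2*g-1)) + 2 := by
        have hz1 : (h1:ℤ) + (2*(k:ℤ)+2) = (2*(k:ℤ)+2)*(g:ℤ) + 1 := by exact_mod_cast Hh1
        zify [h2g]
        linear_combination (2*((n:ℤ)+1)) * hz1
      generalize hAt : k*n = At at key ⊢
      generalize hBt : (n+1)*h1 = Bt at key ⊢
      generalize hDt : (2*k+2)*((n+1)*(2*g-1)) = Dt at key hNb ⊢
      omega
    · -- l odd (and ≥ 3)
      obtain ⟨k, rfl⟩ : ∃ k, l = 2*k+3 := ⟨r - 1, by omega⟩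
      obtain ⟨Lsch, ss, hLl, hssl, hLS, hssS, hschval⟩ := oddScheme S n k Cs (by omega) hCsS
      refine common Lsch ss hLS hssS hschval ?_
      rw [hLl, hssl]
      have key : 2*(k*n) + 2*((n+1)*h1) + (n+1) + (2*k+3) = (2*k+3)*((n+1)*(2*g-1)) + 3 := by
        have hz1 : (h1:ℤ) + (2*(k:ℤ)+3) = (2*(k:ℤ)+3)*(g:ℤ) + 1 := by exact_mod_cast Hh1
        zify [h2g]
        linear_combination (2*((n:ℤ)+1)) * hz1
      generalize hAt : k*n = At at key ⊢
      generalize hBt : (n+1)*h1 = Bt at key ⊢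
      generalize hDt : (2*k+3)*((n+1)*(2*g-1)) = Dt at key hNb ⊢
      omega

end SurfaceEq
end

section
/- Let G be a group, let a, b ∈ G, and let n ≥ 1 be an integer. Then [a,b]^n can be expressed as a product of at most ⌈(n+1)/2⌉ commutators of elements of G. -/
open scoped commutatorElement

section CommutatorPowAux

variable {G : Type*} [Group G]

/-- `g` is a product of `m` commutators, in the `List.ofFn` form used by the theorem. -/
private def IsProdComm (m : ℕ) (g : G) : Prop :=
  ∃ u v : Fin m → G, g = (List.ofFn fun i => ⁅u i, v i⁆).prod

private lemma isProdComm_single (x y : G) : IsProdComm 1 ⁅x, y⁆ := by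
  refine ⟨fun _ => x, fun _ => y, ?_⟩
  simp

private lemma isProdComm_cons {m : ℕ} {w : G} (x y : G) (h : IsProdComm m w) :
    IsProdComm (m + 1) (⁅x, y⁆ * w) := by
  obtain ⟨u, v, rfl⟩ := h
  refine ⟨Fin.cons x u, Fin.cons y v, ?_⟩
  rw [List.ofFn_succ]
  simp

private lemma isProdComm_conj {m : ℕ} {w : G} (g : G) (h : IsProdComm m w) :
    IsProdComm m (g * w * g⁻¹) := by
  obtain ⟨u, v, rfl⟩ := h
  refine ⟨fun i => g * u i * g⁻¹, fun i => g * v i * g⁻¹, ?_⟩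
  let φ : G →* G :=
    { toFun := fun x => g * x * g⁻¹
      map_one' := by group
      map_mul' := by intro x y; group }
  have h1 : (fun i : Fin m => ⁅g * u i * g⁻¹, g * v i * g⁻¹⁆)
      = fun i : Fin m => φ ⁅u i, v i⁆ := by
    funext i
    simp only [φ, commutatorElement_def, MonoidHom.coe_mk, OneHom.coe_mk]
    group
  rw [h1,
    show (List.ofFn fun i => φ ⁅u i, v i⁆) = (List.ofFn fun i => ⁅u i, v i⁆).map φ from
      List.map_ofFn.symm, ← map_list_prod φ]
  rfl

/-- The main family of elements: `O e m = c^e * a*b*a^-(4m+1)*b⁻¹ * c^e * a^(4m)`. -/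
private def Oel (a b : G) (e m : ℕ) : G :=
  ⁅a, b⁆ ^ e * (a * b * (a ^ (4*m+1))⁻¹ * b⁻¹) * ⁅a, b⁆ ^ e * a ^ (4*m)

/-- Terminal case `e = 0`: a single commutator. -/
private lemma Oel_zero (a b : G) (m : ℕ) :
    Oel a b 0 m =
      ⁅a * b * (a ^ (4*m+1))⁻¹ * b⁻¹ * a ^ (4*m+1) * b * a ^ (4*m+1) * b⁻¹ * a⁻¹,
       a * b * (a ^ (4*m+1))⁻¹ * b * a ^ (4*m+1) * b⁻¹ * a⁻¹⁆ := by
  simp only [Oel, commutatorElement_def]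
  group

/-- Terminal case `e = 1`: two commutators. -/
private lemma Oel_one (a b : G) (m : ℕ) :
    Oel a b 1 m =
      ⁅⁅a, b⁆ * a * b * (a ^ (4*m+1))⁻¹ * b⁻¹ * ⁅a, b⁆ * a ^ (4*m+1) * b * a ^ (4*m+1) * b⁻¹ *
          a⁻¹ * (a ^ (4*m+2))⁻¹ * ⁅a, b⁆⁻¹ * b * a ^ (4*m+1) * b⁻¹ * a⁻¹ * ⁅a, b⁆⁻¹,
       ⁅a, b⁆ * a * b * (a ^ (4*m+1))⁻¹ * b⁻¹ * ⁅a, b⁆ * a ^ (4*m+3) * b * a⁻¹ * b⁻¹ * ⁅a, b⁆⁻¹ *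
          a * b * (a ^ (4*m+2))⁻¹ * b⁻¹ * (a ^ (4*m+2))⁻¹ * ⁅a, b⁆⁻¹ * b * a ^ (4*m+1) * b⁻¹ *
          a⁻¹ * ⁅a, b⁆⁻¹⁆ *
      ((⁅a, b⁆ * a * b * (a ^ (4*m+1))⁻¹ * b⁻¹ * a * b) *
        ⁅a⁻¹ * b⁻¹ * a ^ (4*m+3) * b * (a ^ (4*m+3))⁻¹ * b⁻¹ * a ^ (4*m+3) * b⁻¹ *
            (a ^ (4*m+3))⁻¹ * b * a,
         a⁻¹ * b⁻¹ * a ^ (4*m+3) * b * a ^ (4*m+3) * b⁻¹ * (a ^ (4*m+3))⁻¹ * b * a⁆ *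
        (⁅a, b⁆ * a * b * (a ^ (4*m+1))⁻¹ * b⁻¹ * a * b)⁻¹) := by
  simp only [Oel, commutatorElement_def]
  group

set_option maxHeartbeats 4000000 in
/-- The inductive step: `O (e+2) m` = commutator * conj (commutator * conj (O e (m+1))),
stated with `t` generalizing `⁅a,b⁆ ^ e`. -/
private lemma Oel_step_general (a b t : G) (m : ℕ) :
    (⁅a, b⁆ * (⁅a, b⁆ * t)) * (a * b * (a ^ (4*m+1))⁻¹ * b⁻¹) * (⁅a, b⁆ * (⁅a, b⁆ * t)) * a ^ (4*m) =
      ⁅(⁅a, b⁆ * (⁅a, b⁆ * t)) * a * b * (a ^ (4*m+1))⁻¹ * b⁻¹ * (⁅a, b⁆ * (⁅a, b⁆ * t)) * a ^ (4*m+1) * b *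
          a ^ (4*m+1) * b⁻¹ * a⁻¹ * t⁻¹ * ⁅a, b⁆⁻¹ * (a ^ (4*m+2))⁻¹ * t⁻¹ * ⁅a, b⁆⁻¹ *
          ⁅a, b⁆⁻¹ * b * a ^ (4*m+1) * b⁻¹ * a⁻¹ * t⁻¹ * ⁅a, b⁆⁻¹ * ⁅a, b⁆⁻¹,
       (⁅a, b⁆ * (⁅a, b⁆ * t)) * a * b * (a ^ (4*m+1))⁻¹ * b⁻¹ * (⁅a, b⁆ * (⁅a, b⁆ * t)) * a ^ (4*m+3) * b *
          a⁻¹ * b⁻¹ * t * a * b * (a ^ (4*m+2))⁻¹ * b⁻¹ * (a ^ (4*m+2))⁻¹ * t⁻¹ * ⁅a, b⁆⁻¹ *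
          ⁅a, b⁆⁻¹ * b * a ^ (4*m+1) * b⁻¹ * a⁻¹ * t⁻¹ * ⁅a, b⁆⁻¹ * ⁅a, b⁆⁻¹⁆ *
      (((⁅a, b⁆ * (⁅a, b⁆ * t)) * a * b * (a ^ (4*m+1))⁻¹ * b⁻¹ * a * b) *
        (⁅a⁻¹ * b⁻¹ * (⁅a, b⁆ * t) * a ^ (4*m+3) * b * a⁻¹ * b⁻¹ * t * a * b *
              (a ^ (4*m+3))⁻¹ * b⁻¹ * (a ^ (4*m+3))⁻¹ * t⁻¹ * b * a ^ (4*m+5) * b⁻¹ * a⁻¹ *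
              t⁻¹ * ⁅a, b⁆⁻¹ * (a ^ (4*m+2))⁻¹ * t⁻¹ * ⁅a, b⁆⁻¹ * b * a,
           a⁻¹ * b⁻¹ * (⁅a, b⁆ * t) * a ^ (4*m+3) * b * a⁻¹ * b⁻¹ * t * a * b *
              (a ^ (4*m+5))⁻¹ * b⁻¹ * t * a ^ (4*m+4) * b * a ^ (4*m+4) * b⁻¹ * a⁻¹ * t⁻¹ *
              ⁅a, b⁆⁻¹ * (a ^ (4*m+2))⁻¹ * t⁻¹ * ⁅a, b⁆⁻¹ * b * a⁆ *
          ((a⁻¹ * b⁻¹ * (⁅a, b⁆ * t) * a ^ (4*m+3) * b * a⁻¹ * b⁻¹) *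
            (t * (a * b * (a ^ (4*(m+1)+1))⁻¹ * b⁻¹) * t * a ^ (4*(m+1))) *
            (a⁻¹ * b⁻¹ * (⁅a, b⁆ * t) * a ^ (4*m+3) * b * a⁻¹ * b⁻¹)⁻¹)) *
        ((⁅a, b⁆ * (⁅a, b⁆ * t)) * a * b * (a ^ (4*m+1))⁻¹ * b⁻¹ * a * b)⁻¹) := by
  simp only [commutatorElement_def]
  group

private lemma Oel_isProdComm (a b : G) : ∀ e m : ℕ, IsProdComm (e + 1) (Oel a b e m) := by
  intro e
  induction e using Nat.strong_induction_on with
  | _ e ih =>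
    match e with
    | 0 =>
      intro m
      rw [Oel_zero]
      exact isProdComm_single _ _
    | 1 =>
      intro m
      rw [Oel_one]
      exact isProdComm_cons _ _ (isProdComm_conj _ (isProdComm_single _ _))
    | (e + 2) =>
      intro m
      have key := Oel_step_general a b (⁅a, b⁆ ^ e) m
      have hO : Oel a b (e + 2) m =
          (⁅a, b⁆ * (⁅a, b⁆ * ⁅a, b⁆ ^ e)) * (a * b * (a ^ (4*m+1))⁻¹ * b⁻¹) *
            (⁅a, b⁆ * (⁅a, b⁆ * ⁅a, b⁆ ^ e)) * a ^ (4*m) := by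
        simp only [Oel, pow_succ']
      have hO' : (⁅a, b⁆ ^ e) * (a * b * (a ^ (4*(m+1)+1))⁻¹ * b⁻¹) *
          (⁅a, b⁆ ^ e) * a ^ (4*(m+1)) = Oel a b e (m+1) := rfl
      rw [hO', ] at key
      rw [hO, key]
      exact isProdComm_cons _ _ (isProdComm_conj _
        (isProdComm_cons _ _ (isProdComm_conj _ (ih e (by omega) (m+1)))))

private lemma Oel_eq_pow (a b : G) (k : ℕ) : Oel a b k 0 = ⁅a, b⁆ ^ (2 * k + 1) := by
  have h : Oel a b k 0 = ⁅a, b⁆ ^ k * ⁅a, b⁆ * ⁅a, b⁆ ^ k := by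
    simp only [Oel, commutatorElement_def]
    norm_num
  rw [h, ← pow_succ, ← pow_add]
  congr 1
  omega

end CommutatorPowAux

/-- Let `G` be a group, `a b : G` and `n ≥ 1`. Then `[a,b]^n` is a product of at most
`⌈(n+1)/2⌉` commutators of elements of `G`.  (In natural numbers, `⌈(n+1)/2⌉ = (n+2)/2`.) -/
theorem commutator_pow_is_product_of_commutators {G : Type*} [Group G] (a b : G)
    (n : ℕ) (hn : 1 ≤ n) :
    ∃ m : ℕ, m ≤ (n + 2) / 2 ∧ ∃ u v : Fin m → G,
      ⁅a, b⁆ ^ n = (List.ofFn fun i => ⁅u i, v i⁆).prod := by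
  rcases Nat.even_or_odd n with he | ho
  · -- n even, n = 2k+2
    obtain ⟨k, hk⟩ := he
    have hk' : n = 2 * (k - 1) + 1 + 1 := by omega
    have h1 : IsProdComm (k - 1 + 1) (Oel a b (k - 1) 0) := Oel_isProdComm a b (k - 1) 0
    have h2 : ⁅a, b⁆ ^ n = ⁅a, b⁆ * Oel a b (k - 1) 0 := by
      rw [Oel_eq_pow, ← pow_succ', hk']
    have h3 : IsProdComm (k - 1 + 1 + 1) (⁅a, b⁆ ^ n) := by
      rw [h2]
      exact isProdComm_cons _ _ h1
    exact ⟨k - 1 + 1 + 1, by omega, h3⟩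
  · obtain ⟨k, hk⟩ := ho
    have h1 : IsProdComm (k + 1) (Oel a b k 0) := Oel_isProdComm a b k 0
    have h2 : ⁅a, b⁆ ^ n = Oel a b k 0 := by rw [Oel_eq_pow, hk]
    exact ⟨k + 1, by omega, h2 ▸ h1⟩
end

section
/- Let l ≥ 1 and let w₁, …, w_l be pairwise distinct elements of F₂. If u, v ∈ F₂ satisfy [u,v] = B^{w₁} B^{w₂} ⋯ B^{w_l}, then the index of the subgroup p(⟨u,v⟩) in F₂/[F₂,F₂] is exactly l. -/
open scoped commutatorElement

/-! Auxiliary: the integer Heisenberg group. -/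

@[ext] structure Heis where
  a : ℤ
  b : ℤ
  c : ℤ

namespace Heis

instance : Mul Heis := ⟨fun g h => ⟨g.a + h.a, g.b + h.b, g.c + h.c + g.a * h.b⟩⟩
instance : One Heis := ⟨⟨0, 0, 0⟩⟩
instance : Inv Heis := ⟨fun g => ⟨-g.a, -g.b, -g.c + g.a * g.b⟩⟩

@[simp] lemma mul_a (g h : Heis) : (g * h).a = g.a + h.a := rfl
@[simp] lemma mul_b (g h : Heis) : (g * h).b = g.b + h.b := rfl
@[simp] lemma mul_c (g h : Heis) : (g * h).c = g.c + h.c + g.a * h.b := rfl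
@[simp] lemma one_a : (1 : Heis).a = 0 := rfl
@[simp] lemma one_b : (1 : Heis).b = 0 := rfl
@[simp] lemma one_c : (1 : Heis).c = 0 := rfl
@[simp] lemma inv_a (g : Heis) : (g⁻¹).a = -g.a := rfl
@[simp] lemma inv_b (g : Heis) : (g⁻¹).b = -g.b := rfl
@[simp] lemma inv_c (g : Heis) : (g⁻¹).c = -g.c + g.a * g.b := rfl

instance : Group Heis where
  mul_assoc g h k := by ext <;> simp <;> ring
  one_mul g := by ext <;> simp
  mul_one g := by ext <;> simp
  inv_mul_cancel g := by ext <;> simp <;> ring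

lemma central (g : Heis) : g * ⟨0, 0, 1⟩ * g⁻¹ = ⟨0, 0, 1⟩ := by
  ext <;> (simp; try ring)

lemma z_pow (n : ℕ) : (⟨0, 0, 1⟩ : Heis) ^ n = ⟨0, 0, (n : ℤ)⟩ := by
  induction n with
  | zero => ext <;> simp
  | succ k ih => rw [pow_succ, ih]; ext <;> simp

lemma commutator_c (g h : Heis) : ⁅g, h⁆ = ⟨0, 0, g.a * h.b - h.a * g.b⟩ := by
  ext <;> simp [commutatorElement_def] <;> ring

end Heis

/-! Auxiliary: the index of the span of two vectors in `ℤ²` is the absolute value of their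
determinant. -/

open Submodule in
lemma index_span_pair (v1 v2 : Fin 2 → ℤ)
    (hdet : v1 0 * v2 1 - v1 1 * v2 0 ≠ 0) :
    (Submodule.span ℤ ({v1, v2} : Set (Fin 2 → ℤ))).toAddSubgroup.index
      = (v1 0 * v2 1 - v1 1 * v2 0).natAbs := by
  classical
  have hrange : Set.range ![v1, v2] = {v1, v2} := by
    ext z
    constructor
    · rintro ⟨i, rfl⟩; fin_cases i <;> simp
    · rintro (rfl | rfl)
      exacts [⟨0, rfl⟩, ⟨1, rfl⟩]
  have hli : LinearIndependent ℤ ![v1, v2] := by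
    rw [LinearIndependent.pair_iff]
    intro s t hst
    have h0 := congrFun hst 0
    have h1 := congrFun hst 1
    simp only [Pi.add_apply, Pi.smul_apply, smul_eq_mul, Pi.zero_apply] at h0 h1
    have hs : s * (v1 0 * v2 1 - v1 1 * v2 0) = 0 := by linear_combination v2 1 * h0 - v2 0 * h1
    have ht : t * (v1 0 * v2 1 - v1 1 * v2 0) = 0 := by linear_combination v1 0 * h1 - v1 1 * h0
    exact ⟨by rcases mul_eq_zero.mp hs with h | h; exacts [h, absurd h hdet],
           by rcases mul_eq_zero.mp ht with h | h; exacts [h, absurd h hdet]⟩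
  rw [← hrange]
  set N : Submodule ℤ (Fin 2 → ℤ) := Submodule.span ℤ (Set.range ![v1, v2]) with hN
  let bspan : Module.Basis (Fin 2) ℤ N := Module.Basis.span hli
  obtain ⟨n, snf⟩ := N.smithNormalForm (Pi.basisFun ℤ (Fin 2))
  have hne : N.toAddSubgroup.index ≠ 0 :=
    Int.submodule_toAddSubgroup_index_ne_zero_iff.mpr ⟨bspan.equivFun⟩
  have hn : n = 2 := by simpa using snf.toAddSubgroup_index_ne_zero_iff.mp hne
  subst hn
  -- index = product of smith coefficients
  have hidx : N.toAddSubgroup.index = ∏ i : Fin 2, (snf.a i).natAbs := by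
    rw [snf.toAddSubgroup_index_eq_pow_mul_prod]
    simp [Ideal.span_singleton_toAddSubgroup_eq_zmultiples, Int.index_zmultiples]
  rw [hidx]
  -- determinant comparison
  set b : Module.Basis (Fin 2) ℤ (Fin 2 → ℤ) := Pi.basisFun ℤ (Fin 2) with hb
  have hcomp1 : (N.subtype ∘ ⇑bspan) = ![v1, v2] := by
    funext i
    simp only [Function.comp_apply, Submodule.coe_subtype]
    exact congrArg Subtype.val (Module.Basis.span_apply hli i)
  have hcomp2 : (N.subtype ∘ ⇑snf.bN) = fun i => snf.a i • (snf.bM (snf.f i)) := by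
    funext i
    simp only [Function.comp_apply, Submodule.coe_subtype]
    exact snf.snf i
  have hassoc : Associated (b.det (N.subtype ∘ ⇑bspan)) (b.det (N.subtype ∘ ⇑snf.bN)) := by
    rw [Module.Basis.det_comp_basis, Module.Basis.det_comp_basis]
    exact LinearMap.associated_det_comp_equiv _ _ _
  have hfbij : Function.Bijective ⇑snf.f :=
    (Fintype.bijective_iff_injective_and_card ⇑snf.f).mpr ⟨snf.f.injective, rfl⟩
  set σ : Equiv.Perm (Fin 2) := Equiv.ofBijective _ hfbij with hσ
  have hdet2 : b.det (N.subtype ∘ ⇑snf.bN)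
      = (∏ i : Fin 2, snf.a i) • (Equiv.Perm.sign σ • b.det ⇑snf.bM) := by
    rw [hcomp2]
    have : (fun i => snf.a i • (snf.bM (snf.f i))) = fun i => snf.a i • ((⇑snf.bM ∘ ⇑σ) i) := rfl
    rw [this]
    have h1 : b.det (fun i => snf.a i • (⇑snf.bM ∘ ⇑σ) i)
        = (∏ i : Fin 2, snf.a i) • b.det (⇑snf.bM ∘ ⇑σ) :=
      b.det.toMultilinearMap.map_smul_univ snf.a (⇑snf.bM ∘ ⇑σ)
    rw [h1, b.det.map_perm ⇑snf.bM σ]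
  have hunit : IsUnit (b.det ⇑snf.bM) := b.isUnit_det snf.bM
  have hnat : (b.det ![v1, v2]).natAbs = (∏ i : Fin 2, snf.a i).natAbs := by
    have h := Int.associated_iff_natAbs.mp hassoc
    rw [hcomp1] at h
    rw [h, hdet2]
    have hu : (b.det ⇑snf.bM).natAbs = 1 := by
      rcases Int.isUnit_iff.mp hunit with h' | h' <;> simp [h']
    rcases Int.units_eq_one_or (Equiv.Perm.sign σ) with hs | hs <;>
      simp [hs, smul_eq_mul, Int.natAbs_mul, hu]
  rw [show ∏ i : Fin 2, (snf.a i).natAbs = (∏ i : Fin 2, snf.a i).natAbs from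
    (map_prod Int.natAbsHom snf.a Finset.univ).symm, ← hnat]
  -- compute the determinant in the standard basis
  rw [Module.Basis.det_apply]
  congr 1
  have : b.toMatrix ![v1, v2] = Matrix.of ![![v1 0, v2 0], ![v1 1, v2 1]] := by
    ext i j
    rw [Module.Basis.toMatrix_apply, hb, Pi.basisFun_repr]
    fin_cases i <;> fin_cases j <;> rfl
  rw [this, Matrix.det_fin_two]
  simp [mul_comm]

namespace SurfaceEq

/-- The free group on two generators. -/
abbrev F2 : Type := FreeGroup (Fin 2)

/-- The first generator `x` of `F₂`. -/
def x : F2 := FreeGroup.of 0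

/-- The second generator `y` of `F₂`. -/
def y : F2 := FreeGroup.of 1

/-- `B = [x,y]`. -/
def B : F2 := ⁅x, y⁆

/-! The homomorphism to the Heisenberg group, used to compute determinants. -/

def φ : F2 →* Heis := FreeGroup.lift fun i => if i = 0 then ⟨1, 0, 0⟩ else ⟨0, 1, 0⟩

lemma φ_x : φ x = ⟨1, 0, 0⟩ := by simp [φ, x]
lemma φ_y : φ y = ⟨0, 1, 0⟩ := by simp [φ, y]

lemma φ_B : φ B = ⟨0, 0, 1⟩ := by
  rw [B, map_commutatorElement, φ_x, φ_y, Heis.commutator_c]; ext <;> simp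

theorem heis_det (l : ℕ) (w : Fin l → F2) (u v : F2)
    (huv : ⁅u, v⁆ = (List.ofFn fun i : Fin l => w i * B * (w i)⁻¹).prod) :
    (φ u).a * (φ v).b - (φ v).a * (φ u).b = (l : ℤ) := by
  have h := congrArg φ huv
  rw [map_commutatorElement, Heis.commutator_c, map_list_prod, List.map_ofFn] at h
  have hfn : (φ ∘ fun i : Fin l => w i * B * (w i)⁻¹) = fun _ : Fin l => (⟨0, 0, 1⟩ : Heis) := by
    funext i
    simp only [Function.comp_apply, map_mul, map_inv, φ_B]
    exact Heis.central (φ (w i))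
  rw [hfn, List.ofFn_const, List.prod_replicate, Heis.z_pow] at h
  exact congrArg Heis.c h

/-! The abelianization of `F₂` is `ℤ²`. -/

abbrev A : Type := Fin 2 → ℤ

def toA : F2 →* Multiplicative A :=
  FreeGroup.lift fun i => Multiplicative.ofAdd (Pi.single i 1)

def toAb : Abelianization F2 →* Multiplicative A := Abelianization.lift toA

noncomputable def back' : A →+ Additive (Abelianization F2) :=
  ((zmultiplesHom (Additive (Abelianization F2)) (Additive.ofMul (Abelianization.of x))).comp
    (Pi.evalAddMonoidHom (fun _ : Fin 2 => ℤ) 0)) +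
  ((zmultiplesHom (Additive (Abelianization F2)) (Additive.ofMul (Abelianization.of y))).comp
    (Pi.evalAddMonoidHom (fun _ : Fin 2 => ℤ) 1))

noncomputable def back : Multiplicative A →* Abelianization F2 :=
  AddMonoidHom.toMultiplicativeLeft back'

lemma back_apply (z : A) :
    back (Multiplicative.ofAdd z) = Abelianization.of x ^ (z 0) * Abelianization.of y ^ (z 1) := by
  rfl

lemma toA_of (i : Fin 2) : toA (FreeGroup.of i) = Multiplicative.ofAdd (Pi.single i 1) :=
  FreeGroup.lift_apply_of

lemma back_comp_toAb : back.comp toAb = MonoidHom.id _ := by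
  apply Abelianization.hom_ext
  apply FreeGroup.ext_hom
  intro i
  simp only [MonoidHom.comp_apply, MonoidHom.id_apply]
  have : toAb (Abelianization.of (FreeGroup.of i)) = Multiplicative.ofAdd (Pi.single i 1) := by
    simp [toAb, toA_of]
  rw [this, back_apply]
  fin_cases i <;> simp [x, y]

lemma toAb_comp_back : toAb.comp back = MonoidHom.id _ := by
  refine MonoidHom.ext fun z => ?_
  simp only [MonoidHom.comp_apply, MonoidHom.id_apply]
  have hz : z = Multiplicative.ofAdd (Multiplicative.toAdd z) := rfl
  rw [hz, back_apply, map_mul, map_zpow, map_zpow]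
  have hx : toAb (Abelianization.of x) = Multiplicative.ofAdd (Pi.single (0 : Fin 2) (1 : ℤ)) := by
    simp [toAb, x, toA_of]
  have hy : toAb (Abelianization.of y) = Multiplicative.ofAdd (Pi.single (1 : Fin 2) (1 : ℤ)) := by
    simp [toAb, y, toA_of]
  rw [hx, hy, ← ofAdd_zsmul, ← ofAdd_zsmul, ← ofAdd_add]
  congr 1
  funext j
  fin_cases j <;> simp

noncomputable def abEquiv : Abelianization F2 ≃* Multiplicative A :=
  MonoidHom.toMulEquiv toAb back back_comp_toAb toAb_comp_back

/-- The projection from Heisenberg to coordinates agrees with `toA`. -/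
def proj : Heis →* Multiplicative A where
  toFun g := Multiplicative.ofAdd ![g.a, g.b]
  map_one' := by
    apply congrArg Multiplicative.ofAdd
    funext j; fin_cases j <;> simp
  map_mul' g h := by
    rw [← ofAdd_add]
    apply congrArg Multiplicative.ofAdd
    funext j; fin_cases j <;> simp

lemma proj_comp_φ : proj.comp φ = toA := by
  apply FreeGroup.ext_hom
  intro i
  simp only [MonoidHom.comp_apply, toA_of, φ, FreeGroup.lift_apply_of]
  fin_cases i <;>
    · apply congrArg Multiplicative.ofAdd
      funext j; fin_cases j <;> simp [proj] <;> rfl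

lemma toA_coords (g : F2) :
    Multiplicative.toAdd (toA g) = ![(φ g).a, (φ g).b] := by
  rw [← proj_comp_φ]
  rfl

/-- Main theorem. -/
theorem index_of_single_commutator_solution (l : ℕ) (hl : 1 ≤ l)
    (w : Fin l → F2) (hw : Function.Injective w) (u v : F2)
    (huv : ⁅u, v⁆ = (List.ofFn fun i : Fin l => w i * B * (w i)⁻¹).prod) :
    (Subgroup.map (Abelianization.of : F2 →* Abelianization F2)
        (Subgroup.closure {u, v})).index = l := by
  classical
  have hdet := heis_det l w u v huv
  set v1 : A := Multiplicative.toAdd (toA u) with hv1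
  set v2 : A := Multiplicative.toAdd (toA v) with hv2
  have hdet' : v1 0 * v2 1 - v1 1 * v2 0 = (l : ℤ) := by
    rw [hv1, hv2, toA_coords, toA_coords]
    simp only [Matrix.cons_val_zero, Matrix.cons_val_one, Matrix.head_cons]
    linear_combination hdet
  have hdet0 : v1 0 * v2 1 - v1 1 * v2 0 ≠ 0 := by
    rw [hdet']
    exact_mod_cast Nat.one_le_iff_ne_zero.mp hl
  -- move the subgroup across the isomorphism
  rw [MonoidHom.map_closure, Set.image_pair]
  have h1 : (Subgroup.closure {Abelianization.of u, Abelianization.of v}).index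
      = (Subgroup.map abEquiv.toMonoidHom
          (Subgroup.closure {Abelianization.of u, Abelianization.of v})).index := by
    rw [Subgroup.map_equiv_eq_comap_symm']
    exact (Subgroup.index_comap_of_surjective _ (abEquiv.symm.surjective)).symm
  rw [h1, MonoidHom.map_closure, Set.image_pair]
  have habu : abEquiv.toMonoidHom (Abelianization.of u) = toA u := rfl
  have habv : abEquiv.toMonoidHom (Abelianization.of v) = toA v := rfl
  rw [habu, habv]
  -- translate to the additive world
  have h2 : Subgroup.closure {toA u, toA v}
      = AddSubgroup.toSubgroup (AddSubgroup.closure {v1, v2}) := by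
    apply le_antisymm
    · rw [Subgroup.closure_le]
      rintro z (rfl | rfl)
      · exact show v1 ∈ AddSubgroup.closure ({v1, v2} : Set A) from
          AddSubgroup.subset_closure (Set.mem_insert _ _)
      · exact show v2 ∈ AddSubgroup.closure ({v1, v2} : Set A) from
          AddSubgroup.subset_closure (Set.mem_insert_of_mem _ rfl)
    · rw [← OrderIso.le_symm_apply, AddSubgroup.closure_le]
      rintro z (rfl | rfl)
      · exact show toA u ∈ Subgroup.closure ({toA u, toA v} : Set (Multiplicative A)) from
          Subgroup.subset_closure (Set.mem_insert _ _)
      · exact show toA v ∈ Subgroup.closure ({toA u, toA v} : Set (Multiplicative A)) from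
          Subgroup.subset_closure (Set.mem_insert_of_mem _ rfl)
  rw [h2, AddSubgroup.index_toSubgroup]
  have h3 : AddSubgroup.closure ({v1, v2} : Set A)
      = (Submodule.span ℤ ({v1, v2} : Set A)).toAddSubgroup :=
    (Submodule.span_int_eq_addSubgroupClosure _).symm
  rw [h3, index_span_pair v1 v2 hdet0, hdet']
  exact Int.natAbs_natCast l

end SurfaceEq
end

section
/- In F₂ = ⟨x,y⟩, the elements u₁ = x, v₁ = y³, u₂ = y³·x·y⁻²·x⁻¹·y⁻¹·x·y²·x⁻¹·y⁻³, v₂ = y²·x²·y²·x⁻¹·y⁻³ satisfy [u₁,v₁][u₂,v₂] = [x,y]²·([x,y]^y)². -/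
namespace SurfaceEq

open scoped commutatorElement

/-- In `F₂ = ⟨x,y⟩` the elements `u₁ = x`, `v₁ = y³`,
`u₂ = y³·x·y⁻²·x⁻¹·y⁻¹·x·y²·x⁻¹·y⁻³`, `v₂ = y²·x²·y²·x⁻¹·y⁻³` satisfy
`[u₁,v₁][u₂,v₂] = [x,y]²·([x,y]^y)²`. -/
theorem commutator_identity_l2_c2 :
    ⁅x, y ^ 3⁆ *
      ⁅y ^ 3 * x * (y ^ 2)⁻¹ * x⁻¹ * y⁻¹ * x * y ^ 2 * x⁻¹ * (y ^ 3)⁻¹,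
        y ^ 2 * x ^ 2 * y ^ 2 * x⁻¹ * (y ^ 3)⁻¹⁆ =
      ⁅x, y⁆ ^ 2 * (y * ⁅x, y⁆ * y⁻¹) ^ 2 := by
  simp only [commutatorElement_def, pow_succ, pow_zero, one_mul, mul_inv_rev]
  group

end SurfaceEq
end

section
/- Let k > l ≥ 1 be integers. Then every solution of the equation [u₁,v₁]⋯[u_k,v_k] = ([x,y])^{k+l} ([x,y]^y)^{k−l} in F₂ is primitive: if u₁, v₁, …, u_k, v_k ∈ F₂ satisfy [u₁,v₁]⋯[u_k,v_k] = ([x,y])^{k+l} ([x,y]^y)^{k−l}, then p(⟨u₁, v₁, …, u_k, v_k⟩) = F₂/[F₂,F₂]. -/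
namespace SurfaceEq

open scoped commutatorElement

section Aux

open SemidirectProduct Finsupp

/-- Translation action of a commutative group `Q` on `Multiplicative (Q →₀ ℤ)`. -/
noncomputable def shiftM (Q : Type*) [CommGroup Q] : Q →* MulAut (Multiplicative (Q →₀ ℤ)) where
  toFun q := AddEquiv.toMultiplicative (Finsupp.domCongr (Equiv.mulLeft q))
  map_one' := by
    ext f : 1
    show Multiplicative.ofAdd (Finsupp.equivMapDomain (Equiv.mulLeft (1:Q)) f.toAdd) = f
    rw [show Equiv.mulLeft (1:Q) = Equiv.refl Q from Equiv.ext fun t => one_mul t,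
      Finsupp.equivMapDomain_refl]
    rfl
  map_mul' q r := by
    ext f : 1
    show Multiplicative.ofAdd (Finsupp.equivMapDomain (Equiv.mulLeft (q*r)) f.toAdd)
      = Multiplicative.ofAdd (Finsupp.equivMapDomain (Equiv.mulLeft q)
          (Finsupp.equivMapDomain (Equiv.mulLeft r) f.toAdd))
    rw [← Finsupp.equivMapDomain_trans,
      show (Equiv.mulLeft r).trans (Equiv.mulLeft q) = Equiv.mulLeft (q*r) from
        Equiv.ext fun t => (mul_assoc q r t).symm]

lemma shiftM_single {Q : Type*} [CommGroup Q] (q c : Q) (m : ℤ) :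
    shiftM Q q (Multiplicative.ofAdd (Finsupp.single c m))
      = Multiplicative.ofAdd (Finsupp.single (q*c) m) := by
  show Multiplicative.ofAdd (Finsupp.equivMapDomain (Equiv.mulLeft q) (Finsupp.single c m)) = _
  rw [Finsupp.equivMapDomain_single]
  rfl

theorem comm_calc {N G : Type*} [CommGroup N] [CommGroup G] {φ : G →* MulAut N}
    (U V : N) (a b : G) :
    ⁅(inl U * inr a : N ⋊[φ] G), (inl V * inr b : N ⋊[φ] G)⁆
      = inl (U * φ a V * (φ b U)⁻¹ * V⁻¹) := by
  ext
  · simp only [commutatorElement_def, mul_left, mul_right, inv_left, inv_right,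
      left_inl, right_inl, left_inr, right_inr, map_one, map_mul, map_inv,
      MulAut.one_apply, MulAut.mul_apply, one_mul, mul_one]
    simp only [← map_inv, ← MulAut.mul_apply, ← map_mul]
    simp [mul_comm, mul_left_comm, mul_assoc]
  · simp [commutatorElement_def]

theorem conj_calc {N G : Type*} [CommGroup N] [CommGroup G] {φ : G →* MulAut N}
    (V : N) (b : G) (D : N) :
    (inl V * inr b : N ⋊[φ] G) * inl D * (inl V * inr b)⁻¹ = inl (φ b D) := by
  calc (inl V * inr b : N ⋊[φ] G) * inl D * (inl V * inr b)⁻¹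
      = inl V * (inr b * inl D * inr b⁻¹) * (inl V)⁻¹ := by
        rw [map_inv]; group
    _ = inl V * inl (φ b D) * (inl V)⁻¹ := by rw [← inl_aut]
    _ = inl (V * φ b D * V⁻¹) := by rw [← map_inv, ← map_mul, ← map_mul]
    _ = inl (φ b D) := by rw [mul_comm V, mul_assoc, mul_inv_cancel, mul_one]

lemma key_ne (k l : ℕ) (hl : 1 ≤ l) (hkl : l < k) {Q : Type*} [CommGroup Q]
    (a b : Q) (ha : a ≠ 1) :
    (k+l) • ((Finsupp.single a (1:ℤ)) - Finsupp.single 1 1)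
      + (k-l) • ((Finsupp.single (b*a) (1:ℤ)) - Finsupp.single b 1) ≠ 0 := by
  classical
  intro h
  by_cases hb : b = 1
  · have h2 := congrArg (fun F : Q →₀ ℤ => F a) h
    simp only [hb, one_mul, Finsupp.add_apply, Finsupp.smul_apply, Finsupp.sub_apply,
      Finsupp.single_apply, if_pos rfl, if_neg (fun hh : (1:Q) = a => ha hh.symm),
      Finsupp.coe_zero, Pi.zero_apply, if_true, sub_zero, zero_sub, nsmul_eq_mul,
      mul_one, mul_neg, mul_zero, add_zero, zero_add] at h2
    omega
  · have h2 := congrArg (fun F : Q →₀ ℤ => F 1) h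
    by_cases hba : b * a = 1
    · simp only [Finsupp.add_apply, Finsupp.smul_apply, Finsupp.sub_apply,
        Finsupp.single_apply, if_neg ha, if_pos rfl, if_pos hba, if_neg hb,
        Finsupp.coe_zero, Pi.zero_apply, if_true, sub_zero, zero_sub, nsmul_eq_mul,
        mul_one, mul_neg, mul_zero, add_zero, zero_add] at h2
      omega
    · simp only [Finsupp.add_apply, Finsupp.smul_apply, Finsupp.sub_apply,
        Finsupp.single_apply, if_neg ha, if_pos rfl, if_neg hba, if_neg hb,
        Finsupp.coe_zero, Pi.zero_apply, if_true, sub_zero, zero_sub, nsmul_eq_mul,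
        mul_one, mul_neg, mul_zero, add_zero, zero_add] at h2
      omega

end Aux

open SemidirectProduct in
/-- Let `k > l ≥ 1` be integers. Then every solution of the equation
`[u₁,v₁]⋯[u_k,v_k] = B^{k+l}·(B^y)^{k−l}` in `F₂` is primitive:
`p(⟨u₁,v₁,…,u_k,v_k⟩) = F₂/[F₂,F₂]`. -/
theorem every_solution_primitive (k l : ℕ) (hl : 1 ≤ l) (hkl : l < k)
    (u v : Fin k → F2)
    (huv : (List.ofFn fun i => ⁅u i, v i⁆).prod =
      B ^ (k + l) * (y * B * y⁻¹) ^ (k - l)) :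
    Subgroup.map (Abelianization.of : F2 →* Abelianization F2)
        (Subgroup.closure (Set.range u ∪ Set.range v)) = ⊤ := by
  classical
  by_contra hH
  set HH : Subgroup (Abelianization F2) :=
    Subgroup.map (Abelianization.of : F2 →* Abelianization F2)
      (Subgroup.closure (Set.range u ∪ Set.range v)) with hHH
  set Q : Type := Abelianization F2 ⧸ HH with hQdef
  set χ : Abelianization F2 →* Q := QuotientGroup.mk' HH with hχdef
  set a : Q := χ (Abelianization.of x) with hadef
  set b : Q := χ (Abelianization.of y) with hbdef
  -- not both a and b are trivial
  have hab : ¬ (a = 1 ∧ b = 1) := by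
    rintro ⟨ha1, hb1⟩
    apply hH
    rw [eq_top_iff]
    have hx : Abelianization.of x ∈ HH := (QuotientGroup.eq_one_iff _).mp ha1
    have hy : Abelianization.of y ∈ HH := (QuotientGroup.eq_one_iff _).mp hb1
    have hsurj : Function.Surjective (Abelianization.of : F2 →* Abelianization F2) :=
      fun g => QuotientGroup.induction_on g fun z => ⟨z, rfl⟩
    have htop : (⊤ : Subgroup (Abelianization F2))
        = Subgroup.closure (Abelianization.of '' Set.range (FreeGroup.of : Fin 2 → F2)) := by
      rw [← MonoidHom.map_closure, FreeGroup.closure_range_of, ← MonoidHom.range_eq_map,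
        MonoidHom.range_eq_top.mpr hsurj]
    rw [htop]
    apply (Subgroup.closure_le _).mpr
    rintro g ⟨w, ⟨i, rfl⟩, rfl⟩
    fin_cases i
    · exact hx
    · exact hy
  -- the homomorphism to the semidirect product, for a choice of U, V
  set gf : Multiplicative (Q →₀ ℤ) → Multiplicative (Q →₀ ℤ) →
      (F2 →* (Multiplicative (Q →₀ ℤ) ⋊[shiftM Q] Q)) := fun U V =>
    FreeGroup.lift ![inl U * inr a, inl V * inr b] with hgf
  have hfx : ∀ U V, gf U V x = inl U * inr a := by
    intro U V; simp [hgf, x, FreeGroup.lift_apply_of]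
  have hfy : ∀ U V, gf U V y = inl V * inr b := by
    intro U V; simp [hgf, y, FreeGroup.lift_apply_of]
  -- elements of the closure map into the kernel of rightHom
  have hker : ∀ U V (g : F2), g ∈ Subgroup.closure (Set.range u ∪ Set.range v) →
      rightHom (gf U V g) = 1 := by
    intro U V g hg
    have hcomp : (rightHom.comp (gf U V)) = χ.comp Abelianization.of := by
      apply FreeGroup.ext_hom
      intro i
      fin_cases i
      · show rightHom (gf U V x) = χ (Abelianization.of x)
        rw [hfx, map_mul, rightHom_inl, rightHom_inr, one_mul, ← hadef]
      · show rightHom (gf U V y) = χ (Abelianization.of y)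
        rw [hfy, map_mul, rightHom_inl, rightHom_inr, one_mul, ← hbdef]
    have : rightHom (gf U V g) = χ (Abelianization.of g) := DFunLike.congr_fun hcomp g
    rw [this, hχdef, QuotientGroup.mk'_apply, QuotientGroup.eq_one_iff]
    exact Subgroup.mem_map_of_mem _ hg
  -- the image of the left-hand side is trivial
  have hLHS : ∀ U V, gf U V ((List.ofFn fun i => ⁅u i, v i⁆).prod) = 1 := by
    intro U V
    rw [map_list_prod]
    apply List.prod_eq_one
    intro g hg
    rw [List.map_ofFn] at hg
    rw [List.mem_ofFn] at hg
    obtain ⟨i, hi⟩ := hg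
    rw [← hi, Function.comp_apply, map_commutatorElement]
    have h1 := hker U V (u i) (Subgroup.subset_closure (Set.mem_union_left _ ⟨i, rfl⟩))
    have h2 := hker U V (v i) (Subgroup.subset_closure (Set.mem_union_right _ ⟨i, rfl⟩))
    have e1 : gf U V (u i) = inl ((gf U V (u i)).left) := by
      conv_lhs => rw [← inl_left_mul_inr_right (gf U V (u i))]
      rw [show (gf U V (u i)).right = 1 from h1, map_one, mul_one]
    have e2 : gf U V (v i) = inl ((gf U V (v i)).left) := by
      conv_lhs => rw [← inl_left_mul_inr_right (gf U V (v i))]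
      rw [show (gf U V (v i)).right = 1 from h2, map_one, mul_one]
    rw [e1, e2, ← map_commutatorElement,
      commutatorElement_eq_one_iff_commute.mpr (Commute.all _ _), map_one]
  -- the main equation
  have crux : ∀ U V : Multiplicative (Q →₀ ℤ),
      (U * shiftM Q a V * (shiftM Q b U)⁻¹ * V⁻¹) ^ (k+l)
        * (shiftM Q b (U * shiftM Q a V * (shiftM Q b U)⁻¹ * V⁻¹)) ^ (k-l) = 1 := by
    intro U V
    have h1 : gf U V (B ^ (k + l) * (y * B * y⁻¹) ^ (k - l)) = 1 := by
      rw [← huv]; exact hLHS U V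
    have hfB : gf U V B = inl (U * shiftM Q a V * (shiftM Q b U)⁻¹ * V⁻¹) := by
      show gf U V ⁅x, y⁆ = _
      rw [map_commutatorElement, hfx, hfy, comm_calc]
    simp only [map_mul, map_pow, map_inv] at h1
    rw [hfB, hfy] at h1
    rw [conj_calc] at h1
    rw [← map_pow, ← map_pow, ← map_mul] at h1
    exact inl_injective (h1.trans (map_one (inl (φ := shiftM Q))).symm)
  -- case analysis
  rcases eq_or_ne a (1:Q) with ha | ha
  · -- a = 1 and hence b ≠ 1; take U = single 1 1, V = 1
    have hb : b ≠ 1 := fun hb1 => hab ⟨ha, hb1⟩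
    have E := crux (Multiplicative.ofAdd (Finsupp.single (1:Q) (1:ℤ))) 1
    rw [map_one, mul_one, inv_one, mul_one, shiftM_single, mul_one] at E
    rw [show Multiplicative.ofAdd (Finsupp.single (1:Q) (1:ℤ))
          * (Multiplicative.ofAdd (Finsupp.single b (1:ℤ)))⁻¹
        = Multiplicative.ofAdd (Finsupp.single (1:Q) (1:ℤ) - Finsupp.single b 1) from
      by rw [ofAdd_sub, div_eq_mul_inv]] at E
    rw [show shiftM Q b (Multiplicative.ofAdd (Finsupp.single (1:Q) (1:ℤ) - Finsupp.single b 1))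
        = Multiplicative.ofAdd (Finsupp.single b (1:ℤ) - Finsupp.single (b*b) 1) from by
      rw [ofAdd_sub, div_eq_mul_inv, map_mul, map_inv, shiftM_single, shiftM_single,
        mul_one, ← div_eq_mul_inv, ← ofAdd_sub]] at E
    rw [← ofAdd_nsmul, ← ofAdd_nsmul, ← ofAdd_add] at E
    have E0 : (k+l) • (Finsupp.single (1:Q) (1:ℤ) - Finsupp.single b 1)
        + (k-l) • (Finsupp.single b (1:ℤ) - Finsupp.single (b*b) 1) = 0 :=
      Multiplicative.ofAdd.injective E
    apply key_ne k l hl hkl b b hb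
    have hneg : (k+l) • ((Finsupp.single b (1:ℤ)) - Finsupp.single 1 1)
        + (k-l) • ((Finsupp.single (b*b) (1:ℤ)) - Finsupp.single b 1)
        = -((k+l) • (Finsupp.single (1:Q) (1:ℤ) - Finsupp.single b 1)
          + (k-l) • (Finsupp.single b (1:ℤ) - Finsupp.single (b*b) 1)) := by
      rw [neg_add, ← smul_neg, ← smul_neg, neg_sub, neg_sub]
    rw [hneg, E0, neg_zero]
  · -- a ≠ 1; take U = 1, V = single 1 1
    have E := crux 1 (Multiplicative.ofAdd (Finsupp.single (1:Q) (1:ℤ)))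
    rw [map_one, inv_one, mul_one, one_mul, shiftM_single, mul_one] at E
    rw [show Multiplicative.ofAdd (Finsupp.single a (1:ℤ))
          * (Multiplicative.ofAdd (Finsupp.single (1:Q) (1:ℤ)))⁻¹
        = Multiplicative.ofAdd (Finsupp.single a (1:ℤ) - Finsupp.single 1 1) from
      by rw [ofAdd_sub, div_eq_mul_inv]] at E
    rw [show shiftM Q b (Multiplicative.ofAdd (Finsupp.single a (1:ℤ) - Finsupp.single 1 1))
        = Multiplicative.ofAdd (Finsupp.single (b*a) (1:ℤ) - Finsupp.single b 1) from by
      rw [ofAdd_sub, div_eq_mul_inv, map_mul, map_inv, shiftM_single, shiftM_single,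
        mul_one, ← div_eq_mul_inv, ← ofAdd_sub]] at E
    rw [← ofAdd_nsmul, ← ofAdd_nsmul, ← ofAdd_add] at E
    exact key_ne k l hl hkl a b ha (Multiplicative.ofAdd.injective E)

end SurfaceEq
end

section
/- Let k > l ≥ 1 be integers and in F₂ = ⟨x,y⟩ define, for i = 1, …, l, r_i = y·x·y^{i−1}·x⁻¹·y⁻¹·x·y^{−i+1}·x⁻¹·y⁻¹ and s_i = y·x·y^{i−1}·x⁻¹·B^{l−i+1}·y·B^{k−l}·y^{−i}·x²·y^{−i+1}·x⁻¹·y⁻¹, where B = [x,y]. Then for every t with 1 ≤ t ≤ l, [r₁,s₁]⋯[r_t,s_t] = B^l·y·B^{k−l}·y⁻¹·B^t·y^{t+1}·B^{l−k}·y⁻¹·B^{t−1−l}·x·y^{−t+1}·x⁻¹·y⁻¹. -/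
namespace SurfaceEq

open scoped commutatorElement

lemma hB : x * y * x⁻¹ * y⁻¹ = B := by rw [B, commutatorElement_def]

lemma comm_form (k l t : ℤ) :
    ⁅y * x * y ^ (t - 1) * x⁻¹ * y⁻¹ * x * y ^ (-t + 1) * x⁻¹ * y⁻¹,
     y * x * y ^ (t - 1) * x⁻¹ * B ^ (l - t + 1) * y * B ^ (k - l) * y ^ (-t) * x ^ (2:ℕ) *
       y ^ (-t + 1) * x⁻¹ * y⁻¹⁆ =
    y * x * y ^ (t-1) * x⁻¹ * y⁻¹ * B ^ (l-t+1) * y * B ^ (k-l) * y ^ (-t) *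
      (x*y*x⁻¹*y⁻¹) * y ^ t * y * B ^ (l-k) * y⁻¹ * B ^ (t-l-1) * x * y ^ (1-t) * x⁻¹ * y⁻¹ := by
  group

lemma base (k l : ℤ) :
    (1 : F2) = B ^ l * y * B ^ (k - l) * y⁻¹ * B ^ (0:ℤ) * y ^ ((0:ℤ) + 1) *
      B ^ (l - k) * y⁻¹ * B ^ ((0:ℤ) - 1 - l) * x * y ^ (-(0:ℤ) + 1) * x⁻¹ * y⁻¹ := by
  have h : B ^ l * y * B ^ (k - l) * y⁻¹ * B ^ (0:ℤ) * y ^ ((0:ℤ) + 1) *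
      B ^ (l - k) * y⁻¹ * B ^ ((0:ℤ) - 1 - l) * x * y ^ (-(0:ℤ) + 1) * x⁻¹ * y⁻¹
      = B ^ (-1 : ℤ) * (x * y * x⁻¹ * y⁻¹) := by group
  rw [h, hB]; group

lemma step (k l t : ℤ) :
    (B ^ l * y * B ^ (k - l) * y⁻¹ * B ^ t * y ^ (t + 1) * B ^ (l - k) * y⁻¹ *
      B ^ (t - 1 - l) * x * y ^ (-t + 1) * x⁻¹ * y⁻¹) *
    ⁅y * x * y ^ (t + 1 - 1) * x⁻¹ * y⁻¹ * x * y ^ (-(t + 1) + 1) * x⁻¹ * y⁻¹,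
     y * x * y ^ (t + 1 - 1) * x⁻¹ * B ^ (l - (t + 1) + 1) * y * B ^ (k - l) * y ^ (-(t + 1)) *
       x ^ (2:ℕ) * y ^ (-(t + 1) + 1) * x⁻¹ * y⁻¹⁆ =
    B ^ l * y * B ^ (k - l) * y⁻¹ * B ^ (t + 1) * y ^ (t + 1 + 1) * B ^ (l - k) * y⁻¹ *
      B ^ (t + 1 - 1 - l) * x * y ^ (-(t + 1) + 1) * x⁻¹ * y⁻¹ := by
  rw [comm_form k l (t + 1)]
  have e1 : (B ^ l * y * B ^ (k - l) * y⁻¹ * B ^ t * y ^ (t + 1) * B ^ (l - k) * y⁻¹ *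
      B ^ (t - 1 - l) * x * y ^ (-t + 1) * x⁻¹ * y⁻¹) *
      (y * x * y ^ (t+1-1) * x⁻¹ * y⁻¹ * B ^ (l-(t+1)+1) * y * B ^ (k-l) * y ^ (-(t+1)) *
        (x*y*x⁻¹*y⁻¹) * y ^ (t+1) * y * B ^ (l-k) * y⁻¹ * B ^ ((t+1)-l-1) * x * y ^ (1-(t+1)) * x⁻¹ * y⁻¹)
      = B ^ l * y * B ^ (k - l) * y⁻¹ * B ^ t * y ^ (t + 1) * B ^ (l - k) * y⁻¹ *
        B ^ (t - 1 - l) * (x*y*x⁻¹*y⁻¹) * B ^ (l - t) * y * B ^ (k - l) * y ^ (-(t+1)) *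
        (x*y*x⁻¹*y⁻¹) * y ^ (t + 2) * B ^ (l - k) * y⁻¹ * B ^ (t - l) * x * y ^ (-t) * x⁻¹ * y⁻¹ := by
    group
  rw [e1, hB]
  group

/-- Let `k > l ≥ 1` and, for `i = 1,…,l`, let
`r_i = y·x·y^{i−1}·x⁻¹·y⁻¹·x·y^{−i+1}·x⁻¹·y⁻¹` and
`s_i = y·x·y^{i−1}·x⁻¹·B^{l−i+1}·y·B^{k−l}·y^{−i}·x²·y^{−i+1}·x⁻¹·y⁻¹`.
Then for every `1 ≤ t ≤ l`,
`[r₁,s₁]⋯[r_t,s_t] = B^l·y·B^{k−l}·y⁻¹·B^t·y^{t+1}·B^{l−k}·y⁻¹·B^{t−1−l}·x·y^{−t+1}·x⁻¹·y⁻¹`. -/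
theorem partial_products_first_block (k l : ℕ) (hl : 1 ≤ l) (hkl : l < k)
    (r s : ℕ → F2)
    (hr : ∀ i : ℕ, 1 ≤ i → i ≤ l →
      r i = y * x * y ^ ((i : ℤ) - 1) * x⁻¹ * y⁻¹ * x * y ^ (-(i : ℤ) + 1) * x⁻¹ * y⁻¹)
    (hs : ∀ i : ℕ, 1 ≤ i → i ≤ l →
      s i = y * x * y ^ ((i : ℤ) - 1) * x⁻¹ * B ^ ((l : ℤ) - (i : ℤ) + 1) * y *
        B ^ ((k : ℤ) - (l : ℤ)) * y ^ (-(i : ℤ)) * x ^ 2 * y ^ (-(i : ℤ) + 1) * x⁻¹ * y⁻¹) :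
    ∀ t : ℕ, 1 ≤ t → t ≤ l →
      ((List.range t).map fun j => ⁅r (j + 1), s (j + 1)⁆).prod =
        B ^ (l : ℤ) * y * B ^ ((k : ℤ) - (l : ℤ)) * y⁻¹ * B ^ (t : ℤ) * y ^ ((t : ℤ) + 1) *
          B ^ ((l : ℤ) - (k : ℤ)) * y⁻¹ * B ^ ((t : ℤ) - 1 - (l : ℤ)) * x *
          y ^ (-(t : ℤ) + 1) * x⁻¹ * y⁻¹ := by
  have key : ∀ t : ℕ, t ≤ l →
      ((List.range t).map fun j => ⁅r (j + 1), s (j + 1)⁆).prod =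
        B ^ (l : ℤ) * y * B ^ ((k : ℤ) - (l : ℤ)) * y⁻¹ * B ^ (t : ℤ) * y ^ ((t : ℤ) + 1) *
          B ^ ((l : ℤ) - (k : ℤ)) * y⁻¹ * B ^ ((t : ℤ) - 1 - (l : ℤ)) * x *
          y ^ (-(t : ℤ) + 1) * x⁻¹ * y⁻¹ := by
    intro t
    induction t with
    | zero =>
      intro _
      simpa using base (k : ℤ) (l : ℤ)
    | succ n ih =>
      intro h
      have hn : n ≤ l := Nat.le_of_succ_le h
      have h1 : 1 ≤ n + 1 := Nat.succ_le_succ (Nat.zero_le n)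
      rw [List.range_succ, List.map_append, List.prod_append, ih hn]
      simp only [List.map_cons, List.map_nil, List.prod_cons, List.prod_nil, mul_one]
      rw [hr (n + 1) h1 h, hs (n + 1) h1 h]
      push_cast
      exact step (k : ℤ) (l : ℤ) (n : ℤ)
  exact fun t _ htl => key t htl

end SurfaceEq
end

section
/- Let k and l be integers with k − l ≥ 2 and l ≥ 0, and in F₂ = ⟨x,y⟩ define, for j = 1, …, k−l−1, r_{l+j} = y·x·y^{l+j}·x⁻¹·y⁻¹·x·y^{−l−j}·x⁻¹·y⁻¹ and s_{l+j} = y·x·y^{l+j}·x⁻¹·B^{k−l−j}·y^{−l−j}·x²·y^{−l−j}·x⁻¹·y⁻¹, where B = [x,y]. Then for every t with 1 ≤ t ≤ k−l−1, [r_{l+1},s_{l+1}]⋯[r_{l+t},s_{l+t}] = y·x·y^{l+1}·x⁻¹·(y⁻¹·B^{k−l−1}·y^{−l−1}·B^t·y^{l+t+1}·B^{l+t−k})·x·y^{−l−t}·x⁻¹·y⁻¹. -/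
namespace SurfaceEq

open scoped commutatorElement

theorem step_lemma {G : Type*} [Group G] (x y b : G) (h1 : x*y*x⁻¹*y⁻¹ = b) (k l t : ℤ) :
    (y * x * y ^ (l + 1) * x⁻¹ *
      (y⁻¹ * b ^ (k - l - 1) * y ^ (-l - 1) * b ^ t *
        y ^ (l + t + 1) * b ^ (l + t - k)) *
      x * y ^ (-l - t) * x⁻¹ * y⁻¹) *
    ⁅y * x * y ^ (l + (t+1)) * x⁻¹ * y⁻¹ * x * y ^ (-l - (t+1)) * x⁻¹ * y⁻¹,
     y * x * y ^ (l + (t+1)) * x⁻¹ * b ^ (k - l - (t+1)) * y ^ (-l - (t+1)) * x ^ 2 * y ^ (-l - (t+1)) * x⁻¹ * y⁻¹⁆ =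
    y * x * y ^ (l + 1) * x⁻¹ *
      (y⁻¹ * b ^ (k - l - 1) * y ^ (-l - 1) * b ^ (t+1) *
        y ^ (l + (t+1) + 1) * b ^ (l + (t+1) - k)) *
      x * y ^ (-l - (t+1)) * x⁻¹ * y⁻¹ := by
  have h2 : x * y * x⁻¹ = b * y := by rw [← h1]; group
  calc _ = y * x * y ^ (l + 1) * x⁻¹ * y⁻¹ * b ^ (k - l - 1) * y ^ (-l - 1) * b ^ t *
            y ^ (l + t + 1) * b ^ (l + t - k) * (x * y * x⁻¹ * y⁻¹) *
            b ^ (k - l - t - 1) * y ^ (-l - t - 1) * (x * y * x⁻¹) *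
            y ^ (l + t + 1) * b ^ (l + t + 1 - k) *
            x * y ^ (-l - t - 1) * x⁻¹ * y⁻¹ := by group
    _ = y * x * y ^ (l + 1) * x⁻¹ * y⁻¹ * b ^ (k - l - 1) * y ^ (-l - 1) * b ^ t *
            y ^ (l + t + 1) * b ^ (l + t - k) * b *
            b ^ (k - l - t - 1) * y ^ (-l - t - 1) * (b * y) *
            y ^ (l + t + 1) * b ^ (l + t + 1 - k) *
            x * y ^ (-l - t - 1) * x⁻¹ * y⁻¹ := by rw [h1, h2]
    _ = _ := by group

/-- Let `k − l ≥ 2`, `l ≥ 0` and, for `j = 1,…,k−l−1`, let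
`r_{l+j} = y·x·y^{l+j}·x⁻¹·y⁻¹·x·y^{−l−j}·x⁻¹·y⁻¹` and
`s_{l+j} = y·x·y^{l+j}·x⁻¹·B^{k−l−j}·y^{−l−j}·x²·y^{−l−j}·x⁻¹·y⁻¹`.
Then for every `1 ≤ t ≤ k−l−1`,
`[r_{l+1},s_{l+1}]⋯[r_{l+t},s_{l+t}] =
  y·x·y^{l+1}·x⁻¹·(y⁻¹·B^{k−l−1}·y^{−l−1}·B^t·y^{l+t+1}·B^{l+t−k})·x·y^{−l−t}·x⁻¹·y⁻¹`. -/
theorem partial_products_second_block (k l : ℕ) (hkl : l + 2 ≤ k)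
    (r s : ℕ → F2)
    (hr : ∀ j : ℕ, 1 ≤ j → j ≤ k - l - 1 →
      r (l + j) = y * x * y ^ ((l : ℤ) + (j : ℤ)) * x⁻¹ * y⁻¹ * x *
        y ^ (-(l : ℤ) - (j : ℤ)) * x⁻¹ * y⁻¹)
    (hs : ∀ j : ℕ, 1 ≤ j → j ≤ k - l - 1 →
      s (l + j) = y * x * y ^ ((l : ℤ) + (j : ℤ)) * x⁻¹ * B ^ ((k : ℤ) - (l : ℤ) - (j : ℤ)) *
        y ^ (-(l : ℤ) - (j : ℤ)) * x ^ 2 * y ^ (-(l : ℤ) - (j : ℤ)) * x⁻¹ * y⁻¹) :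
    ∀ t : ℕ, 1 ≤ t → t ≤ k - l - 1 →
      ((List.range t).map fun j => ⁅r (l + (j + 1)), s (l + (j + 1))⁆).prod =
        y * x * y ^ ((l : ℤ) + 1) * x⁻¹ *
          (y⁻¹ * B ^ ((k : ℤ) - (l : ℤ) - 1) * y ^ (-(l : ℤ) - 1) * B ^ (t : ℤ) *
            y ^ ((l : ℤ) + (t : ℤ) + 1) * B ^ ((l : ℤ) + (t : ℤ) - (k : ℤ))) *
          x * y ^ (-(l : ℤ) - (t : ℤ)) * x⁻¹ * y⁻¹ := by
  have hB : x * y * x⁻¹ * y⁻¹ = B := (commutatorElement_def x y).symm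
  intro t
  induction t with
  | zero => omega
  | succ n ih =>
    intro ht1 ht2
    rcases Nat.eq_zero_or_pos n with h0 | hn
    · subst h0
      have h01 : List.range 1 = [0] := rfl
      simp only [h01, List.map_cons, List.map_nil, List.prod_cons, List.prod_nil,
        mul_one, Nat.zero_add, zero_add]
      rw [hr 1 le_rfl (by omega), hs 1 le_rfl (by omega), ← hB]
      push_cast
      group
    · rw [List.range_succ, List.map_append, List.prod_append, List.map_singleton,
        List.prod_singleton, ih hn (by omega),
        hr (n + 1) (by omega) (by omega), hs (n + 1) (by omega) (by omega)]
      push_cast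
      exact step_lemma x y B hB k l n

end SurfaceEq
end

section
/- Let k > l ≥ 0 be integers and in F₂ = ⟨x,y⟩ with B = [x,y] define: r_i = y·x·y^{i−1}·x⁻¹·y⁻¹·x·y^{−i+1}·x⁻¹·y⁻¹ and s_i = y·x·y^{i−1}·x⁻¹·B^{l−i+1}·y·B^{k−l}·y^{−i}·x²·y^{−i+1}·x⁻¹·y⁻¹ for i = 1, …, l; r_{l+j} = y·x·y^{l+j}·x⁻¹·y⁻¹·x·y^{−l−j}·x⁻¹·y⁻¹ and s_{l+j} = y·x·y^{l+j}·x⁻¹·B^{k−l−j}·y^{−l−j}·x²·y^{−l−j}·x⁻¹·y⁻¹ for j = 1, …, k−l−1; r_k = y·x·y^{k+1}·x⁻¹·y⁻¹ and s_k = y·x·y⁻¹·x⁻¹·y·x⁻¹·y⁻¹. Then [r₁,s₁][r₂,s₂]⋯[r_k,s_k] = B^l · (B^y)^{k−l} · B^k. -/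
namespace SurfaceEq

open scoped commutatorElement

lemma B_def : B = x * y * x⁻¹ * y⁻¹ := rfl

lemma peelB (a b : ℤ) (h : a = b + 1) : B ^ a = (x*y*x⁻¹*y⁻¹) * B ^ b := by
  subst h
  rw [← B_def, zpow_add, zpow_one]
  group

lemma peelBinv (a b : ℤ) (h : a + 1 = b) : B ^ a = (y*x*y⁻¹*x⁻¹) * B ^ b := by
  have : a = b - 1 := by omega
  subst this
  have h1 : (y*x*y⁻¹*x⁻¹ : F2) = B⁻¹ := by rw [B_def]; group
  rw [h1, zpow_sub, zpow_one]
  group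

lemma Bone (a : ℤ) (h : a = 1) : B ^ a = x*y*x⁻¹*y⁻¹ := by
  subst h; rw [zpow_one, B_def]

lemma Bzero (a : ℤ) (h : a = 0) : B ^ a = 1 := by
  subst h; exact zpow_zero B

lemma conj_pow' (g h : F2) (n : ℕ) : (g * h * g⁻¹) ^ n = g * h ^ n * g⁻¹ := by
  induction n with
  | zero => group
  | succ n ih => rw [pow_succ, pow_succ, ih]; group

/-- Let `k > l ≥ 0` and define `r₁,s₁,…,r_k,s_k ∈ F₂` by
`r_i = y·x·y^{i−1}·x⁻¹·y⁻¹·x·y^{−i+1}·x⁻¹·y⁻¹`,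
`s_i = y·x·y^{i−1}·x⁻¹·B^{l−i+1}·y·B^{k−l}·y^{−i}·x²·y^{−i+1}·x⁻¹·y⁻¹` for `i = 1,…,l`;
`r_{l+j} = y·x·y^{l+j}·x⁻¹·y⁻¹·x·y^{−l−j}·x⁻¹·y⁻¹`,
`s_{l+j} = y·x·y^{l+j}·x⁻¹·B^{k−l−j}·y^{−l−j}·x²·y^{−l−j}·x⁻¹·y⁻¹` for `j = 1,…,k−l−1`;
`r_k = y·x·y^{k+1}·x⁻¹·y⁻¹` and `s_k = y·x·y⁻¹·x⁻¹·y·x⁻¹·y⁻¹`.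
Then `[r₁,s₁][r₂,s₂]⋯[r_k,s_k] = B^l·(B^y)^{k−l}·B^k`. -/
theorem full_product_rs (k l : ℕ) (hkl : l < k)
    (r s : ℕ → F2)
    (hr1 : ∀ i : ℕ, 1 ≤ i → i ≤ l →
      r i = y * x * y ^ ((i : ℤ) - 1) * x⁻¹ * y⁻¹ * x * y ^ (-(i : ℤ) + 1) * x⁻¹ * y⁻¹)
    (hs1 : ∀ i : ℕ, 1 ≤ i → i ≤ l →
      s i = y * x * y ^ ((i : ℤ) - 1) * x⁻¹ * B ^ ((l : ℤ) - (i : ℤ) + 1) * y *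
        B ^ ((k : ℤ) - (l : ℤ)) * y ^ (-(i : ℤ)) * x ^ 2 * y ^ (-(i : ℤ) + 1) * x⁻¹ * y⁻¹)
    (hr2 : ∀ j : ℕ, 1 ≤ j → j ≤ k - l - 1 →
      r (l + j) = y * x * y ^ ((l : ℤ) + (j : ℤ)) * x⁻¹ * y⁻¹ * x *
        y ^ (-(l : ℤ) - (j : ℤ)) * x⁻¹ * y⁻¹)
    (hs2 : ∀ j : ℕ, 1 ≤ j → j ≤ k - l - 1 →
      s (l + j) = y * x * y ^ ((l : ℤ) + (j : ℤ)) * x⁻¹ * B ^ ((k : ℤ) - (l : ℤ) - (j : ℤ)) *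
        y ^ (-(l : ℤ) - (j : ℤ)) * x ^ 2 * y ^ (-(l : ℤ) - (j : ℤ)) * x⁻¹ * y⁻¹)
    (hrk : r k = y * x * y ^ ((k : ℤ) + 1) * x⁻¹ * y⁻¹)
    (hsk : s k = y * x * y⁻¹ * x⁻¹ * y * x⁻¹ * y⁻¹) :
    ((List.range k).map fun j => ⁅r (j + 1), s (j + 1)⁆).prod =
      B ^ l * (y * B * y⁻¹) ^ (k - l) * B ^ k := by
  have key : ∀ t m : ℕ, m + t = k →
      ((List.range' (m+1) t).map fun i => ⁅r i, s i⁆).prod =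
      (if m < l then
        y * x * y ^ (m:ℤ) * x⁻¹ * y⁻¹ * B ^ ((l:ℤ) - (m:ℤ)) * y * B ^ ((k:ℤ) - (l:ℤ)) *
          y ^ (-(m:ℤ) - 1) * B ^ ((k:ℤ) - (m:ℤ))
       else if m < k then
        y * x * y ^ ((m:ℤ) + 1) * x⁻¹ * y⁻¹ * B ^ ((k:ℤ) - (m:ℤ) - 1) *
          y ^ (-(m:ℤ) - 1) * B ^ ((k:ℤ) - (m:ℤ))
       else 1) := by
    intro t
    induction t with
    | zero =>
      intro m hm
      have hmk : m = k := by omega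
      subst hmk
      rw [if_neg (by omega), if_neg (by omega)]
      simp [List.range']
    | succ t ih =>
      intro m hm
      have hstep : List.range' (m+1) (t+1) = (m+1) :: List.range' (m+2) t := rfl
      rw [hstep, List.map_cons, List.prod_cons, ih (m+1) (by omega)]
      by_cases h1 : m + 1 < l
      · -- case (a)
        rw [if_pos h1, if_pos (show m < l from by omega)]
        rw [hr1 (m+1) (by omega) (by omega), hs1 (m+1) (by omega) (by omega)]
        rw [peelBinv ((l:ℤ) - (↑(m+1):ℤ)) ((l:ℤ) - (↑(m+1):ℤ) + 1) rfl]
        rw [peelB ((k:ℤ) - (m:ℤ)) ((k:ℤ) - (m:ℤ) - 1) (by ring)]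
        push_cast
        group
      · by_cases h2 : m + 1 = l
        · -- case (b)
          rw [if_neg (show ¬(m + 1 < l) from h1), if_pos (show m + 1 < k from by omega),
            if_pos (show m < l from by omega)]
          rw [hr1 (m+1) (by omega) (by omega), hs1 (m+1) (by omega) (by omega)]
          rw [show (l:ℤ) = (m:ℤ) + 1 from by omega]
          rw [Bone ((m:ℤ) + 1 - (↑(m+1):ℤ) + 1) (by push_cast; ring)]
          rw [Bone ((m:ℤ) + 1 - (m:ℤ)) (by ring)]
          rw [peelBinv ((k:ℤ) - (↑(m+1):ℤ) - 1) ((k:ℤ) - (↑(m+1):ℤ)) (by ring)]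
          rw [peelB ((k:ℤ) - (m:ℤ)) ((k:ℤ) - (m:ℤ) - 1) (by ring)]
          push_cast
          group
        · by_cases h3 : m + 1 < k
          · -- case (c)
            rw [if_neg (show ¬(m + 1 < l) from h1), if_pos (show m + 1 < k from h3),
              if_neg (show ¬(m < l) from by omega), if_pos (show m < k from by omega)]
            have hj1 : (1:ℕ) ≤ m + 1 - l := by omega
            have hj2 : m + 1 - l ≤ k - l - 1 := by omega
            have h4 := hr2 (m+1-l) hj1 hj2
            have h5 := hs2 (m+1-l) hj1 hj2
            rw [show l + (m+1-l) = m+1 from by omega] at h4 h5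
            rw [show ((m+1-l:ℕ):ℤ) = (m:ℤ) + 1 - (l:ℤ) from by omega] at h4 h5
            rw [h4, h5]
            rw [peelBinv ((k:ℤ) - (↑(m+1):ℤ) - 1) ((k:ℤ) - (↑(m+1):ℤ)) (by ring)]
            rw [peelB ((k:ℤ) - (m:ℤ)) ((k:ℤ) - (m:ℤ) - 1) (by ring)]
            push_cast
            group
          · -- case (d) : m + 1 = k
            rw [if_neg (show ¬(m + 1 < l) from h1), if_neg (show ¬(m + 1 < k) from h3),
              if_neg (show ¬(m < l) from by omega), if_pos (show m < k from by omega)]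
            rw [show (m + 1 : ℕ) = k from by omega, hrk, hsk]
            rw [show (k:ℤ) = (m:ℤ) + 1 from by omega]
            rw [Bzero ((m:ℤ) + 1 - (m:ℤ) - 1) (by ring)]
            rw [Bone ((m:ℤ) + 1 - (m:ℤ)) (by ring)]
            group
  have hlist : ((List.range k).map fun j => ⁅r (j + 1), s (j + 1)⁆) =
      (List.range' 1 k).map fun i => ⁅r i, s i⁆ := by
    rw [List.range'_eq_map_range, List.map_map]
    simp [Function.comp, Nat.add_comm]
  rw [hlist, key k 0 (by omega)]
  rw [conj_pow' y B (k-l)]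
  rw [← zpow_natCast B l, ← zpow_natCast B k, ← zpow_natCast B (k-l),
      show ((k-l:ℕ):ℤ) = (k:ℤ) - (l:ℤ) from by omega]
  by_cases hl : 0 < l
  · rw [if_pos hl]
    push_cast
    group
  · rw [if_neg hl, if_pos (show 0 < k from by omega)]
    rw [show (l:ℤ) = 0 from by omega]
    rw [peelB ((k:ℤ) - 0) ((k:ℤ) - 0 - 1) (by ring)]
    push_cast
    group

end SurfaceEq
end
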